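/- arXiv:2012.15303 — 12 statements merged into one kernel-verified Lean document; each statement's English description precedes it below -/
import Mathlib

section
/- Let Γ be a group, let Λ, Ξ ⊆ Γ be approximate subgroups, and let k, l ≥ 2 be natural numbers. Then the intersection Λ^k ∩ Ξ^l is an approximate subgroup of Γ. -/
open Pointwise

/-- A subset `Λ` of a group `G` is an approximate subgroup if it is symmetric, contains the
identity and `Λ·Λ ⊆ Λ·F` for some finite set `F ⊆ G`. -/
def IsApproximateSubgroup' {G : Type*} [Group G] (Λ : Set G) : Prop :=
  Λ⁻¹ = Λ ∧ (1 : G) ∈ Λ ∧ ∃ F : Set G, F.Finite ∧ Λ * Λ ⊆ Λ * F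

private lemma one_mem_pow {G : Type*} [Group G] {A : Set G} (h1 : (1 : G) ∈ A) :
    ∀ n, (1 : G) ∈ A ^ n := by
  intro n
  induction n with
  | zero => simp
  | succ n ih => rw [pow_succ]; exact ⟨1, ih, 1, h1, one_mul 1⟩

private lemma pow_cover {G : Type*} [Group G] {A C : Set G} (hC : C.Finite)
    (h : A * A ⊆ C * A) : ∀ m : ℕ, ∃ X : Set G, X.Finite ∧ A ^ (m + 1) ⊆ X * A := by
  intro m
  induction m with
  | zero => exact ⟨{1}, Set.finite_singleton 1, by simp⟩
  | succ m ih =>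
    obtain ⟨X, hXfin, hX⟩ := ih
    refine ⟨X * C, hXfin.mul hC, ?_⟩
    calc A ^ (m + 2) = A ^ (m + 1) * A := by rw [pow_succ]
    _ ⊆ X * A * A := Set.mul_subset_mul_right hX
    _ = X * (A * A) := by rw [mul_assoc]
    _ ⊆ X * (C * A) := Set.mul_subset_mul_left h
    _ = X * C * A := by rw [mul_assoc]

theorem intersection_of_powers_approximate_subgroup {G : Type*} [Group G]
    (Λ Ξ : Set G) (hΛ : IsApproximateSubgroup' Λ) (hΞ : IsApproximateSubgroup' Ξ)
    (k l : ℕ) (hk : 2 ≤ k) (hl : 2 ≤ l) :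
    IsApproximateSubgroup' (Λ ^ k ∩ Ξ ^ l) := by
  classical
  obtain ⟨hΛinv, hΛ1, F, hFfin, hF⟩ := hΛ
  obtain ⟨hΞinv, hΞ1, F', hF'fin, hF'⟩ := hΞ
  -- left covering: Λ * Λ ⊆ F⁻¹ * Λ
  have hΛcov : Λ * Λ ⊆ F⁻¹ * Λ := by
    intro g hg
    have hg' : g⁻¹ ∈ Λ * Λ := by
      rw [← hΛinv, ← mul_inv_rev Λ Λ]
      simpa [hΛinv] using Set.inv_mem_inv.mpr hg
    obtain ⟨a, ha, f, hf, hafg⟩ := hF hg'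
    refine ⟨f⁻¹, Set.inv_mem_inv.mpr hf, a⁻¹, by rw [← hΛinv]; exact Set.inv_mem_inv.mpr ha, ?_⟩
    show f⁻¹ * a⁻¹ = g
    have hafg' : a * f = g⁻¹ := hafg
    rw [← mul_inv_rev, hafg', inv_inv]
  have hΞcov : Ξ * Ξ ⊆ F'⁻¹ * Ξ := by
    intro g hg
    have hg' : g⁻¹ ∈ Ξ * Ξ := by
      rw [← hΞinv, ← mul_inv_rev Ξ Ξ]
      simpa [hΞinv] using Set.inv_mem_inv.mpr hg
    obtain ⟨a, ha, f, hf, hafg⟩ := hF' hg'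
    refine ⟨f⁻¹, Set.inv_mem_inv.mpr hf, a⁻¹, by rw [← hΞinv]; exact Set.inv_mem_inv.mpr ha, ?_⟩
    show f⁻¹ * a⁻¹ = g
    have hafg' : a * f = g⁻¹ := hafg
    rw [← mul_inv_rev, hafg', inv_inv]
  obtain ⟨X, hXfin, hX⟩ := pow_cover hFfin.inv hΛcov (2 * k - 1)
  obtain ⟨Y, hYfin, hY⟩ := pow_cover hF'fin.inv hΞcov (2 * l - 1)
  have h2k : 2 * k - 1 + 1 = 2 * k := by omega
  have h2l : 2 * l - 1 + 1 = 2 * l := by omega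
  rw [h2k] at hX
  rw [h2l] at hY
  -- symmetry of powers
  have powinv : ∀ (A : Set G), A⁻¹ = A → ∀ n, (A ^ n)⁻¹ = A ^ n := by
    intro A hA n
    induction n with
    | zero => simp
    | succ n ih => rw [pow_succ, mul_inv_rev, hA, ih, ← pow_succ']; exact pow_succ A n
  -- the chosen representatives
  set f : G × G → G := fun p =>
    if h : ((({p.1} : Set G) * Λ) ∩ (({p.2} : Set G) * Ξ)).Nonempty then h.choose else 1 with hf_def
  set Z : Set G := f '' (X ×ˢ Y) with hZ_def
  have hZfin : Z.Finite := (hXfin.prod hYfin).image f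
  refine ⟨?_, ?_, Z⁻¹, hZfin.inv, ?_⟩
  · rw [Set.inter_inv, powinv Λ hΛinv, powinv Ξ hΞinv]
  · exact ⟨one_mem_pow hΛ1 k, one_mem_pow hΞ1 l⟩
  · -- key: the product lands in Z * (Λ^2 ∩ Ξ^2) ⊆ Z * (Λ^k ∩ Ξ^l), then invert
    have hsq : Λ ^ 2 ∩ Ξ ^ 2 ⊆ Λ ^ k ∩ Ξ ^ l := by
      rintro g ⟨hg1, hg2⟩
      constructor
      · have : Λ ^ k = Λ ^ 2 * Λ ^ (k - 2) := by rw [← pow_add]; congr 1; omega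
        rw [this]
        exact ⟨g, hg1, 1, one_mem_pow hΛ1 _, mul_one g⟩
      · have : Ξ ^ l = Ξ ^ 2 * Ξ ^ (l - 2) := by rw [← pow_add]; congr 1; omega
        rw [this]
        exact ⟨g, hg2, 1, one_mem_pow hΞ1 _, mul_one g⟩
    have key : (Λ ^ k ∩ Ξ ^ l) * (Λ ^ k ∩ Ξ ^ l) ⊆ Z * (Λ ^ k ∩ Ξ ^ l) := by
      intro g hg
      have hgΛ : g ∈ Λ ^ (2 * k) := by
        rw [two_mul, pow_add]
        exact Set.mul_subset_mul (Set.inter_subset_left) (Set.inter_subset_left) hg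
      have hgΞ : g ∈ Ξ ^ (2 * l) := by
        rw [two_mul, pow_add]
        exact Set.mul_subset_mul (Set.inter_subset_right) (Set.inter_subset_right) hg
      obtain ⟨x, hx, a, ha, hxa⟩ := hX hgΛ
      obtain ⟨y, hy, b, hb, hyb⟩ := hY hgΞ
      have hne : ((({x} : Set G) * Λ) ∩ (({y} : Set G) * Ξ)).Nonempty :=
        ⟨g, ⟨x, rfl, a, ha, hxa⟩, ⟨y, rfl, b, hb, hyb⟩⟩
      set z := f (x, y) with hz_def
      have hz : z ∈ (({x} : Set G) * Λ) ∩ (({y} : Set G) * Ξ) := by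
        rw [hz_def, hf_def]
        simp only [dif_pos hne]
        exact hne.choose_spec
      obtain ⟨⟨x', hx', a', ha', hxa'⟩, ⟨y', hy', b', hb', hyb'⟩⟩ := hz
      rw [Set.mem_singleton_iff] at hx' hy'
      rw [hx'] at hxa'
      rw [hy'] at hyb'
      have hxa' : x * a' = z := hxa'
      have hyb' : y * b' = z := hyb'
      have hxa : x * a = g := hxa
      have hyb : y * b = g := hyb
      refine ⟨z, ⟨(x, y), Set.mk_mem_prod hx hy, rfl⟩, z⁻¹ * g, hsq ⟨?_, ?_⟩, by group⟩
      · -- z⁻¹ * g ∈ Λ^2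
        have : z⁻¹ * g = a'⁻¹ * a := by rw [← hxa', ← hxa]; group
        rw [this, pow_two]
        exact ⟨a'⁻¹, by rw [← hΛinv]; exact Set.inv_mem_inv.mpr ha', a, ha, rfl⟩
      · have : z⁻¹ * g = b'⁻¹ * b := by rw [← hyb', ← hyb]; group
        rw [this, pow_two]
        exact ⟨b'⁻¹, by rw [← hΞinv]; exact Set.inv_mem_inv.mpr hb', b, hb, rfl⟩
    -- convert left covering to right covering via symmetry
    intro g hg
    have hsym : ((Λ ^ k ∩ Ξ ^ l) * (Λ ^ k ∩ Ξ ^ l))⁻¹ = (Λ ^ k ∩ Ξ ^ l) * (Λ ^ k ∩ Ξ ^ l) := by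
      rw [mul_inv_rev, Set.inter_inv, powinv Λ hΛinv, powinv Ξ hΞinv]
    have hginv : g⁻¹ ∈ (Λ ^ k ∩ Ξ ^ l) * (Λ ^ k ∩ Ξ ^ l) := by
      rw [← hsym]; exact Set.inv_mem_inv.mpr hg
    obtain ⟨z, hzZ, w, hw, hzwg⟩ := key hginv
    have hzwg' : z * w = g⁻¹ := hzwg
    refine ⟨w⁻¹, ?_, z⁻¹, Set.inv_mem_inv.mpr hzZ, ?_⟩
    · have : (Λ ^ k ∩ Ξ ^ l)⁻¹ = Λ ^ k ∩ Ξ ^ l := by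
        rw [Set.inter_inv, powinv Λ hΛinv, powinv Ξ hΞinv]
      rw [← this]
      exact Set.inv_mem_inv.mpr hw
    · show w⁻¹ * z⁻¹ = g
      rw [← mul_inv_rev, hzwg', inv_inv]
end

section
/- Let G and H be groups and let f : G → H be a quasimorphism. If Ξ ⊆ G is a left-quasi-subgroup of G, then f(Ξ) is a left-quasi-subgroup of H. In particular, if Ξ is an approximate subgroup of G and f is symmetric, then f(Ξ) is an approximate subgroup of H. -/
open Pointwise

/-- A subset `Λ` of a group `G` is a left-quasi-subgroup if `Λ⁻¹ ⊆ Λ·F₁` and `Λ·Λ ⊆ Λ·F₂` for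
some finite sets `F₁, F₂ ⊆ G`. -/
def IsLeftQuasiSubgroup {G : Type*} [Group G] (Λ : Set G) : Prop :=
  (∃ F₁ : Set G, F₁.Finite ∧ Λ⁻¹ ⊆ Λ * F₁) ∧ ∃ F₂ : Set G, F₂.Finite ∧ Λ * Λ ⊆ Λ * F₂

/-- The left-defect set of a map between groups. -/
def defectSet {G H : Type*} [Group G] [Group H] (f : G → H) : Set H :=
  {d : H | ∃ x y : G, d = (f y)⁻¹ * (f x)⁻¹ * f (x * y)}

/-- A map between groups is a quasimorphism if its left-defect set is finite. -/
def IsQuasimorphism {G H : Type*} [Group G] [Group H] (f : G → H) : Prop :=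
  (defectSet f).Finite

lemma defect_spec {G H : Type*} [Group G] [Group H] (f : G → H) (x y : G) :
    ∃ d ∈ defectSet f, f (x * y) = f x * f y * d :=
  ⟨(f y)⁻¹ * (f x)⁻¹ * f (x * y), ⟨x, y, rfl⟩, by group⟩

lemma mul_image_sub {G H : Type*} [Group G] [Group H] (f : G → H) (Ξ F : Set G)
    (hF : Ξ * Ξ ⊆ Ξ * F) :
    f '' Ξ * f '' Ξ ⊆ f '' Ξ * (f '' F * defectSet f * (defectSet f)⁻¹) := by
  rintro a ⟨x', ⟨x, hx, rfl⟩, y', ⟨y, hy, rfl⟩, rfl⟩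
  obtain ⟨z, hz, g, hg, hzg⟩ := hF (Set.mul_mem_mul hx hy)
  change z * g = x * y at hzg
  obtain ⟨d1, hd1, h1⟩ := defect_spec f z g
  obtain ⟨d2, hd2, h2⟩ := defect_spec f x y
  rw [hzg] at h1
  have key : f x * f y = f z * (f g * d1 * d2⁻¹) := by
    have h3 : f x * f y * d2 = f z * f g * d1 := h2.symm.trans h1
    have := congrArg (· * d2⁻¹) h3
    simp only [mul_inv_cancel_right] at this
    rw [this]; group
  show f x * f y ∈ _
  rw [key]
  exact Set.mul_mem_mul ⟨z, hz, rfl⟩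
    (Set.mul_mem_mul (Set.mul_mem_mul ⟨g, hg, rfl⟩ hd1) (Set.inv_mem_inv.mpr hd2))

lemma inv_image_sub {G H : Type*} [Group G] [Group H] (f : G → H) (Ξ F : Set G)
    (hF : Ξ⁻¹ ⊆ Ξ * F) :
    (f '' Ξ)⁻¹ ⊆ f '' Ξ * (f '' F * defectSet f * defectSet f * {(f 1)⁻¹}) := by
  rintro a ha
  rw [Set.mem_inv] at ha
  obtain ⟨x, hx, hxa⟩ := ha
  have ha : a = (f x)⁻¹ := by rw [hxa]; group
  subst ha
  obtain ⟨z, hz, g, hg, hzg⟩ := hF (Set.inv_mem_inv.mpr hx)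
  obtain ⟨d1, hd1, h1⟩ := defect_spec f z g
  obtain ⟨d2, hd2, h2⟩ := defect_spec f x x⁻¹
  rw [mul_inv_cancel] at h2
  change z * g = x⁻¹ at hzg
  rw [hzg] at h1
  have key : (f x)⁻¹ = f z * (f g * d1 * d2 * (f 1)⁻¹) := by
    have h3 : (f x)⁻¹ = f x⁻¹ * d2 * (f 1)⁻¹ := by rw [h2]; group
    rw [h3, h1]; group
  rw [key]
  exact Set.mul_mem_mul ⟨z, hz, rfl⟩
    (Set.mul_mem_mul (Set.mul_mem_mul (Set.mul_mem_mul ⟨g, hg, rfl⟩ hd1) hd2) rfl)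

theorem image_of_quasi_subgroup_under_quasimorphism {G H : Type*} [Group G] [Group H]
    (f : G → H) (hf : IsQuasimorphism f) (Ξ : Set G) :
    (IsLeftQuasiSubgroup Ξ → IsLeftQuasiSubgroup (f '' Ξ)) ∧
    (IsApproximateSubgroup' Ξ → f 1 = 1 → (∀ x : G, f x⁻¹ = (f x)⁻¹) →
      IsApproximateSubgroup' (f '' Ξ)) := by
  constructor
  · rintro ⟨⟨F₁, hF₁fin, hF₁⟩, ⟨F₂, hF₂fin, hF₂⟩⟩
    refine ⟨⟨_, ?_, inv_image_sub f Ξ F₁ hF₁⟩, ⟨_, ?_, mul_image_sub f Ξ F₂ hF₂⟩⟩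
    · exact ((((hF₁fin.image f).mul hf).mul hf).mul (Set.finite_singleton _))
    · exact ((hF₂fin.image f).mul hf).mul hf.inv
  · rintro ⟨hsym, hone, F, hFfin, hF⟩ h1 hinv
    refine ⟨?_, ⟨1, hone, h1⟩, _, ((hFfin.image f).mul hf).mul hf.inv,
      mul_image_sub f Ξ F hF⟩
    ext a
    constructor
    · rintro ⟨x, hx, hxa⟩
      exact ⟨x⁻¹, hsym ▸ Set.inv_mem_inv.mpr hx, by rw [hinv x, hxa]; group
      ⟩
    · rintro ⟨x, hx, rfl⟩
      rw [← hsym] at hx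
      exact ⟨x⁻¹, hx, hinv x⟩
end

section
/- (i) Let ρ : G → H be a group homomorphism and let Λ ⊆ H be an approximate subgroup. Then ρ⁻¹(Λ·Λ) is an approximate subgroup of G; if moreover ρ is surjective, then already ρ⁻¹(Λ) is an approximate subgroup of G, and if in addition Λ generates H then ρ⁻¹(Λ) generates G. (ii) Let A be an abelian group, ρ : G → A a surjective symmetric quasimorphism, Λ ⊆ A an approximate subgroup, and S ⊆ A a finite symmetric set with D(ρ) ⊆ S. Then ρ⁻¹(Λ·S) is an approximate subgroup of G; in particular (taking Λ = {0} and S the symmetrization of D(ρ)) the quasi-kernel qker(ρ) = ρ⁻¹(D_sym(ρ)) is an approximate subgroup of G. -/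
open Pointwise

private lemma mem_of_symm {A : Type*} [Group A] {T : Set A} (hT : T⁻¹ = T) {a : A} :
    a ∈ T ↔ a⁻¹ ∈ T := by
  constructor
  · intro h; rw [← hT]; exact Set.inv_mem_inv.2 h
  · intro h; rw [← hT] at h; exact Set.inv_mem_inv.1 h

private lemma aux_preimage_inv {G H : Type*} [Group G] [Group H] (ρ : G →* H)
    {T : Set H} (hT : T⁻¹ = T) : (⇑ρ ⁻¹' T)⁻¹ = ⇑ρ ⁻¹' T := by
  ext x
  simp only [Set.mem_inv, Set.mem_preimage, map_inv]
  exact (mem_of_symm hT).symm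

private lemma aux_quad {H : Type*} [Group H] {Λ F : Set H} (hcov : Λ * Λ ⊆ Λ * F) :
    (Λ * Λ) * (Λ * Λ) ⊆ Λ * (F * (F * F)) := by
  have step2 : Λ * (Λ * Λ) ⊆ Λ * (F * F) := by
    calc Λ * (Λ * Λ) ⊆ Λ * (Λ * F) := Set.mul_subset_mul_left hcov
      _ = (Λ * Λ) * F := (mul_assoc _ _ _).symm
      _ ⊆ (Λ * F) * F := Set.mul_subset_mul_right hcov
      _ = Λ * (F * F) := mul_assoc _ _ _
  calc (Λ * Λ) * (Λ * Λ) = Λ * (Λ * (Λ * Λ)) := mul_assoc _ _ _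
    _ ⊆ Λ * (Λ * (F * F)) := Set.mul_subset_mul_left step2
    _ = (Λ * Λ) * (F * F) := (mul_assoc _ _ _).symm
    _ ⊆ (Λ * F) * (F * F) := Set.mul_subset_mul_right hcov
    _ = Λ * (F * (F * F)) := mul_assoc _ _ _

theorem preimages_of_approximate_subgroups {G H A : Type*} [Group G] [Group H] [CommGroup A] :
    -- (i) preimages under group homomorphisms
    (∀ (ρ : G →* H) (Λ : Set H), IsApproximateSubgroup' Λ →
        IsApproximateSubgroup' (⇑ρ ⁻¹' (Λ * Λ)) ∧
        (Function.Surjective ⇑ρ →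
          IsApproximateSubgroup' (⇑ρ ⁻¹' Λ) ∧
          (Subgroup.closure Λ = ⊤ → Subgroup.closure (⇑ρ ⁻¹' Λ) = ⊤))) ∧
    -- (ii) preimages under surjective symmetric quasimorphisms with abelian target
    (∀ ρ : G → A, IsQuasimorphism ρ → Function.Surjective ρ → ρ 1 = 1 →
        (∀ x : G, ρ x⁻¹ = (ρ x)⁻¹) →
        (∀ Λ S : Set A, IsApproximateSubgroup' Λ → S.Finite → S⁻¹ = S →
            defectSet ρ ⊆ S → IsApproximateSubgroup' (ρ ⁻¹' (Λ * S))) ∧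
        IsApproximateSubgroup' (ρ ⁻¹' (defectSet ρ ∪ (defectSet ρ)⁻¹))) := by
  classical
  constructor
  · rintro ρ Λ ⟨hsym, hone, F, hF, hcov⟩
    have hsq : (Λ * Λ)⁻¹ = Λ * Λ := by rw [mul_inv_rev, hsym]
    constructor
    · refine ⟨aux_preimage_inv ρ hsq, ?_, ?_⟩
      · have : (1 : H) * 1 ∈ Λ * Λ := Set.mul_mem_mul hone hone
        simpa using this
      · -- covering set construction via choice
        have key : ∀ t : H, ∃ g : G, (∃ g₀ : G, ρ g₀ ∈ Λ * {t}) → ρ g ∈ Λ * {t} := by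
          intro t
          by_cases h : ∃ g₀ : G, ρ g₀ ∈ Λ * {t}
          · exact ⟨h.choose, fun _ => h.choose_spec⟩
          · exact ⟨1, fun hh => absurd hh h⟩
        choose c hc using key
        refine ⟨c '' (F * (F * F)), (hF.mul (hF.mul hF)).image c, ?_⟩
        rintro x hx
        obtain ⟨g, hg, g', hg', rfl⟩ := Set.mem_mul.1 hx
        have hprod : ρ (g * g') ∈ Λ * (F * (F * F)) := by
          rw [map_mul]
          exact aux_quad hcov (Set.mul_mem_mul hg hg')
        obtain ⟨a, ha, t, ht, heq⟩ := Set.mem_mul.1 hprod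
        have hex : ∃ g₀ : G, ρ g₀ ∈ Λ * {t} :=
          ⟨g * g', by rw [← heq]; exact Set.mul_mem_mul ha rfl⟩
        obtain ⟨b, hb, t₂, ht₂, heq'⟩ := Set.mem_mul.1 (hc t hex)
        rw [Set.mem_singleton_iff] at ht₂
        rw [ht₂] at heq'
        have hmem : g * g' * (c t)⁻¹ ∈ ⇑ρ ⁻¹' (Λ * Λ) := by
          have : ρ (g * g' * (c t)⁻¹) = a * b⁻¹ := by
            rw [map_mul, map_inv, ← heq, ← heq']
            group
          simp only [Set.mem_preimage, this]
          exact Set.mul_mem_mul ha (hsym ▸ Set.inv_mem_inv.2 hb)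
        have : g * g' = (g * g' * (c t)⁻¹) * c t := by group
        rw [this]
        exact Set.mul_mem_mul hmem (Set.mem_image_of_mem c ht)
    · intro hsurj
      obtain ⟨c, hc⟩ := hsurj.hasRightInverse
      constructor
      · refine ⟨aux_preimage_inv ρ hsym,
          Set.mem_preimage.2 (by rw [map_one]; exact hone), c '' F, hF.image c, ?_⟩
        rintro x hx
        obtain ⟨g, hg, g', hg', rfl⟩ := Set.mem_mul.1 hx
        have hprod : ρ (g * g') ∈ Λ * F := by
          rw [map_mul]; exact hcov (Set.mul_mem_mul hg hg')
        obtain ⟨a, ha, f, hf, heq⟩ := Set.mem_mul.1 hprod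
        have hmem : g * g' * (c f)⁻¹ ∈ ⇑ρ ⁻¹' Λ := by
          have : ρ (g * g' * (c f)⁻¹) = a := by
            rw [map_mul, map_inv, hc f, ← heq]; group
          simp only [Set.mem_preimage, this]; exact ha
        have : g * g' = (g * g' * (c f)⁻¹) * c f := by group
        rw [this]
        exact Set.mul_mem_mul hmem (Set.mem_image_of_mem c hf)
      · intro hcl
        have hsub : ⇑ρ ⁻¹' Λ ⊆ (Subgroup.closure (⇑ρ ⁻¹' Λ) : Set G) :=
          Subgroup.subset_closure
        have hmap : (Subgroup.closure (⇑ρ ⁻¹' Λ)).map ρ = ⊤ := by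
          rw [MonoidHom.map_closure, Set.image_preimage_eq Λ hsurj, hcl]
        rw [Subgroup.eq_top_iff']
        intro g
        have : ρ g ∈ (Subgroup.closure (⇑ρ ⁻¹' Λ)).map ρ := by rw [hmap]; trivial
        obtain ⟨k, hk, hkeq⟩ := this
        have hker : g * k⁻¹ ∈ ⇑ρ ⁻¹' Λ := by
          simp only [Set.mem_preimage, map_mul, map_inv, hkeq]
          simpa using hone
        have : g = (g * k⁻¹) * k := by group
        rw [this]
        exact mul_mem (hsub hker) hk
  · intro ρ hq hsurj hone hinv
    have hdef : ∀ x y : G, ∃ d ∈ defectSet ρ, ρ (x * y) = ρ x * ρ y * d := by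
      intro x y
      exact ⟨_, ⟨x, y, rfl⟩, by group⟩
    have hDone : (1 : A) ∈ defectSet ρ := ⟨1, 1, by simp [hone]⟩
    have main : ∀ Λ S : Set A, IsApproximateSubgroup' Λ → S.Finite → S⁻¹ = S →
        defectSet ρ ⊆ S → IsApproximateSubgroup' (ρ ⁻¹' (Λ * S)) := by
      rintro Λ S ⟨hsym, hΛ1, F, hF, hcov⟩ hSfin hSsym hDS
      have hTsym : (Λ * S)⁻¹ = Λ * S := by rw [mul_inv_rev, hSsym, hsym, mul_comm]
      refine ⟨?_, ?_, ?_⟩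
      · ext x
        simp only [Set.mem_inv, Set.mem_preimage, hinv]
        exact (mem_of_symm hTsym).symm
      · have : (1 : A) * 1 ∈ Λ * S := Set.mul_mem_mul hΛ1 (hDS hDone)
        simp only [Set.mem_preimage, hone]
        simpa using this
      · obtain ⟨c, hc⟩ := hsurj.hasRightInverse
        refine ⟨c '' (F * (S * S * S)),
          (hF.mul ((hSfin.mul hSfin).mul hSfin)).image c, ?_⟩
        rintro x hx
        obtain ⟨g, hg, g', hg', rfl⟩ := Set.mem_mul.1 hx
        obtain ⟨a₁, ha₁, s₁, hs₁, h1⟩ := Set.mem_mul.1 hg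
        obtain ⟨a₂, ha₂, s₂, hs₂, h2⟩ := Set.mem_mul.1 hg'
        obtain ⟨a₃, ha₃, f, hf, h3⟩ := Set.mem_mul.1 (hcov (Set.mul_mem_mul ha₁ ha₂))
        obtain ⟨d, hd, hdeq⟩ := hdef g g'
        set t : A := f * (s₁ * s₂ * d) with htdef
        have ht : t ∈ F * (S * S * S) :=
          Set.mul_mem_mul hf
            (Set.mul_mem_mul (Set.mul_mem_mul hs₁ hs₂) (hDS hd))
        obtain ⟨d', hd', hdeq'⟩ := hdef (g * g') (c t)⁻¹
        have hmem : g * g' * (c t)⁻¹ ∈ ρ ⁻¹' (Λ * S) := by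
          have hval : ρ (g * g' * (c t)⁻¹) = a₃ * d' := by
            rw [hdeq', hdeq, hinv, hc t, ← h1, ← h2, htdef]
            have e : a₁ * s₁ * (a₂ * s₂) * d = a₁ * a₂ * (s₁ * (s₂ * d)) := by
              simp only [mul_assoc]
              rw [mul_left_comm s₁ a₂]
            rw [e, ← h3]
            group
          simp only [Set.mem_preimage, hval]
          exact Set.mul_mem_mul ha₃ (hDS hd')
        have : g * g' = (g * g' * (c t)⁻¹) * c t := by group
        rw [this]
        exact Set.mul_mem_mul hmem (Set.mem_image_of_mem c ht)
    refine ⟨main, ?_⟩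
    have h1 : IsApproximateSubgroup' ({1} : Set A) := by
      refine ⟨by simp, rfl, {1}, Set.finite_singleton 1, ?_⟩
      simp
    have h2 : (defectSet ρ ∪ (defectSet ρ)⁻¹)⁻¹ = defectSet ρ ∪ (defectSet ρ)⁻¹ := by
      rw [Set.union_inv, inv_inv, Set.union_comm]
    have := main {1} (defectSet ρ ∪ (defectSet ρ)⁻¹) h1 (hq.union hq.inv) h2
      Set.subset_union_left
    rwa [Set.singleton_one, one_mul] at this
end

section
/- Let (Λ, Λ^∞) be an approximate group, let G be a group, and let ρ : G → Λ^∞ be a surjective symmetric quasimorphism. Then Ξ := ρ⁻¹(D(ρ)⁻¹·Λ·D(ρ)) is an approximate subgroup of G. -/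
open Pointwise

/-- `Λ^∞ = ⋃_{k ≥ 1} Λ^k`. -/
def infPowers {G : Type*} [Group G] (Λ : Set G) : Set G :=
  ⋃ n : ℕ, Λ ^ (n + 1)

lemma aux_pow_cover {H : Type*} [Group H] (Λ F0 : Set H) (hF0 : F0.Finite)
    (h : Λ * Λ ⊆ Λ * F0) : ∀ n : ℕ, ∃ F : Set H, F.Finite ∧ Λ ^ (n + 1) ⊆ Λ * F := by
  intro n
  induction n with
  | zero => exact ⟨1, Set.finite_one, by rw [pow_one, mul_one]⟩
  | succ k ih =>
    obtain ⟨F, hFfin, hF⟩ := ih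
    refine ⟨F0 * F, hF0.mul hFfin, ?_⟩
    calc Λ ^ (k + 2) = Λ * Λ ^ (k + 1) := by rw [← pow_succ']
      _ ⊆ Λ * (Λ * F) := Set.mul_subset_mul_left hF
      _ = (Λ * Λ) * F := by rw [mul_assoc]
      _ ⊆ (Λ * F0) * F := Set.mul_subset_mul_right h
      _ = Λ * (F0 * F) := by rw [mul_assoc]

lemma aux_pow_mono {H : Type*} [Group H] {Λ : Set H} (h1 : (1 : H) ∈ Λ) :
    ∀ {m n : ℕ}, m ≤ n → Λ ^ m ⊆ Λ ^ n := by
  intro m n hmn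
  induction hmn with
  | refl => exact subset_rfl
  | step h ih => exact ih.trans (by rw [pow_succ]; exact Set.subset_mul_left _ h1)

lemma aux_finite_sub_pow {H : Type*} [Group H] {Λ : Set H}
    (hgen : infPowers Λ = Set.univ) (h1 : (1 : H) ∈ Λ) {S : Set H} (hS : S.Finite) :
    ∃ m : ℕ, S ⊆ Λ ^ (m + 1) := by
  refine Set.Finite.induction_on (motive := fun S _ => ∃ m : ℕ, S ⊆ Λ ^ (m + 1)) S hS ⟨0, Set.empty_subset _⟩ ?_
  rintro a s - - ⟨m, hm⟩
  have ha : a ∈ infPowers Λ := by rw [hgen]; trivial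
  obtain ⟨t, ⟨k, rfl⟩, hk⟩ := ha
  exact ⟨max k m, Set.insert_subset
    (aux_pow_mono h1 (by omega) hk) (hm.trans (aux_pow_mono h1 (by omega)))⟩

lemma aux_mul_sub_pow {H : Type*} [Group H] {Λ A B : Set H} {a b : ℕ}
    (hA : A ⊆ Λ ^ a) (hB : B ⊆ Λ ^ b) : A * B ⊆ Λ ^ (a + b) := by
  rw [pow_add]; exact Set.mul_subset_mul hA hB

/-- The enveloping group `Λ^∞` of the approximate group `(Λ, Λ^∞)` is realized as the group `H`
(the hypothesis `hgen` says `Λ^∞ = H`), and `ρ : G → Λ^∞` is a surjective symmetric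
quasimorphism. -/
theorem preimage_under_symmetric_quasimorphism {G H : Type*} [Group G] [Group H]
    (Λ : Set H) (hΛ : IsApproximateSubgroup' Λ) (hgen : infPowers Λ = Set.univ)
    (ρ : G → H) (hρ : IsQuasimorphism ρ) (hsurj : Function.Surjective ρ)
    (hone : ρ 1 = 1) (hsym : ∀ x : G, ρ x⁻¹ = (ρ x)⁻¹) :
    IsApproximateSubgroup' (ρ ⁻¹' ((defectSet ρ)⁻¹ * Λ * defectSet ρ)) := by
  obtain ⟨hinv, h1Λ, F0, hF0fin, hF0⟩ := hΛ
  set D := defectSet ρ with hDdef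
  have h1D : (1 : H) ∈ D := ⟨1, 1, by simp [hone]⟩
  have h1Dinv : (1 : H) ∈ D⁻¹ := by rw [Set.mem_inv]; simpa using h1D
  have key : ∀ x y : G, ∃ d ∈ D, ρ (x * y) = ρ x * ρ y * d :=
    fun x y => ⟨(ρ y)⁻¹ * (ρ x)⁻¹ * ρ (x * y), ⟨x, y, rfl⟩, by group⟩
  have hSinv : (D⁻¹ * Λ * D)⁻¹ = D⁻¹ * Λ * D := by
    rw [mul_inv_rev, mul_inv_rev, inv_inv, hinv, ← mul_assoc]
  refine ⟨?_, ?_, ?_⟩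
  · ext x
    rw [Set.mem_inv, Set.mem_preimage, Set.mem_preimage, hsym, ← Set.mem_inv, hSinv]
  · rw [Set.mem_preimage, hone]
    have : (1 : H) * 1 * 1 ∈ D⁻¹ * Λ * D :=
      Set.mul_mem_mul (Set.mul_mem_mul h1Dinv h1Λ) h1D
    simpa using this
  · obtain ⟨m, hm⟩ := aux_finite_sub_pow hgen h1Λ ((hρ.union hρ.inv))
    have hD : D ⊆ Λ ^ (m + 1) := (Set.subset_union_left).trans hm
    have hDinv : D⁻¹ ⊆ Λ ^ (m + 1) := (Set.subset_union_right).trans hm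
    have hΛ1 : Λ ⊆ Λ ^ 1 := by rw [pow_one]
    have hT : D⁻¹ * Λ * D ⊆ Λ ^ ((m + 1) + 1 + (m + 1)) :=
      aux_mul_sub_pow (aux_mul_sub_pow hDinv hΛ1) hD
    have hTTD : (D⁻¹ * Λ * D) * (D⁻¹ * Λ * D) * D ⊆ Λ ^ (5 * m + 6 + 1) := by
      have := aux_mul_sub_pow (aux_mul_sub_pow hT hT) hD
      refine this.trans (aux_pow_mono h1Λ (by omega))
    obtain ⟨F1, hF1fin, hF1⟩ := aux_pow_cover Λ F0 hF0fin hF0 (5 * m + 6)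
    have hcov : (D⁻¹ * Λ * D) * (D⁻¹ * Λ * D) * D ⊆ Λ * F1 := hTTD.trans hF1
    choose g hg using hsurj
    refine ⟨g '' F1, hF1fin.image g, ?_⟩
    rintro w hw
    rw [Set.mem_mul] at hw
    obtain ⟨x, hx, z, hz, rfl⟩ := hw
    rw [Set.mem_preimage] at hx hz
    obtain ⟨d, hd, hxz⟩ := key x z
    have hmem : ρ (x * z) ∈ Λ * F1 := by
      rw [hxz]
      exact hcov (Set.mul_mem_mul (Set.mul_mem_mul hx hz) hd)
    rw [Set.mem_mul] at hmem
    obtain ⟨l, hl, f, hf, hlf⟩ := hmem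
    obtain ⟨d', hd', hu⟩ := key (x * z) (g f)⁻¹
    have hrw : x * z = (x * z * (g f)⁻¹) * g f := by group
    rw [hrw]
    refine Set.mul_mem_mul ?_ (Set.mem_image_of_mem g hf)
    rw [Set.mem_preimage]
    have : ρ (x * z * (g f)⁻¹) = (1 * l) * d' := by
      rw [hu, hsym, hg, ← hlf]; group
    rw [this]
    exact Set.mul_mem_mul (Set.mul_mem_mul h1Dinv hl) hd'
end

section
/- Let (Ξ, Ξ^∞) and (Λ, Λ^∞) be approximate groups. (i) If ρ : Ξ^{10} → Λ^{10} is a 10-local morphism, then the partial kernel ker₂(ρ) = Ξ² ∩ ρ⁻¹(1) is an approximate subgroup of Ξ^∞. (ii) More generally, if k ≥ 2 and ρ : Ξ^{6k−2} → Λ^{6k−2} is a (6k−2)-local morphism, then each of the partial kernels ker₂(ρ), …, ker_k(ρ), where ker_j(ρ) = Ξ^j ∩ ρ⁻¹(1), is an approximate subgroup of Ξ^∞. -/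
open Pointwise

/-- A `k`-local morphism between approximate groups `(Ξ, Ξ^∞)` and `(Λ, Λ^∞)`: it maps `Ξ^j`
into `Λ^j` for `j ≤ k`, sends `1` to `1`, and is multiplicative whenever all of `g`, `h`, `g*h`
lie in `Ξ^k`. -/
def IsLocalMorphism {G H : Type*} [Group G] [Group H] (Ξ : Set G) (Λ : Set H) (k : ℕ)
    (ρ : G → H) : Prop :=
  (∀ j : ℕ, j ≤ k → ∀ g ∈ Ξ ^ j, ρ g ∈ Λ ^ j) ∧ ρ 1 = 1 ∧
    ∀ g h : G, g ∈ Ξ ^ k → h ∈ Ξ ^ k → g * h ∈ Ξ ^ k → ρ (g * h) = ρ g * ρ h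

/-- Auxiliary covering lemma: `Ξ^(n+1) ⊆ Ξ * F^n` when `Ξ * Ξ ⊆ Ξ * F`. -/
lemma aux_pow_subset {G : Type*} [Group G] {Ξ F : Set G} (hΞF : Ξ * Ξ ⊆ Ξ * F) :
    ∀ n : ℕ, Ξ ^ (n + 1) ⊆ Ξ * F ^ n := by
  intro n
  induction n with
  | zero => simp
  | succ n ih =>
    calc Ξ ^ (n + 2) = Ξ * Ξ ^ (n + 1) := by rw [pow_succ']
      _ ⊆ Ξ * (Ξ * F ^ n) := Set.mul_subset_mul_left ih
      _ = (Ξ * Ξ) * F ^ n := (mul_assoc _ _ _).symm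
      _ ⊆ (Ξ * F) * F ^ n := Set.mul_subset_mul_right hΞF
      _ = Ξ * F ^ (n + 1) := by rw [mul_assoc, ← pow_succ']

/-- The main lemma: a partial kernel of a locally multiplicative map is an approximate
subgroup.  Only the properties of `Ξ` and local multiplicativity of `ρ` are needed. -/
lemma kernel_approx {G H : Type*} [Group G] [Group H] {Ξ : Set G}
    (hsymm : Ξ⁻¹ = Ξ) (hone : (1 : G) ∈ Ξ) {F : Set G} (hF : F.Finite)
    (hΞF : Ξ * Ξ ⊆ Ξ * F) {ρ : G → H} {K : ℕ} (hρ1 : ρ 1 = 1)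
    (hmul : ∀ g h : G, g ∈ Ξ ^ K → h ∈ Ξ ^ K → g * h ∈ Ξ ^ K → ρ (g * h) = ρ g * ρ h)
    {j : ℕ} (hj2 : 2 ≤ j) (hjK : 2 * j ≤ K) :
    IsApproximateSubgroup' {g ∈ Ξ ^ j | ρ g = 1} := by
  have oneK : (1 : G) ∈ Ξ ^ K := Set.one_mem_pow hone
  have powmono : ∀ {m n : ℕ}, m ≤ n → Ξ ^ m ⊆ Ξ ^ n := fun {m n} h =>
    Set.pow_subset_pow_right hone h
  have powsymm : ∀ (n : ℕ) {g : G}, g ∈ Ξ ^ n → g⁻¹ ∈ Ξ ^ n := by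
    intro n g hg
    have : (Ξ ^ n)⁻¹ = Ξ ^ n := by rw [← inv_pow, hsymm]
    rw [← this]
    exact Set.inv_mem_inv.mpr hg
  -- ρ of an inverse of an element of Ξ^K is the inverse of ρ
  have hinv : ∀ g : G, g ∈ Ξ ^ K → ρ (g⁻¹) = (ρ g)⁻¹ := by
    intro g hg
    have h1 : ρ (g * g⁻¹) = ρ g * ρ g⁻¹ := hmul g g⁻¹ hg (powsymm K hg) (by simpa using oneK)
    rw [mul_inv_cancel, hρ1] at h1
    exact eq_inv_of_mul_eq_one_right h1.symm
  have hjK' : j ≤ K := le_trans (Nat.le_mul_of_pos_left j (by norm_num)) hjK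
  refine ⟨?_, ⟨Set.one_mem_pow hone, hρ1⟩, ?_⟩
  · -- symmetry
    ext g
    simp only [Set.mem_inv, Set.mem_setOf_eq]
    constructor
    · rintro ⟨hg, hρg⟩
      have hg' : g ∈ Ξ ^ j := by simpa using powsymm j hg
      refine ⟨hg', ?_⟩
      have := hinv g (powmono hjK' hg')
      rw [hρg] at this
      simpa using this.symm
    · rintro ⟨hg, hρg⟩
      refine ⟨powsymm j hg, ?_⟩
      rw [hinv g (powmono hjK' hg), hρg, inv_one]
  · -- doubling
    classical
    -- the kernel at level 2j
    set K2j : Set G := {g ∈ Ξ ^ (2 * j) | ρ g = 1} with hK2j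
    -- picking function
    set pick : G → G := fun f =>
      if h : ∃ x, x ∈ K2j ∧ x ∈ Ξ * {f} then h.choose else 1 with hpick
    have hFpow : ∀ n : ℕ, (F ^ n).Finite := by
      intro n
      induction n with
      | zero => simpa using Set.finite_one
      | succ n ih => rw [pow_succ]; exact ih.mul hF
    refine ⟨pick '' (F ^ (2 * j - 1)), (hFpow _).image _, ?_⟩
    intro x hx
    -- x is a product of two kernel elements; it lies in K2j
    obtain ⟨a, ha, b, hb, rfl⟩ := hx
    have haK : a ∈ Ξ ^ K := powmono hjK' ha.1
    have hbK : b ∈ Ξ ^ K := powmono hjK' hb.1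
    have hab2j : a * b ∈ Ξ ^ (2 * j) := by
      rw [two_mul, pow_add]
      exact Set.mul_mem_mul ha.1 hb.1
    have habK : a * b ∈ Ξ ^ K := powmono hjK hab2j
    have hxK2j : a * b ∈ K2j := ⟨hab2j, by rw [hmul a b haK hbK habK, ha.2, hb.2, mul_one]⟩
    -- cover Ξ^(2j) by Ξ * F^(2j-1)
    have hcover : Ξ ^ (2 * j) ⊆ Ξ * F ^ (2 * j - 1) := by
      have h2j : 2 * j = (2 * j - 1) + 1 := by omega
      rw [h2j]
      exact aux_pow_subset hΞF _
    obtain ⟨c, hc, f, hf, hcf⟩ := hcover hab2j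
    have hex : ∃ y, y ∈ K2j ∧ y ∈ Ξ * {f} := ⟨a * b, hxK2j, c, hc, f, rfl, hcf⟩
    have hpf : pick f ∈ K2j ∧ pick f ∈ Ξ * {f} := by
      rw [hpick]; simp only [dif_pos hex]; exact hex.choose_spec
    obtain ⟨hpf2j, hpfρ⟩ := hpf.1
    obtain ⟨d, hd, f', hf', hdf⟩ := Set.mem_mul.mp hpf.2
    rw [Set.mem_singleton_iff] at hf'
    rw [hf'] at hdf
    -- the quotient (a*b) * (pick f)⁻¹ lies in the kernel at level 2 ⊆ level j
    have hpfK : pick f ∈ Ξ ^ K := powmono hjK hpf2j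
    have hq2 : (a * b) * (pick f)⁻¹ ∈ Ξ ^ 2 := by
      have : (a * b) * (pick f)⁻¹ = c * d⁻¹ := by
        rw [← hcf, ← hdf]; group
      rw [this, sq]
      exact Set.mul_mem_mul hc (by rw [← hsymm]; exact Set.inv_mem_inv.mpr hd)
    have hqρ : ρ ((a * b) * (pick f)⁻¹) = 1 := by
      rw [hmul (a * b) (pick f)⁻¹ habK (powsymm K hpfK) (powmono (by omega) hq2),
        hinv _ hpfK, hxK2j.2, hpfρ, inv_one, mul_one]
    refine ⟨(a * b) * (pick f)⁻¹, ⟨powmono hj2 hq2, hqρ⟩, pick f, ⟨f, hf, rfl⟩, by group⟩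

theorem partial_kernels_are_approximate_subgroups {G H : Type*} [Group G] [Group H]
    (Ξ : Set G) (Λ : Set H) (hΞ : IsApproximateSubgroup' Ξ) (hΛ : IsApproximateSubgroup' Λ) :
    (∀ ρ : G → H, IsLocalMorphism Ξ Λ 10 ρ →
        IsApproximateSubgroup' {g ∈ Ξ ^ 2 | ρ g = 1}) ∧
    (∀ k : ℕ, 2 ≤ k → ∀ ρ : G → H, IsLocalMorphism Ξ Λ (6 * k - 2) ρ →
        ∀ j : ℕ, 2 ≤ j → j ≤ k → IsApproximateSubgroup' {g ∈ Ξ ^ j | ρ g = 1}) := by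
  obtain ⟨hsymm, hone, F, hF, hΞF⟩ := hΞ
  constructor
  · intro ρ hρ
    exact kernel_approx hsymm hone hF hΞF hρ.2.1 hρ.2.2 (le_refl 2) (by norm_num)
  · intro k hk ρ hρ j hj2 hjk
    exact kernel_approx hsymm hone hF hΞF hρ.2.1 hρ.2.2 hj2 (by omega)
end

section
/- Let (Ξ, Ξ^∞) and (Λ, Λ^∞) be approximate groups with Ξ countable, let k ≥ 2, and let ρ : Ξ^{k+1} → Λ^{k+1} be a (k+1)-local morphism. Then ker₂(ρ) is left-syndetic in ker_j(ρ) for every 2 ≤ j ≤ k; that is, for each such j there is a finite set F ⊆ Ξ^∞ with ker_j(ρ) ⊆ ker₂(ρ)·F. -/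
open Pointwise

/-- A subset `Λ` of a group `G` is an approximate subgroup if it is symmetric, contains the
identity and `Λ·Λ ⊆ Λ·F` for some finite set `F ⊆ G`. -/
def IsApproximateSubgroupFin {G : Type*} [Group G] (Λ : Set G) : Prop :=
  Λ⁻¹ = Λ ∧ (1 : G) ∈ Λ ∧ ∃ F : Set G, F.Finite ∧ Λ * Λ ⊆ Λ * F

theorem partial_kernels_left_syndetic {G H : Type*} [Group G] [Group H]
    (Ξ : Set G) (Λ : Set H) (hΞ : IsApproximateSubgroupFin Ξ) (hΛ : IsApproximateSubgroupFin Λ)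
    (hcount : Ξ.Countable) (k : ℕ) (hk : 2 ≤ k) (ρ : G → H)
    (hρ : IsLocalMorphism Ξ Λ (k + 1) ρ) :
    ∀ j : ℕ, 2 ≤ j → j ≤ k →
      ∃ F : Set G, F.Finite ∧ F ⊆ infPowers Ξ ∧
        {g ∈ Ξ ^ j | ρ g = 1} ⊆ {g ∈ Ξ ^ 2 | ρ g = 1} * F := by
  classical
  obtain ⟨hΞinv, hΞone, F, hFfin, hFcov⟩ := hΞ
  obtain ⟨hmap, hρone, hρmul⟩ := hρ
  have hmono : ∀ {a b : ℕ}, a ≤ b → Ξ ^ a ⊆ Ξ ^ b := fun hab =>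
    Set.pow_subset_pow_right hΞone hab
  have hFpowfin : ∀ n : ℕ, (F ^ n).Finite := by
    intro n
    induction n with
    | zero => simp [pow_zero]
    | succ n ih => rw [pow_succ]; exact ih.mul hFfin
  have hcov : ∀ n : ℕ, Ξ ^ (n + 1) ⊆ Ξ * F ^ n := by
    intro n
    induction n with
    | zero => simp [pow_one]
    | succ n ih =>
      calc Ξ ^ (n + 1 + 1) = Ξ * Ξ ^ (n + 1) := by rw [← pow_succ']
        _ ⊆ Ξ * (Ξ * F ^ n) := Set.mul_subset_mul_left ih
        _ = (Ξ * Ξ) * F ^ n := by rw [mul_assoc]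
        _ ⊆ (Ξ * F) * F ^ n := Set.mul_subset_mul_right hFcov
        _ = Ξ * (F * F ^ n) := by rw [mul_assoc]
        _ = Ξ * F ^ (n + 1) := by rw [← pow_succ']
  have hinvmem : ∀ {m : ℕ} {g : G}, g ∈ Ξ ^ m → g⁻¹ ∈ Ξ ^ m := by
    intro m g hg
    have : (Ξ ^ m)⁻¹ = Ξ ^ m := by rw [← inv_pow, hΞinv]
    rw [← this]
    exact Set.inv_mem_inv.2 hg
  have honepow : ∀ m : ℕ, (1 : G) ∈ Ξ ^ m := by
    intro m
    induction m with
    | zero => simp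
    | succ n ih => rw [pow_succ]; simpa using Set.mul_mem_mul ih hΞone
  have hρinv : ∀ g ∈ Ξ ^ (k + 1), ρ g⁻¹ = (ρ g)⁻¹ := by
    intro g hg
    have h := hρmul g g⁻¹ hg (hinvmem hg) (by simpa using honepow (k + 1))
    rw [mul_inv_cancel, hρone] at h
    exact (eq_inv_of_mul_eq_one_right h.symm)
  intro j hj2 hjk
  obtain ⟨m, rfl⟩ : ∃ m, j = m + 1 := ⟨j - 1, by omega⟩
  set P : G → G → Prop := fun f g => (g ∈ Ξ ^ (m + 1) ∧ ρ g = 1) ∧ g * f⁻¹ ∈ Ξ with hP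
  set rep : G → G := fun f => if h : ∃ g, P f g then h.choose else 1 with hrep
  refine ⟨rep '' (F ^ m), (hFpowfin m).image rep, ?_, ?_⟩
  · rintro x ⟨f, _, rfl⟩
    by_cases h : ∃ g, P f g
    · have hx := h.choose_spec.1.1
      simp only [hrep, dif_pos h]
      exact Set.mem_iUnion.2 ⟨m, hx⟩
    · simp only [hrep, dif_neg h]
      exact Set.mem_iUnion.2 ⟨0, by simpa using hΞone⟩
  · rintro g ⟨hgj, hgρ⟩
    obtain ⟨x, hx, f, hf, hxf⟩ := hcov m hgj
    have hgf : g * f⁻¹ ∈ Ξ := by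
      rw [← hxf]; simpa using hx
    have h : ∃ g', P f g' := ⟨g, ⟨hgj, hgρ⟩, hgf⟩
    have hrepf : rep f = h.choose := by simp only [hrep, dif_pos h]
    obtain ⟨⟨hhj, hhρ⟩, hhf⟩ := h.choose_spec
    set w := h.choose
    have hw2 : g * w⁻¹ ∈ Ξ ^ 2 := by
      have hfw : f * w⁻¹ ∈ Ξ := by
        have : (w * f⁻¹)⁻¹ ∈ Ξ⁻¹ := Set.inv_mem_inv.2 hhf
        rw [hΞinv] at this
        simpa using this
      have : g * w⁻¹ = x * (f * w⁻¹) := by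
        rw [← hxf]; group
      rw [this, sq]
      exact Set.mul_mem_mul hx hfw
    have hmk : m + 1 ≤ k + 1 := by omega
    have hρgw : ρ (g * w⁻¹) = 1 := by
      have := hρmul g w⁻¹ (hmono hmk hgj) (hmono hmk (hinvmem hhj))
        (hmono (by omega : 2 ≤ k + 1) hw2)
      rw [this, hgρ, hρinv w (hmono hmk hhj), hhρ]
      simp
    have : g = (g * w⁻¹) * w := by group
    rw [this]
    exact Set.mul_mem_mul ⟨hw2, hρgw⟩ ⟨f, hf, hrepf⟩
end

section
/- Let (Ξ, Ξ^∞) be an approximate group and let Λ ⊆ Ξ be a subset that is left-syndetic in Ξ (i.e. Ξ ⊆ Λ·F₁ for some finite set F₁), symmetric (Λ = Λ⁻¹), and contains the identity. Then Λ is an approximate subgroup of Ξ^∞; in particular there is a finite set F ⊆ Ξ^∞ with Λ·Λ ⊆ Λ·F. -/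
open Pointwise

theorem left_syndetic_symmetric_subset_is_approximate {G : Type*} [Group G]
    (Ξ : Set G) (hΞ : IsApproximateSubgroup' Ξ) (Λ : Set G) (hsub : Λ ⊆ Ξ)
    (hsyn : ∃ F₁ : Set G, F₁.Finite ∧ Ξ ⊆ Λ * F₁)
    (hsym : Λ⁻¹ = Λ) (hone : (1 : G) ∈ Λ) :
    IsApproximateSubgroup' Λ ∧
      ∃ F : Set G, F.Finite ∧ F ⊆ infPowers Ξ ∧ Λ * Λ ⊆ Λ * F := by
  obtain ⟨hΞsym, hΞone, F₀, hF₀fin, hF₀⟩ := hΞ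
  obtain ⟨F₁, hF₁fin, hF₁⟩ := hsyn
  set F : Set G := {t ∈ F₁ * F₀ | ∃ l ∈ Λ, l * t ∈ Λ * Λ} with hF
  have hFfin : F.Finite := (hF₁fin.mul hF₀fin).subset (fun t ht => ht.1)
  have hcover : Λ * Λ ⊆ Λ * F := by
    intro x hx
    have hxΞΞ : x ∈ Ξ * Ξ := Set.mul_subset_mul hsub hsub hx
    have hxΞF₀ : x ∈ Ξ * F₀ := hF₀ hxΞΞ
    obtain ⟨a, ha, f₀, hf₀, rfl⟩ := hxΞF₀
    obtain ⟨l, hl, f₁, hf₁, rfl⟩ := hF₁ ha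
    refine ⟨l, hl, f₁ * f₀, ⟨Set.mul_mem_mul hf₁ hf₀, l, hl, ?_⟩, by group⟩
    rw [← mul_assoc]; exact hx
  have hFsub : F ⊆ infPowers Ξ := by
    rintro t ⟨-, l, hl, hlt⟩
    have hlinv : l⁻¹ ∈ Ξ := hsub (by rw [← hsym]; exact Set.inv_mem_inv.mpr hl)
    have ht3 : t ∈ Ξ * (Ξ * Ξ) := by
      refine ⟨l⁻¹, hlinv, l * t, Set.mul_subset_mul hsub hsub hlt, by group⟩
    refine Set.mem_iUnion.mpr ⟨2, ?_⟩
    have : Ξ ^ 3 = Ξ * (Ξ * Ξ) := by rw [pow_succ, pow_two]; exact mul_assoc Ξ Ξ Ξ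
    rw [show (2 : ℕ) + 1 = 3 from rfl, this]
    exact ht3
  exact ⟨⟨hsym, hone, F, hFfin, hcover⟩, F, hFfin, hFsub, hcover⟩
end

section
/- Let H be a locally compact Hausdorff topological group, let W ⊆ H be a relatively compact symmetric identity neighborhood (W = W⁻¹, 1 lies in the interior of W, and the closure of W is compact), and let ρ : Γ → H be a group homomorphism from a group Γ. Then ρ⁻¹(W) is an approximate subgroup of Γ. -/
open Pointwise

/-- A subset `Λ` of a group `G` is an approximate subgroup if it is symmetric, contains the
identity and `Λ·Λ ⊆ Λ·F` for some finite set `F ⊆ G`. -/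
def IsApproximateSubgroupSet {G : Type*} [Group G] (Λ : Set G) : Prop :=
  Λ⁻¹ = Λ ∧ (1 : G) ∈ Λ ∧ ∃ F : Set G, F.Finite ∧ Λ * Λ ⊆ Λ * F

theorem preimage_of_relatively_compact_symmetric_nbhd {Γ H : Type*} [Group Γ] [Group H]
    [TopologicalSpace H] [IsTopologicalGroup H] [LocallyCompactSpace H] [T2Space H]
    (W : Set H) (hWsym : W⁻¹ = W) (hWnhd : W ∈ nhds (1 : H))
    (hWcpt : IsCompact (closure W)) (ρ : Γ →* H) :
    IsApproximateSubgroupSet (⇑ρ ⁻¹' W) := by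
  classical
  set Λ : Set Γ := ⇑ρ ⁻¹' W with hΛ
  have hΛsym : Λ⁻¹ = Λ := by
    ext g
    simp only [hΛ, Set.mem_inv, Set.mem_preimage, map_inv]
    constructor
    · intro hgi
      rw [← hWsym] at hgi
      simpa using hgi
    · intro hgW
      rw [← hWsym]
      simpa using hgW
  have h1 : (1 : Γ) ∈ Λ := by
    simp only [hΛ, Set.mem_preimage, map_one]
    exact mem_of_mem_nhds hWnhd
  refine ⟨hΛsym, h1, ?_⟩
  -- get a small symmetric piece
  obtain ⟨V, hV, hVmul⟩ := exists_nhds_split_inv hWnhd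
  have hV'nhd : V⁻¹ ∈ nhds (1 : H) := inv_mem_nhds_one H hV
  have key : ∀ u ∈ V⁻¹, ∀ v ∈ V⁻¹, u⁻¹ * v ∈ W := by
    intro u hu v hv
    have := hVmul u⁻¹ (by simpa using hu) v⁻¹ (by simpa using hv)
    simpa [div_eq_mul_inv] using this
  -- compact set covering W * W
  have hK : IsCompact (closure W * closure W) := hWcpt.mul hWcpt
  obtain ⟨t, -, hcov⟩ := hK.elim_nhds_subcover (fun x => x • V⁻¹)
    (fun x _ => smul_mem_nhds_self.2 hV'nhd)
  -- choose preimages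
  let f : H → Γ := fun x => if h : ∃ γ : Γ, ρ γ ∈ x • V⁻¹ then h.choose else 1
  have claim : ∀ g ∈ Λ * Λ, ∃ x ∈ t, (f x)⁻¹ * g ∈ Λ := by
    intro g hg
    obtain ⟨a, ha, b, hb, rfl⟩ := hg
    have hmem : ρ (a * b) ∈ closure W * closure W := by
      rw [map_mul]
      exact Set.mul_mem_mul (subset_closure ha) (subset_closure hb)
    obtain ⟨x, hxt, hx⟩ := Set.mem_iUnion₂.1 (hcov hmem)
    refine ⟨x, hxt, ?_⟩
    have hP : ∃ γ : Γ, ρ γ ∈ x • V⁻¹ := ⟨a * b, hx⟩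
    have hfx : ρ (f x) ∈ x • V⁻¹ := by
      simp only [f, dif_pos hP]
      exact hP.choose_spec
    obtain ⟨u, hu, hux⟩ := hfx
    obtain ⟨v, hv, hvx⟩ := hx
    have : (ρ (f x))⁻¹ * ρ (a * b) ∈ W := by
      rw [← hux, ← hvx]
      simpa [mul_assoc] using key u hu v hv
    simpa [hΛ, Set.mem_preimage, map_mul, map_inv] using this
  refine ⟨(fun x => (f x)⁻¹) '' ↑t, (t.finite_toSet.image _), ?_⟩
  intro g hg
  have hginv : g⁻¹ ∈ Λ * Λ := by
    obtain ⟨a, ha, b, hb, rfl⟩ := hg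
    rw [mul_inv_rev]
    exact Set.mul_mem_mul (by rw [← hΛsym]; simpa [Set.mem_inv] using hb)
      (by rw [← hΛsym]; simpa [Set.mem_inv] using ha)
  obtain ⟨x, hxt, hx⟩ := claim g⁻¹ hginv
  refine ⟨((f x)⁻¹ * g⁻¹)⁻¹, ?_, (f x)⁻¹, ⟨x, hxt, rfl⟩, by group⟩
  rwa [← hΛsym, Set.mem_inv, inv_inv]
end

section
/- Let Γ be a countable group, let Λ ⊆ Γ be an approximate subgroup, let d̂ be a proper left-invariant metric on Γ (left-invariant with all balls finite), and let d be the restriction of d̂ to Λ. Then (Λ, d) is coarsely connected if and only if there exists a proper metric d' on Λ such that the identity map (Λ, d) → (Λ, d') is a coarse equivalence and (Λ, d') is large-scale geodesic. -/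
open Pointwise

section PathAux

variable {Γ : Type*} [Group Γ]

set_option linter.unusedSectionVars false

/-- A `c`-path of length `n` from `x` to `y` inside `Λ`. -/
def IsPathAux (Λ : Set Γ) (dh : Γ → Γ → ℝ) (c : ℝ) (x y : Γ) (n : ℕ) (p : ℕ → Γ) : Prop :=
  p 0 = x ∧ p n = y ∧ (∀ i ≤ n, p i ∈ Λ) ∧ ∀ i < n, dh (p i) (p (i + 1)) ≤ c

lemma IsPathAux.rev {Λ : Set Γ} {dh : Γ → Γ → ℝ} (dh_symm : ∀ x y : Γ, dh x y = dh y x)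
    {c : ℝ} {x y : Γ} {n : ℕ} {p : ℕ → Γ} (h : IsPathAux Λ dh c x y n p) :
    IsPathAux Λ dh c y x n (fun i => p (n - i)) := by
  obtain ⟨h0, hn, hmem, hstep⟩ := h
  refine ⟨by simpa using hn, by simpa using h0, fun i _ => hmem _ (Nat.sub_le _ _),
    fun i hi => ?_⟩
  have h1 : n - i = (n - (i + 1)) + 1 := by omega
  simp only []
  rw [h1, dh_symm]
  exact hstep _ (by omega)

lemma IsPathAux.concat {Λ : Set Γ} {dh : Γ → Γ → ℝ} {c : ℝ} {x y z : Γ} {n m : ℕ}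
    {p q : ℕ → Γ} (h1 : IsPathAux Λ dh c x y n p) (h2 : IsPathAux Λ dh c y z m q) :
    IsPathAux Λ dh c x z (n + m) (fun i => if i ≤ n then p i else q (i - n)) := by
  obtain ⟨h10, h1n, h1mem, h1step⟩ := h1
  obtain ⟨h20, h2n, h2mem, h2step⟩ := h2
  refine ⟨by simp [h10], ?_, fun i hi => ?_, fun i hi => ?_⟩
  · by_cases hm : m = 0
    · subst hm; simp [h1n, ← h20, h2n.symm]
    · simp only []
      rw [if_neg (by omega)]
      simpa using h2n
  · by_cases h : i ≤ n
    · simp only [if_pos h]; exact h1mem _ h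
    · simp only [if_neg h]; exact h2mem _ (by omega)
  · by_cases h : i + 1 ≤ n
    · simp only [if_pos h, if_pos (le_of_lt (by omega : i < n))]
      exact h1step _ (by omega)
    · by_cases h' : i ≤ n
      · have hin : i = n := by omega
        simp only [if_pos h', if_neg h]
        subst hin
        have : i + 1 - i = 1 := by omega
        rw [this, h1n, ← h20]
        exact h2step 0 (by omega)
      · simp only [if_neg h', if_neg h]
        have : i + 1 - n = (i - n) + 1 := by omega
        rw [this]
        exact h2step _ (by omega)

lemma IsPathAux.dist_le {Λ : Set Γ} {dh : Γ → Γ → ℝ}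
    (dh_self : ∀ x : Γ, dh x x = 0)
    (dh_triangle : ∀ x y z : Γ, dh x z ≤ dh x y + dh y z)
    {c : ℝ} {x y : Γ} {n : ℕ} {p : ℕ → Γ} (h : IsPathAux Λ dh c x y n p) :
    dh x y ≤ n * c := by
  obtain ⟨h0, hn, _, hstep⟩ := h
  have key : ∀ k ≤ n, dh (p 0) (p k) ≤ k * c := by
    intro k hk
    induction k with
    | zero => simp [dh_self]
    | succ k ih =>
      calc dh (p 0) (p (k + 1)) ≤ dh (p 0) (p k) + dh (p k) (p (k + 1)) := dh_triangle _ _ _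
        _ ≤ k * c + c := add_le_add (ih (by omega)) (hstep _ (by omega))
        _ = (k + 1 : ℕ) * c := by push_cast; ring
  rw [← h0, ← hn]
  exact key n le_rfl

end PathAux

/-- `dh` is a proper left-invariant metric on the countable group `Γ`, `d = dh|_{Λ×Λ}`.
The statement: `(Λ, d)` is coarsely connected iff there is a proper metric `d'` on `Λ`,
coarsely equivalent to `d` via the identity, such that `(Λ, d')` is large-scale geodesic. -/
theorem coarsely_connected_iff_large_scale_geodesic_representative {Γ : Type*} [Group Γ]
    [Countable Γ] (Λ : Set Γ) (hΛ : IsApproximateSubgroupFin Λ)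
    (dh : Γ → Γ → ℝ)
    (dh_self : ∀ x : Γ, dh x x = 0)
    (dh_eq : ∀ x y : Γ, dh x y = 0 → x = y)
    (dh_symm : ∀ x y : Γ, dh x y = dh y x)
    (dh_triangle : ∀ x y z : Γ, dh x z ≤ dh x y + dh y z)
    (dh_leftinv : ∀ g x y : Γ, dh (g * x) (g * y) = dh x y)
    (dh_proper : ∀ (x : Γ) (r : ℝ), {y : Γ | dh x y ≤ r}.Finite) :
    -- (Λ, d) is coarsely connected
    (∃ c : ℝ, 0 < c ∧ ∀ x ∈ Λ, ∀ y ∈ Λ, ∃ (n : ℕ) (p : ℕ → Γ),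
        p 0 = x ∧ p n = y ∧ (∀ i ≤ n, p i ∈ Λ) ∧ ∀ i < n, dh (p i) (p (i + 1)) ≤ c) ↔
    -- there is a proper metric d' on Λ, coarsely equivalent to d, which is large-scale geodesic
    (∃ d' : Γ → Γ → ℝ,
        (∀ x ∈ Λ, d' x x = 0) ∧
        (∀ x ∈ Λ, ∀ y ∈ Λ, d' x y = 0 → x = y) ∧
        (∀ x ∈ Λ, ∀ y ∈ Λ, d' x y = d' y x) ∧
        (∀ x ∈ Λ, ∀ y ∈ Λ, ∀ z ∈ Λ, d' x z ≤ d' x y + d' y z) ∧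
        -- d' is proper
        (∀ x ∈ Λ, ∀ r : ℝ, {y ∈ Λ | d' x y ≤ r}.Finite) ∧
        -- the identity map (Λ, d) → (Λ, d') is a coarse equivalence
        (∃ Φm Φp : ℝ → ℝ, Monotone Φm ∧ Monotone Φp ∧
            Filter.Tendsto Φm Filter.atTop Filter.atTop ∧
            ∀ x ∈ Λ, ∀ y ∈ Λ, Φm (dh x y) ≤ d' x y ∧ d' x y ≤ Φp (dh x y)) ∧
        -- (Λ, d') is large-scale geodesic
        (∃ a b c : ℝ, 0 < a ∧ 0 < b ∧ 0 < c ∧ ∀ x ∈ Λ, ∀ y ∈ Λ, ∃ n : ℕ,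
            (n : ℝ) ≤ a * d' x y + b ∧ ∃ p : ℕ → Γ,
              p 0 = x ∧ p n = y ∧ (∀ i ≤ n, p i ∈ Λ) ∧ ∀ i < n, d' (p i) (p (i + 1)) ≤ c)) := by
  have dh_nonneg : ∀ x y : Γ, 0 ≤ dh x y := by
    intro x y
    have := dh_triangle x y x
    rw [dh_self, dh_symm y x] at this
    linarith
  obtain ⟨hinv, hone, F, hFfin, hFsub⟩ := hΛ
  constructor
  · rintro ⟨c, hc, hpath⟩
    -- D : bound on dh 1 f for f ∈ F*F
    obtain ⟨D, hD0, hD⟩ : ∃ D : ℝ, 0 ≤ D ∧ ∀ f ∈ F * F, dh 1 f ≤ D := by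
      obtain ⟨b, hb⟩ := ((hFfin.mul hFfin).image (fun f => dh 1 f)).bddAbove
      exact ⟨max b 0, le_max_right _ _, fun f hf =>
        le_trans (hb (Set.mem_image_of_mem _ hf)) (le_max_left _ _)⟩
    set c' : ℝ := c + 2 * D with hc'def
    have hc' : 0 < c' := by positivity
    have hcc' : c ≤ c' := by linarith
    -- inverse membership
    have hinvmem : ∀ x ∈ Λ, x⁻¹ ∈ Λ := by
      intro x hx
      rw [← hinv]
      exact Set.inv_mem_inv.mpr hx
    -- Λ³ ⊆ Λ * (F*F)
    have hΛ3 : Λ * Λ * Λ ⊆ Λ * (F * F) := by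
      calc Λ * Λ * Λ = Λ * (Λ * Λ) := mul_assoc _ _ _
        _ ⊆ Λ * (Λ * F) := Set.mul_subset_mul_left hFsub
        _ = Λ * Λ * F := (mul_assoc _ _ _).symm
        _ ⊆ Λ * F * F := Set.mul_subset_mul_right hFsub
        _ = Λ * (F * F) := mul_assoc _ _ _
    -- approximant choice
    have hσex : ∀ z : Γ, ∃ l : Γ, z ∈ Λ * Λ * Λ → l ∈ Λ ∧ dh z l ≤ D := by
      intro z
      by_cases hz : z ∈ Λ * Λ * Λ
      · obtain ⟨l, hl, f, hf, rfl⟩ := hΛ3 hz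
        refine ⟨l, fun _ => ⟨hl, ?_⟩⟩
        calc dh (l * f) l = dh (l * f) (l * 1) := by rw [mul_one]
          _ = dh f 1 := dh_leftinv l f 1
          _ = dh 1 f := dh_symm _ _
          _ ≤ D := hD f hf
      · exact ⟨1, fun h => absurd h hz⟩
    choose σ hσ using hσex
    -- the word metric with parameter c'
    set S : Γ → Γ → Set ℕ := fun x y => {n : ℕ | ∃ p, IsPathAux Λ dh c' x y n p} with hSdef
    have hne : ∀ x ∈ Λ, ∀ y ∈ Λ, (S x y).Nonempty := by
      intro x hx y hy
      obtain ⟨n, p, h0, hn, hmem, hstep⟩ := hpath x hx y hy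
      exact ⟨n, p, h0, hn, hmem, fun i hi => le_trans (hstep i hi) hcc'⟩
    have hminmem : ∀ x ∈ Λ, ∀ y ∈ Λ, ∃ p, IsPathAux Λ dh c' x y (sInf (S x y)) p :=
      fun x hx y hy => Nat.sInf_mem (hne x hx y hy)
    have hself : ∀ x ∈ Λ, sInf (S x x) = 0 := fun x hx =>
      Nat.sInf_eq_zero.mpr (Or.inl ⟨fun _ => x, rfl, rfl, fun _ _ => hx, fun i hi => by omega⟩)
    -- the candidate metric
    refine ⟨fun x y => ((sInf (S x y) : ℕ) : ℝ), fun x hx => by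
      show ((sInf (S x x) : ℕ) : ℝ) = 0
      rw [hself x hx]; norm_num,
      ?_, ?_, ?_, ?_, ?_, ?_⟩
    · -- separation
      intro x hx y hy h0
      have h0' : sInf (S x y) = 0 := by simpa using h0
      have hmem : 0 ∈ S x y := by
        rcases Nat.sInf_eq_zero.mp h0' with h | h
        · exact h
        · exact absurd (hne x hx y hy) (by rw [h]; exact Set.not_nonempty_empty)
      obtain ⟨p, hp0, hpn, -, -⟩ := hmem
      rw [← hp0, hpn]
    · -- symmetry
      intro x hx y hy
      have key : ∀ u ∈ Λ, ∀ v ∈ Λ, sInf (S u v) ≤ sInf (S v u) := by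
        intro u hu v hv
        obtain ⟨p, hp⟩ := hminmem v hv u hu
        exact Nat.sInf_le (show sInf (S v u) ∈ S u v from ⟨_, hp.rev dh_symm⟩)
      show ((sInf (S x y) : ℕ) : ℝ) = ((sInf (S y x) : ℕ) : ℝ)
      exact_mod_cast le_antisymm (key x hx y hy) (key y hy x hx)
    · -- triangle
      intro x hx y hy z hz
      obtain ⟨p, hp⟩ := hminmem x hx y hy
      obtain ⟨q, hq⟩ := hminmem y hy z hz
      have := Nat.sInf_le (show sInf (S x y) + sInf (S y z) ∈ S x z from ⟨_, hp.concat hq⟩)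
      show ((sInf (S x z) : ℕ) : ℝ) ≤ ((sInf (S x y) : ℕ) : ℝ) + ((sInf (S y z) : ℕ) : ℝ)
      exact_mod_cast this
    · -- properness
      intro x hx r
      refine (dh_proper x (c' * max r 0)).subset ?_
      rintro y ⟨hy, hr⟩
      obtain ⟨p, hp⟩ := hminmem x hx y hy
      have h1 : dh x y ≤ ((sInf (S x y) : ℕ) : ℝ) * c' := hp.dist_le dh_self dh_triangle
      have h2 : ((sInf (S x y) : ℕ) : ℝ) ≤ max r 0 := le_trans hr (le_max_left _ _)
      calc dh x y ≤ ((sInf (S x y) : ℕ) : ℝ) * c' := h1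
        _ ≤ max r 0 * c' := by nlinarith [hc'.le]
        _ = c' * max r 0 := mul_comm _ _
    · -- coarse equivalence
      -- choose reference paths for each g ∈ Λ * Λ
      have hNex : ∀ g : Γ, ∃ n : ℕ, g ∈ Λ * Λ →
          ∃ l m : Γ, l ∈ Λ ∧ m ∈ Λ ∧ l⁻¹ * m = g ∧ ∃ p, IsPathAux Λ dh c l m n p := by
        intro g
        by_cases hg : g ∈ Λ * Λ
        · obtain ⟨a, ha, b, hb, rfl⟩ := hg
          obtain ⟨n, p, h0, hn, hmem, hstep⟩ := hpath a⁻¹ (hinvmem a ha) b hb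
          exact ⟨n, fun _ => ⟨a⁻¹, b, hinvmem a ha, hb, by simp, p, h0, hn, hmem, hstep⟩⟩
        · exact ⟨0, fun h => absurd h hg⟩
      choose N hN using hNex
      have hTfin : ∀ r : ℝ, {g ∈ Λ * Λ | dh 1 g ≤ r}.Finite :=
        fun r => (dh_proper 1 r).subset (fun g hg => hg.2)
      refine ⟨fun t => t / c', fun t => (((hTfin (max t 0)).toFinset.sup N : ℕ) : ℝ),
        fun s t hst => by dsimp only; gcongr, ?_, ?_, ?_⟩
      · -- monotone Φp
        intro s t hst
        dsimp only
        have hsub : (hTfin (max s 0)).toFinset ⊆ (hTfin (max t 0)).toFinset := by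
          rw [Set.Finite.toFinset_subset_toFinset]
          rintro g ⟨hg1, hg2⟩
          exact ⟨hg1, le_trans hg2 (max_le_max hst le_rfl)⟩
        exact_mod_cast Finset.sup_mono hsub
      · -- tendsto
        exact Filter.tendsto_id.atTop_div_const hc'
      · -- the two bounds
        intro x hx y hy
        constructor
        · -- lower bound
          obtain ⟨p, hp⟩ := hminmem x hx y hy
          have h1 : dh x y ≤ ((sInf (S x y) : ℕ) : ℝ) * c' := hp.dist_le dh_self dh_triangle
          show dh x y / c' ≤ ((sInf (S x y) : ℕ) : ℝ)
          rw [div_le_iff₀ hc']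
          linarith
        · -- upper bound
          set g : Γ := x⁻¹ * y with hgdef
          have hgmem : g ∈ Λ * Λ := Set.mul_mem_mul (hinvmem x hx) hy
          have hdg : dh 1 g = dh x y := by
            have h := dh_leftinv x 1 (x⁻¹ * y)
            rw [mul_one, ← mul_assoc, mul_inv_cancel, one_mul] at h
            exact h.symm
          have hgT : g ∈ (hTfin (max (dh x y) 0)).toFinset := by
            rw [Set.Finite.mem_toFinset]
            exact ⟨hgmem, by rw [hdg]; exact le_max_left _ _⟩
          have hsup : N g ≤ (hTfin (max (dh x y) 0)).toFinset.sup N :=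
            Finset.le_sup hgT
          -- it remains to show sInf (S x y) ≤ N g
          have hkey : sInf (S x y) ≤ N g := by
            obtain ⟨l, m, hl, hm, hlm, p, hp⟩ := hN g hgmem
            obtain ⟨hp0, hpn, hpmem, hpstep⟩ := hp
            by_cases hn0 : N g = 0
            · have hlm' : l = m := by rw [← hp0, ← hpn, hn0]
              have hxy : x = y := by
                have h1 : x⁻¹ * y = 1 := by rw [← hgdef, ← hlm, hlm', inv_mul_cancel]
                exact inv_mul_eq_one.mp h1
              rw [hxy, hself y hy]
              exact Nat.zero_le _
            · -- transport the path
              set q : ℕ → Γ := fun i =>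
                if i = 0 then x else if N g ≤ i then y else σ (x * l⁻¹ * p i) with hqdef
              have hmid : ∀ i ≤ N g, x * l⁻¹ * p i ∈ Λ * Λ * Λ := fun i hi =>
                Set.mul_mem_mul (Set.mul_mem_mul hx (hinvmem l hl)) (hpmem i hi)
              have hmn : x * l⁻¹ * p (N g) = y := by
                rw [hpn, mul_assoc, hlm, hgdef, ← mul_assoc, mul_inv_cancel, one_mul]
              have hm0 : x * l⁻¹ * p 0 = x := by
                rw [hp0, mul_assoc, inv_mul_cancel, mul_one]
              have hnear : ∀ i ≤ N g, dh (q i) (x * l⁻¹ * p i) ≤ D := by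
                intro i hi
                by_cases hi0 : i = 0
                · subst hi0
                  simp only [hqdef, if_pos rfl, hm0, dh_self]
                  exact hD0
                · by_cases hiN : N g ≤ i
                  · have hiN' : i = N g := le_antisymm hi hiN
                    subst hiN'
                    simp only [hqdef, if_neg hi0, if_pos le_rfl, hmn, dh_self]
                    exact hD0
                  · simp only [hqdef, if_neg hi0, if_neg hiN]
                    rw [dh_symm]
                    exact (hσ _ (hmid i hi)).2
              have hqpath : IsPathAux Λ dh c' x y (N g) q := by
                refine ⟨by simp [hqdef], by simp [hqdef, hn0], fun i hi => ?_, fun i hi => ?_⟩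
                · by_cases hi0 : i = 0
                  · subst hi0; simpa [hqdef] using hx
                  · by_cases hiN : N g ≤ i
                    · simpa [hqdef, hi0, hiN] using hy
                    · simp only [hqdef, if_neg hi0, if_neg hiN]
                      exact (hσ _ (hmid i hi)).1
                · have hstep : dh (x * l⁻¹ * p i) (x * l⁻¹ * p (i + 1)) ≤ c := by
                    have := dh_leftinv (x * l⁻¹) (p i) (p (i + 1))
                    rw [mul_assoc, mul_assoc] at this
                    rw [mul_assoc, mul_assoc, this]
                    exact hpstep i hi
                  calc dh (q i) (q (i + 1))
                      ≤ dh (q i) (x * l⁻¹ * p i) + dh (x * l⁻¹ * p i) (q (i + 1)) :=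
                        dh_triangle _ _ _
                    _ ≤ dh (q i) (x * l⁻¹ * p i) + (dh (x * l⁻¹ * p i) (x * l⁻¹ * p (i + 1))
                        + dh (x * l⁻¹ * p (i + 1)) (q (i + 1))) := by
                        gcongr; exact dh_triangle _ _ _
                    _ ≤ D + (c + D) := by
                        gcongr
                        · exact hnear i hi.le
                        · rw [dh_symm]; exact hnear (i + 1) hi
                    _ = c' := by rw [hc'def]; ring
              exact Nat.sInf_le (show N g ∈ S x y from ⟨q, hqpath⟩)
          show ((sInf (S x y) : ℕ) : ℝ) ≤
            (((hTfin (max (dh x y) 0)).toFinset.sup N : ℕ) : ℝ)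
          exact_mod_cast le_trans hkey hsup
    · -- large-scale geodesic
      refine ⟨1, 1, 1, one_pos, one_pos, one_pos, fun x hx y hy => ?_⟩
      obtain ⟨p, hp⟩ := hminmem x hx y hy
      obtain ⟨hp0, hpn, hpmem, hpstep⟩ := hp
      refine ⟨sInf (S x y), by
        show ((sInf (S x y) : ℕ) : ℝ) ≤ 1 * ((sInf (S x y) : ℕ) : ℝ) + 1
        linarith [(Nat.cast_nonneg (sInf (S x y)) : (0:ℝ) ≤ _)],
        p, hp0, hpn, hpmem, fun i hi => ?_⟩
      have h1 : 1 ∈ S (p i) (p (i + 1)) := by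
        refine ⟨fun j => if j = 0 then p i else p (i + 1), by norm_num, by norm_num,
          fun j hj => ?_, fun j hj => ?_⟩
        · by_cases hj0 : j = 0
          · simp only [hj0, if_pos rfl]; exact hpmem i hi.le
          · simp only [if_neg hj0]; exact hpmem (i + 1) hi
        · have hj0 : j = 0 := by omega
          subst hj0
          simpa using hpstep i hi
      have := Nat.sInf_le (show 1 ∈ S (p i) (p (i + 1)) from h1)
      show ((sInf (S (p i) (p (i + 1))) : ℕ) : ℝ) ≤ 1
      exact_mod_cast this
  · rintro ⟨d', _, _, _, _, _, ⟨Φm, Φp, hΦmmono, _, hΦmtop, hcomp⟩, a, b, c'', ha, hb, hc'', hls⟩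
    -- pick T such that Φm t ≥ c'' + 1 for t ≥ T
    obtain ⟨T, hT⟩ := (hΦmtop.eventually_ge_atTop (c'' + 1)).exists_forall_of_atTop
    refine ⟨max T 1, lt_of_lt_of_le one_pos (le_max_right _ _), fun x hx y hy => ?_⟩
    obtain ⟨n, _, p, hp0, hpn, hpmem, hpstep⟩ := hls x hx y hy
    refine ⟨n, p, hp0, hpn, hpmem, fun i hi => ?_⟩
    by_contra hlt
    push_neg at hlt
    have h1 : T ≤ dh (p i) (p (i + 1)) := le_trans (le_max_left _ _) hlt.le
    have h2 := hT _ h1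
    have h3 := (hcomp _ (hpmem i hi.le) _ (hpmem (i + 1) hi)).1
    have h4 := hpstep i hi
    linarith
end

section
/- Let (Λ, Λ^∞) be an approximate group, let (X, d) be a coarsely connected proper pseudo-metric space with basepoint x₀, and let ρ : Λ^∞ → (X → X) be a quasi-isometric quasi-action of (Λ, Λ^∞) on X. (i) If ρ is cobounded, i.e. the quasi-orbit {ρ(λ)(x₀) : λ ∈ Λ} is relatively dense in X, then there exists R > 0 such that the set F := {μ ∈ Λ² : B(x₀, R) ∩ ρ(μ)(B(x₀, R)) ≠ ∅} generates the group Λ^∞. (ii) If moreover ρ is proper, i.e. for every R > 0 the set {λ ∈ Λ : B(x₀, R) ∩ ρ(λ)(B(x₀, R)) ≠ ∅} is finite, then Λ^∞ is a finitely generated group. -/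
open Pointwise

/-- Milnor–Schwarz lemma for approximate groups, parts (i) and (ii).

`X` is a coarsely connected proper pseudo-metric space with basepoint `x₀`, and
`ρ` is a `(K_k, C_k, C_k')`-quasi-isometric quasi-action of the approximate group
`(Λ, Λ^∞)` on `X` (hypotheses `hqi`, `hcomp`) which is cobounded (`hcob`).

Conclusion (i): there is `R > 0` such that
`F = {μ ∈ Λ² : B(x₀,R) ∩ ρ(μ)(B(x₀,R)) ≠ ∅}` generates the group `Λ^∞`.
Conclusion (ii): if moreover `ρ` is proper then `Λ^∞` is finitely generated. -/
theorem milnor_schwarz_finite_generation {G X : Type*} [Group G] [PseudoMetricSpace X]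
    [ProperSpace X]
    (hcc : ∃ c : ℝ, 0 < c ∧ ∀ x y : X, ∃ (n : ℕ) (p : ℕ → X),
        p 0 = x ∧ p n = y ∧ ∀ i < n, dist (p i) (p (i + 1)) ≤ c)
    (Λ : Set G) (hΛ : IsApproximateSubgroup' Λ)
    (x₀ : X) (ρ : G → X → X) (K C C' : ℕ → ℝ)
    (hK : ∀ k : ℕ, 1 ≤ K k) (hC : ∀ k : ℕ, 0 ≤ C k) (hC' : ∀ k : ℕ, 0 ≤ C' k)
    -- each ρ(λ), λ ∈ Λ^k, is a (K_k, C_k, C_k')-quasi-isometry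
    (hqi : ∀ k : ℕ, 1 ≤ k → ∀ g ∈ Λ ^ k,
        (∀ x y : X, (K k)⁻¹ * dist x y - C k ≤ dist (ρ g x) (ρ g y) ∧
            dist (ρ g x) (ρ g y) ≤ K k * dist x y + C k) ∧
        ∀ y : X, ∃ x : X, dist y (ρ g x) ≤ C' k)
    -- ρ is multiplicative up to error C_k' on Λ^k
    (hcomp : ∀ k : ℕ, 1 ≤ k → ∀ g ∈ Λ ^ k, ∀ h ∈ Λ ^ k, ∀ x : X,
        dist (ρ g (ρ h x)) (ρ (g * h) x) < C' k)
    -- ρ is cobounded: the quasi-orbit of x₀ is relatively dense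
    (hcob : ∃ D : ℝ, ∀ x : X, ∃ g ∈ Λ, dist x (ρ g x₀) ≤ D) :
    (∃ R : ℝ, 0 < R ∧
        Subgroup.closure {μ : G | μ ∈ Λ ^ 2 ∧ ∃ y : X, dist y x₀ < R ∧ dist (ρ μ y) x₀ < R} =
          Subgroup.closure Λ) ∧
    ((∀ R : ℝ, 0 < R →
        {g : G | g ∈ Λ ∧ ∃ y : X, dist y x₀ < R ∧ dist (ρ g y) x₀ < R}.Finite) →
      (Subgroup.closure Λ).FG) := by
  classical
  obtain ⟨hinv, hone, F₀, hF₀fin, hF₀⟩ := hΛ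
  obtain ⟨c, hc, hchain⟩ := hcc
  obtain ⟨D, hD⟩ := hcob
  have hK1 := hK 1; have hC1 := hC 1; have hC'1 := hC' 1
  have hK1pos : (0:ℝ) < K 1 := lt_of_lt_of_le one_pos hK1
  have hΛ1 : Λ ^ 1 = Λ := pow_one Λ
  have hinvmem : ∀ a ∈ Λ, a⁻¹ ∈ Λ := by
    intro a ha; rw [← hinv]; exact Set.inv_mem_inv.mpr ha
  have hpow2 : Λ ^ 2 = Λ * Λ := sq Λ
  have h1mem : (1:G) ∈ Λ ^ 1 := by rw [hΛ1]; exact hone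
  -- ρ 1 moves points at most A₀
  have hρ1 : ∀ x : X, dist (ρ 1 x) x ≤ K 1 * (C 1 + C' 1) := by
    intro x
    have hlow := ((hqi 1 le_rfl 1 h1mem).1 (ρ 1 x) x).1
    have hcomp1 := hcomp 1 le_rfl 1 h1mem 1 h1mem x
    rw [one_mul] at hcomp1
    have h2 : (K 1)⁻¹ * dist (ρ 1 x) x ≤ C 1 + C' 1 := by linarith
    have h3 := mul_le_mul_of_nonneg_left h2 hK1pos.le
    rwa [← mul_assoc, mul_inv_cancel₀ hK1pos.ne', one_mul] at h3
  set A₀ : ℝ := K 1 * (C 1 + C' 1) with hA₀def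
  have hA₀ : 0 ≤ A₀ := mul_nonneg hK1pos.le (by linarith)
  set D' : ℝ := max D A₀ with hD'def
  have hD'0 : 0 ≤ D' := le_trans hA₀ (le_max_right _ _)
  have hD' : ∀ x : X, ∃ g ∈ Λ, dist x (ρ g x₀) ≤ D' := by
    intro x
    obtain ⟨g, hg, hd⟩ := hD x
    exact ⟨g, hg, le_trans hd (le_max_left _ _)⟩
  set R : ℝ := 2 * C' 1 + (K 1 * (2 * D' + c) + C 1) + A₀ + 1 with hRdef
  have hRpos : 0 < R := by
    have h0 : 0 ≤ K 1 * (2 * D' + c) := mul_nonneg hK1pos.le (by linarith)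
    rw [hRdef]; linarith
  set Fs : Set G :=
    {μ : G | μ ∈ Λ ^ 2 ∧ ∃ y : X, dist y x₀ < R ∧ dist (ρ μ y) x₀ < R} with hFs
  have key : Subgroup.closure Fs = Subgroup.closure Λ := by
    apply le_antisymm
    · rw [Subgroup.closure_le]
      intro μ hμ
      obtain ⟨hμ2, -⟩ := hμ
      rw [hpow2, Set.mem_mul] at hμ2
      obtain ⟨a, ha, b, hb, rfl⟩ := hμ2
      exact mul_mem (Subgroup.subset_closure ha) (Subgroup.subset_closure hb)
    · rw [Subgroup.closure_le]
      intro a ha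
      obtain ⟨n, p, hp0, hpn, hstep⟩ := hchain x₀ (ρ a x₀)
      set q : ℕ → X := fun i => if i ≤ n then p i else p n with hq
      have hq0 : q 0 = x₀ := by simp [hq, hp0]
      have hqstep : ∀ i < n + 1, dist (q i) (q (i + 1)) ≤ c := by
        intro i hi
        rcases lt_or_eq_of_le (Nat.lt_succ_iff.mp hi) with h | h
        · have h1 : i ≤ n := le_of_lt h
          have h2 : i + 1 ≤ n := h
          simp only [hq, if_pos h1, if_pos h2]
          exact hstep i h
        · subst h
          have h2 : ¬ (i + 1 ≤ i) := by omega
          simp [hq, h2, hc.le]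
      set m : ℕ := n + 1 with hm
      have hqm : q m = ρ a x₀ := by
        have h2 : ¬ (n + 1 ≤ n) := by omega
        simp [hq, hm, h2, hpn]
      set g : ℕ → G := fun i =>
        if i = 0 then 1 else if m ≤ i then a else Classical.choose (hD' (q i)) with hgdef
      have hg : ∀ i ≤ m, g i ∈ Λ ∧ dist (q i) (ρ (g i) x₀) ≤ D' := by
        intro i hi
        rcases Nat.eq_zero_or_pos i with h0 | h0
        · subst h0
          refine ⟨by simp [hgdef, hone], ?_⟩
          have hg0 : g 0 = 1 := by simp [hgdef]
          rw [hg0, hq0, dist_comm]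
          exact le_trans (hρ1 x₀) (le_max_right _ _)
        · rcases eq_or_lt_of_le hi with h1 | h1
          · have hne : i ≠ 0 := by omega
            have hle : m ≤ i := le_of_eq h1.symm
            have hgi : g i = a := by simp [hgdef, hne, hle]
            rw [hgi, h1, hqm, dist_self]
            exact ⟨ha, hD'0⟩
          · have hne : i ≠ 0 := by omega
            have hnm : ¬ m ≤ i := not_le.mpr h1
            have hgi : g i = Classical.choose (hD' (q i)) := by simp [hgdef, hne, hnm]
            obtain ⟨hmem, hdist⟩ := Classical.choose_spec (hD' (q i))
            rw [hgi]
            exact ⟨hmem, hdist⟩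
      have hμmem : ∀ i < m, (g i)⁻¹ * g (i + 1) ∈ Fs := by
        intro i hi
        obtain ⟨hgi, hdi⟩ := hg i (le_of_lt hi)
        obtain ⟨hgi1, hdi1⟩ := hg (i + 1) (Nat.succ_le_of_lt hi)
        have hstep' : dist (ρ (g (i + 1)) x₀) (ρ (g i) x₀) ≤ 2 * D' + c := by
          have t := dist_triangle4 (ρ (g (i + 1)) x₀) (q (i + 1)) (q i) (ρ (g i) x₀)
          have h1 := hqstep i hi
          have h2 : dist (ρ (g (i + 1)) x₀) (q (i + 1)) = dist (q (i + 1)) (ρ (g (i + 1)) x₀) :=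
            dist_comm _ _
          have h3 : dist (q (i + 1)) (q i) = dist (q i) (q (i + 1)) := dist_comm _ _
          linarith
        have hgiΛ1 : (g i)⁻¹ ∈ Λ ^ 1 := by rw [hΛ1]; exact hinvmem _ hgi
        have hgi1Λ1 : g (i + 1) ∈ Λ ^ 1 := by rw [hΛ1]; exact hgi1
        have hgiΛ1' : g i ∈ Λ ^ 1 := by rw [hΛ1]; exact hgi
        have e1 := hcomp 1 le_rfl (g i)⁻¹ hgiΛ1 (g (i + 1)) hgi1Λ1 x₀
        have e2 := ((hqi 1 le_rfl _ hgiΛ1).1 (ρ (g (i + 1)) x₀) (ρ (g i) x₀)).2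
        have e3 := hcomp 1 le_rfl (g i)⁻¹ hgiΛ1 (g i) hgiΛ1' x₀
        rw [inv_mul_cancel] at e3
        have e4 := hρ1 x₀
        have e2' : dist (ρ (g i)⁻¹ (ρ (g (i + 1)) x₀)) (ρ (g i)⁻¹ (ρ (g i) x₀)) ≤
            K 1 * (2 * D' + c) + C 1 := by
          have := mul_le_mul_of_nonneg_left hstep' hK1pos.le
          linarith
        refine ⟨?_, x₀, by simpa using hRpos, ?_⟩
        · rw [hpow2]
          exact Set.mul_mem_mul (hinvmem _ hgi) hgi1
        · have t1 := dist_triangle4 (ρ ((g i)⁻¹ * g (i + 1)) x₀)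
            (ρ (g i)⁻¹ (ρ (g (i + 1)) x₀)) (ρ (g i)⁻¹ (ρ (g i) x₀)) (ρ 1 x₀)
          have t2 := dist_triangle (ρ ((g i)⁻¹ * g (i + 1)) x₀) (ρ 1 x₀) x₀
          have e1' : dist (ρ ((g i)⁻¹ * g (i + 1)) x₀) (ρ (g i)⁻¹ (ρ (g (i + 1)) x₀)) =
              dist (ρ (g i)⁻¹ (ρ (g (i + 1)) x₀)) (ρ ((g i)⁻¹ * g (i + 1)) x₀) := dist_comm _ _
          rw [hRdef]
          linarith
      have hclos : ∀ i, i ≤ m → g i ∈ Subgroup.closure Fs := by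
        intro i
        induction i with
        | zero =>
          intro _
          have hg0 : g 0 = 1 := by simp [hgdef]
          rw [hg0]
          exact one_mem _
        | succ j ih =>
          intro hj
          have hjm : j < m := Nat.lt_of_succ_le hj
          have heq : g (j + 1) = g j * ((g j)⁻¹ * g (j + 1)) := by group
          rw [heq]
          exact mul_mem (ih hjm.le) (Subgroup.subset_closure (hμmem j hjm))
      have hgm : g m = a := by
        have hne : m ≠ 0 := by omega
        simp [hgdef, hne]
      rw [← hgm]
      exact hclos m le_rfl
  refine ⟨⟨R, hRpos, key⟩, ?_⟩
  intro hproper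
  -- part (ii)
  have hK3 := hK 3; have hC3 := hC 3; have hC'3 := hC' 3
  have hK3pos : (0:ℝ) < K 3 := lt_of_lt_of_le one_pos hK3
  have hpow3 : Λ ^ 3 = Λ * Λ * Λ := by rw [pow_succ, sq]
  have h23 : Λ ^ 2 ⊆ Λ ^ 3 := by
    rw [hpow2, hpow3]
    intro x hx
    simpa using Set.mul_mem_mul hx hone
  set F₁ : Set G := F₀ ∩ Λ ^ 3 with hF₁
  have hF₁fin : F₁.Finite := hF₀fin.inter_of_left _
  have hcov : Λ ^ 2 ⊆ Λ * F₁ := by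
    intro μ hμ
    have hμ' : μ ∈ Λ * Λ := hpow2 ▸ hμ
    obtain ⟨b, hb, f, hf, hbf⟩ := Set.mem_mul.mp (hF₀ hμ')
    refine Set.mem_mul.mpr ⟨b, hb, f, ⟨hf, ?_⟩, hbf⟩
    have hfeq : f = b⁻¹ * μ := by rw [← hbf]; group
    rw [hfeq, hpow3, mul_assoc]
    exact Set.mul_mem_mul (hinvmem _ hb) hμ'
  have hinv3 : ∀ x ∈ Λ ^ 3, x⁻¹ ∈ Λ ^ 3 := by
    intro x hx
    rw [hpow3] at hx ⊢
    obtain ⟨y, hy, z, hz, rfl⟩ := Set.mem_mul.mp hx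
    obtain ⟨u, hu, v, hv, rfl⟩ := Set.mem_mul.mp hy
    have heq : (u * v * z)⁻¹ = z⁻¹ * v⁻¹ * u⁻¹ := by group
    rw [heq]
    exact Set.mul_mem_mul (Set.mul_mem_mul (hinvmem _ hz) (hinvmem _ hv)) (hinvmem _ hu)
  obtain ⟨M, hM0, hM⟩ : ∃ M : ℝ, 0 ≤ M ∧ ∀ f ∈ F₁, dist x₀ (ρ f⁻¹ x₀) ≤ M := by
    obtain ⟨M₀, hM₀⟩ := (hF₁fin.image (fun f => dist x₀ (ρ f⁻¹ x₀))).bddAbove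
    exact ⟨max M₀ 0, le_max_right _ _,
      fun f hf => le_trans (hM₀ (Set.mem_image_of_mem _ hf)) (le_max_left _ _)⟩
  set R' : ℝ :=
    max (K 3 * (C' 3 + R + M + C 3)) (C' 3 + (K 3 * C' 3 + C 3) + R) + 1 with hR'def
  have hB1 : K 3 * (C' 3 + R + M + C 3) ≤ R' - 1 := by
    rw [hR'def]; simp [le_max_left]
  have hB2 : C' 3 + (K 3 * C' 3 + C 3) + R ≤ R' - 1 := by
    rw [hR'def]; simp [le_max_right]
  have hR'pos : 0 < R' := by
    have h0 : 0 ≤ K 3 * (C' 3 + R + M + C 3) :=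
      mul_nonneg hK3pos.le (by linarith)
    have := le_max_left (K 3 * (C' 3 + R + M + C 3)) (C' 3 + (K 3 * C' 3 + C 3) + R)
    rw [hR'def]; linarith
  have hSfin : {g : G | g ∈ Λ ∧ ∃ y : X, dist y x₀ < R' ∧ dist (ρ g y) x₀ < R'}.Finite :=
    hproper R' hR'pos
  have hsub : Fs ⊆ {g : G | g ∈ Λ ∧ ∃ y : X, dist y x₀ < R' ∧ dist (ρ g y) x₀ < R'} * F₁ := by
    intro μ hμ
    obtain ⟨hμ2, y, hy, hρy⟩ := hμ
    obtain ⟨b, hbΛ, f, hfF₁, hbf⟩ := Set.mem_mul.mp (hcov hμ2)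
    have hf3 : f ∈ Λ ^ 3 := hfF₁.2
    have hfi3 : f⁻¹ ∈ Λ ^ 3 := hinv3 f hf3
    obtain ⟨x, hx⟩ := (hqi 3 (by norm_num) f⁻¹ hfi3).2 y
    have hlow := ((hqi 3 (by norm_num) f⁻¹ hfi3).1 x x₀).1
    have htri : dist (ρ f⁻¹ x) (ρ f⁻¹ x₀) ≤ C' 3 + R + M := by
      have t := dist_triangle4 (ρ f⁻¹ x) y x₀ (ρ f⁻¹ x₀)
      have h2 : dist (ρ f⁻¹ x) y = dist y (ρ f⁻¹ x) := dist_comm _ _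
      have h3 : dist x₀ (ρ f⁻¹ x₀) ≤ M := hM f hfF₁
      linarith
    have hxx₀ : dist x x₀ ≤ K 3 * (C' 3 + R + M + C 3) := by
      have h2 : (K 3)⁻¹ * dist x x₀ ≤ C' 3 + R + M + C 3 := by linarith
      have h3 := mul_le_mul_of_nonneg_left h2 hK3pos.le
      rwa [← mul_assoc, mul_inv_cancel₀ hK3pos.ne', one_mul] at h3
    have hμ3 : μ ∈ Λ ^ 3 := h23 hμ2
    have ecomp := hcomp 3 (by norm_num) μ hμ3 f⁻¹ hfi3 x
    have hb_eq : μ * f⁻¹ = b := by rw [← hbf]; group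
    rw [hb_eq] at ecomp
    have eup := ((hqi 3 (by norm_num) μ hμ3).1 (ρ f⁻¹ x) y).2
    have e2 : dist (ρ μ (ρ f⁻¹ x)) (ρ μ y) ≤ K 3 * C' 3 + C 3 := by
      have hd : dist (ρ f⁻¹ x) y ≤ C' 3 := by rw [dist_comm]; exact hx
      have := mul_le_mul_of_nonneg_left hd hK3pos.le
      linarith
    have hbx : dist (ρ b x) x₀ ≤ C' 3 + (K 3 * C' 3 + C 3) + R := by
      have t := dist_triangle4 (ρ b x) (ρ μ (ρ f⁻¹ x)) (ρ μ y) x₀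
      have h2 : dist (ρ b x) (ρ μ (ρ f⁻¹ x)) = dist (ρ μ (ρ f⁻¹ x)) (ρ b x) := dist_comm _ _
      linarith
    exact Set.mem_mul.mpr ⟨b, ⟨hbΛ, x, by linarith, by linarith⟩, f, hfF₁, hbf⟩
  have hFsfin : Fs.Finite := (hSfin.mul hF₁fin).subset hsub
  rw [← key]
  exact (Subgroup.fg_iff _).mpr ⟨Fs, rfl, hFsfin⟩
end

section
/- Every unbounded, proper, geodesic, Gromov hyperbolic, quasi-cobounded metric space X is visual: for every basepoint o ∈ X there exists a constant D > 0 such that every point x ∈ X has distance at most D from the image of some geodesic ray emanating from o. -/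
open Filter Metric Set

noncomputable section
namespace QCVis
variable {X : Type*} [MetricSpace X]


/-- Gromov product of `a, b` seen from `w`. -/
def gp (a b w : X) : ℝ := (dist w a + dist w b - dist a b) / 2

lemma gp_nonneg (a b w : X) : 0 ≤ gp a b w := by
  have h := dist_triangle a w b
  unfold gp
  rw [dist_comm a w] at h
  linarith

lemma gp_le_left (a b w : X) : gp a b w ≤ dist w a := by
  have h := dist_triangle w a b  -- dist w b ≤ dist w a + dist a b
  have h2 := dist_triangle w b a
  unfold gp
  have := dist_comm a b
  nlinarith [dist_triangle w a b]

lemma gp_comm (a b w : X) : gp a b w = gp b a w := by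
  unfold gp; rw [dist_comm a b]; ring

lemma gp_le_right (a b w : X) : gp a b w ≤ dist w b := by
  rw [gp_comm]; exact gp_le_left b a w

lemma gp_lipschitz (a b w p : X) : gp a b w ≤ gp a b p + dist w p := by
  have h1 := dist_triangle w p a
  have h2 := dist_triangle w p b
  unfold gp
  have e1 := dist_comm p a
  have e2 := dist_comm p b
  linarith

lemma gp_add (x y o : X) : gp x y o + gp o y x = dist o x := by
  unfold gp
  rw [dist_comm x o, dist_comm x y]
  ring

lemma gp_min_le (a b w : X) (h : gp a b w ≤ ρ) :
    min (dist w a) (dist w b) ≤ ρ + dist a b / 2 := by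
  rcases le_total (dist w a) (dist w b) with hc | hc
  · rw [min_eq_left hc]; unfold gp at h; linarith
  · rw [min_eq_right hc]; unfold gp at h; linarith


lemma dyadic (δ : ℝ) (hδ : 0 ≤ δ)
    (hyp4 : ∀ a b c w : X, min (gp a c w) (gp b c w) - δ ≤ gp a b w) :
    ∀ (k : ℕ) (w : ℕ → X) (a b : ℕ) (p : X) (ρ : ℝ), a < b → b - a ≤ 2^k →
      gp (w a) (w b) p ≤ ρ → ∃ i, a ≤ i ∧ i < b ∧ gp (w i) (w (i+1)) p ≤ ρ + k * δ := by
  intro k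
  induction k with
  | zero =>
    intro w a b p ρ hab hle h
    have hb : b = a + 1 := by omega
    subst hb
    exact ⟨a, le_refl _, by omega, by simpa using h⟩
  | succ k IH =>
    intro w a b p ρ hab hle h
    by_cases hb : b = a + 1
    · subst hb
      refine ⟨a, le_refl _, by omega, ?_⟩
      have : (0:ℝ) ≤ (k+1 : ℕ) * δ := by positivity
      push_cast at this ⊢
      linarith
    · set m := (a + b) / 2 with hm
      have h1 : a < m := by omega
      have h2 : m < b := by omega
      have hp : (2:ℕ)^(k+1) = 2 * 2^k := by ring
      have h3 : m - a ≤ 2^k := by omega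
      have h4 : b - m ≤ 2^k := by omega
      have hmin := hyp4 (w a) (w b) (w m) p
      have hcase : gp (w a) (w m) p ≤ ρ + δ ∨ gp (w b) (w m) p ≤ ρ + δ := by
        rcases le_total (gp (w a) (w m) p) (gp (w b) (w m) p) with hc | hc
        · left; rw [min_eq_left hc] at hmin; linarith
        · right; rw [min_eq_right hc] at hmin; linarith
      rcases hcase with hc | hc
      · obtain ⟨i, hi1, hi2, hi3⟩ := IH w a m p (ρ + δ) h1 h3 hc
        refine ⟨i, hi1, by omega, ?_⟩
        push_cast at hi3 ⊢
        linarith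
      · rw [gp_comm] at hc
        obtain ⟨i, hi1, hi2, hi3⟩ := IH w m b p (ρ + δ) h2 h4 hc
        refine ⟨i, by omega, hi2, ?_⟩
        push_cast at hi3 ⊢
        linarith

def morseD (δ K C₁ : ℝ) : ℝ :=
  K + C₁ + 1 + (4*δ*Real.sqrt (6*K + (2+C₁)*K + 2) / Real.log 2)^2 + 4*δ + 3

set_option maxHeartbeats 2000000 in
lemma part1 (δ K C₁ : ℝ) (hδ : 0 ≤ δ) (hK : 1 ≤ K) (hC : 0 ≤ C₁)
    (hyp4 : ∀ a b c w : X, min (gp a c w) (gp b c w) - δ ≤ gp a b w)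
    (z : ℕ → X) (N : ℕ)
    (hzu : ∀ i j, i ≤ N → j ≤ N → dist (z i) (z j) ≤ K * |(i:ℝ) - (j:ℝ)| + C₁)
    (hzl : ∀ i j, i ≤ N → j ≤ N → K⁻¹ * |(i:ℝ) - (j:ℝ)| - C₁ ≤ dist (z i) (z j))
    (γ : ℝ → X) (L : ℝ) (hL0 : 0 ≤ L)
    (hγ0 : γ 0 = z 0) (hγL : γ L = z N)
    (hiso : ∀ s ∈ Icc (0:ℝ) L, ∀ t ∈ Icc (0:ℝ) L, dist (γ s) (γ t) = |s - t|) :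
    ∀ s ∈ Icc (0:ℝ) L, infDist (γ s) (z '' Iic N) ≤ morseD δ K C₁ := by
  have hKpos : (0:ℝ) < K := lt_of_lt_of_le one_pos hK
  set S := z '' Iic N with hS
  have hSne : S.Nonempty := ⟨z 0, ⟨0, by simp, rfl⟩⟩
  have hfarle : ∀ s ∈ Icc (0:ℝ) L, ∀ i ≤ N, infDist (γ s) S ≤ dist (γ s) (z i) := by
    intro s hs i hi
    exact infDist_le_dist_of_mem ⟨i, hi, rfl⟩
  -- continuity of s ↦ infDist (γ s) S on Icc
  have hcont : ContinuousOn (fun s => infDist (γ s) S) (Icc 0 L) := by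
    apply LipschitzOnWith.continuousOn (K := 1)
    rw [lipschitzOnWith_iff_dist_le_mul]
    intro s hs t ht
    have hd : dist (γ s) (γ t) = |s - t| := hiso s hs t ht
    have h1 := infDist_le_infDist_add_dist (s := S) (x := γ s) (y := γ t)
    have h2 := infDist_le_infDist_add_dist (s := S) (x := γ t) (y := γ s)
    rw [hd] at h1
    rw [dist_comm (γ t) (γ s), hd] at h2
    rw [NNReal.coe_one, one_mul, Real.dist_eq, Real.dist_eq, abs_le]
    constructor <;> linarith
  obtain ⟨s₀, hs₀mem, hmax'⟩ := isCompact_Icc.exists_isMaxOn ⟨0, left_mem_Icc.2 hL0⟩ hcont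
  set D := infDist (γ s₀) S with hDdef
  have hmax : ∀ s ∈ Icc (0:ℝ) L, infDist (γ s) S ≤ D := fun s hs => hmax' hs
  have hD0 : (0:ℝ) ≤ D := infDist_nonneg
  suffices hDb : D ≤ morseD δ K C₁ by
    intro s hs; exact (hmax s hs).trans hDb
  have hmorse_ge : K + C₁ + 1 ≤ morseD δ K C₁ := by
    have h1 : (0:ℝ) ≤ (4*δ*Real.sqrt (6*K + (2+C₁)*K + 2) / Real.log 2)^2 := sq_nonneg _
    unfold morseD; linarith
  by_cases hbig : D ≤ K + C₁
  · linarith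
  push_neg at hbig
  have hfar : ∀ i ≤ N, D ≤ dist (γ s₀) (z i) := by
    intro i hi; exact infDist_le_dist_of_mem ⟨i, hi, rfl⟩
  set s₁ := max (s₀ - 2*D) 0 with hs₁def
  set s₂ := min (s₀ + 2*D) L with hs₂def
  have hs₁mem : s₁ ∈ Icc (0:ℝ) L := ⟨le_max_right _ _, max_le (by linarith [hs₀mem.2]) hL0⟩
  have hs₂mem : s₂ ∈ Icc (0:ℝ) L := ⟨le_min (by linarith [hs₀mem.1]) hL0, min_le_right _ _⟩
  have hs₁le : s₁ ≤ s₀ := max_le (by linarith) hs₀mem.1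
  have hs₀le : s₀ ≤ s₂ := le_min (by linarith) hs₀mem.2
  have hs₁ge : s₀ - 2*D ≤ s₁ := le_max_left _ _
  have hs₂le : s₂ ≤ s₀ + 2*D := min_le_left _ _
  -- endpoints of detour far from γ s₀
  have hyfar : D ≤ dist (γ s₀) (γ s₁) := by
    rcases le_or_gt (s₀ - 2*D) 0 with hc | hc
    · have h1 : s₁ = 0 := max_eq_right hc
      rw [h1, hγ0]; exact hfar 0 (Nat.zero_le N)
    · have h1 : s₁ = s₀ - 2*D := max_eq_left hc.le
      rw [hiso s₀ hs₀mem s₁ hs₁mem, h1, abs_of_nonneg (by linarith)]; linarith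
  have hzzfar : D ≤ dist (γ s₀) (γ s₂) := by
    rcases le_or_gt L (s₀ + 2*D) with hc | hc
    · have h1 : s₂ = L := min_eq_right hc
      rw [h1, hγL]; exact hfar N le_rfl
    · have h1 : s₂ = s₀ + 2*D := min_eq_left hc.le
      rw [hiso s₀ hs₀mem s₂ hs₂mem, h1, abs_of_nonpos (by linarith)]; linarith
  -- chain points close to γ s₁, γ s₂
  have hnear : ∀ s ∈ Icc (0:ℝ) L, ∃ j ≤ N, dist (γ s) (z j) < D + 1 := by
    intro s hs
    have h1 : infDist (γ s) S < D + 1 := lt_of_le_of_lt (hmax s hs) (by linarith)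
    obtain ⟨y, ⟨j, hj, rfl⟩, hy⟩ := (infDist_lt_iff hSne).1 h1
    exact ⟨j, hj, hy⟩
  obtain ⟨j₁, hj₁N, hd₁⟩ := hnear s₁ hs₁mem
  obtain ⟨j₂, hj₂N, hd₂⟩ := hnear s₂ hs₂mem
  set Δ := max j₁ j₂ - min j₁ j₂ with hΔdef
  set idx : ℕ → ℕ := fun v => if j₁ ≤ j₂ then j₁ + v else j₁ - v with hidxdef
  have hidx0 : idx 0 = j₁ := by simp [hidxdef]
  have hidxΔ : idx Δ = j₂ := by simp only [hidxdef, hΔdef]; split <;> omega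
  have hidxle : ∀ v, v ≤ Δ → idx v ≤ N := by
    intro v hv; simp only [hidxdef]; split <;> omega
  have hidxstep : ∀ v, v + 1 ≤ Δ → |(idx (v+1) : ℝ) - (idx v : ℝ)| = 1 := by
    intro v hv
    simp only [hidxdef]
    split
    · rw [show ((j₁ + (v + 1) : ℕ) : ℝ) - ((j₁ + v : ℕ) : ℝ) = 1 by push_cast; ring, abs_one]
    · rename_i hj
      have h1 : v + 1 ≤ j₁ := by omega
      rw [Nat.cast_sub h1, Nat.cast_sub (by omega)]
      push_cast
      rw [show (j₁:ℝ) - (v+1) - ((j₁:ℝ) - v) = -1 by ring, abs_neg, abs_one]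
  set W : ℕ → X := fun u => if u = 0 then γ s₁ else if u ≤ Δ + 1 then z (idx (u - 1)) else γ s₂
    with hWdef
  have hW0 : W 0 = γ s₁ := by simp [hWdef]
  have hWlast : W (Δ + 2) = γ s₂ := by
    simp only [hWdef]
    rw [if_neg (by omega), if_neg (by omega)]
  have hWmid : ∀ u, 1 ≤ u → u ≤ Δ + 1 → W u = z (idx (u-1)) := by
    intro u h1 h2
    simp only [hWdef]
    rw [if_neg (by omega), if_pos h2]
  -- endpoint Gromov product vanishes
  have hgp0 : gp (W 0) (W (Δ+2)) (γ s₀) ≤ 0 := by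
    rw [hW0, hWlast]
    unfold gp
    rw [hiso s₀ hs₀mem s₁ hs₁mem, hiso s₀ hs₀mem s₂ hs₂mem, hiso s₁ hs₁mem s₂ hs₂mem,
      abs_of_nonneg (by linarith), abs_of_nonpos (by linarith), abs_of_nonpos (by linarith)]
    linarith
  -- avoidance
  have havoid : ∀ u, u ≤ Δ + 2 → D ≤ dist (γ s₀) (W u) := by
    intro u hu
    rcases Nat.eq_zero_or_pos u with h0 | h0
    · rw [h0, hW0]; exact hyfar
    rcases le_or_gt u (Δ + 1) with h1 | h1
    · rw [hWmid u h0 h1]; exact hfar _ (hidxle _ (by omega))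
    · have : u = Δ + 2 := by omega
      rw [this, hWlast]; exact hzzfar
  -- steps
  have hstep : ∀ u, u + 1 ≤ Δ + 2 → dist (W u) (W (u+1)) ≤ D + 1 := by
    intro u hu
    rcases Nat.eq_zero_or_pos u with h0 | h0
    · rw [h0, hW0, hWmid 1 le_rfl (by omega)]
      simpa [hidx0] using hd₁.le
    rcases le_or_gt (u+1) (Δ + 1) with h1 | h1
    · rw [hWmid u h0 (by omega), hWmid (u+1) (by omega) h1]
      have h2 := hzu (idx (u-1)) (idx u) (hidxle _ (by omega)) (hidxle _ (by omega))
      have h3 : |(idx u : ℝ) - (idx (u-1) : ℝ)| = 1 := by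
        have := hidxstep (u-1) (by omega)
        rwa [Nat.sub_add_cancel h0] at this
      rw [abs_sub_comm] at h3
      rw [h3] at h2
      simp only [Nat.add_sub_cancel]
      linarith
    · have h2 : u = Δ + 1 := by omega
      rw [h2, hWmid (Δ+1) (by omega) le_rfl, show Δ + 1 + 1 = Δ + 2 from rfl, hWlast]
      simp only [Nat.add_sub_cancel, hidxΔ]
      rw [dist_comm]
      linarith
  -- Δ bound
  have hΔr : (Δ:ℝ) ≤ K * (6*D + 2 + C₁) := by
    have hlow := hzl j₁ j₂ hj₁N hj₂N
    have habs : |(j₁:ℝ) - (j₂:ℝ)| = (Δ:ℝ) := by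
      rcases le_total j₁ j₂ with hc | hc
      · rw [abs_of_nonpos (sub_nonpos.2 (Nat.cast_le.2 hc))]
        have he : Δ = j₂ - j₁ := by omega
        rw [he, Nat.cast_sub hc]; ring
      · rw [abs_of_nonneg (sub_nonneg.2 (Nat.cast_le.2 hc))]
        have he : Δ = j₁ - j₂ := by omega
        rw [he, Nat.cast_sub hc]
    have hdz : dist (z j₁) (z j₂) ≤ 6*D + 2 := by
      have t1 := dist_triangle (z j₁) (γ s₁) (z j₂)
      have t2 := dist_triangle (γ s₁) (γ s₂) (z j₂)
      have t3 : dist (γ s₁) (γ s₂) ≤ 4*D := by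
        rw [hiso s₁ hs₁mem s₂ hs₂mem, abs_of_nonpos (by linarith)]; linarith
      have h4 : dist (z j₁) (γ s₁) < D + 1 := by rw [dist_comm]; exact hd₁
      have h5 : dist (γ s₂) (z j₂) < D + 1 := hd₂
      linarith
    rw [habs] at hlow
    have hKK : K * K⁻¹ = 1 := mul_inv_cancel₀ hKpos.ne'
    have h6 : K⁻¹ * (Δ:ℝ) ≤ 6*D + 2 + C₁ := by linarith
    have h7 := mul_le_mul_of_nonneg_left h6 hKpos.le
    rw [← mul_assoc, hKK, one_mul] at h7
    exact h7
  -- apply the dyadic lemma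
  set k := Nat.clog 2 (Δ + 2) with hkdef
  have hpow : Δ + 2 - 0 ≤ 2 ^ k := by
    simpa using Nat.le_pow_clog (by norm_num) (Δ + 2)
  obtain ⟨u, hu0, hu1, hu2⟩ := dyadic δ hδ hyp4 k W 0 (Δ + 2) (γ s₀) 0 (by omega) hpow hgp0
  have hDk : D ≤ (k:ℝ) * δ + (D + 1) / 2 := by
    have hmin := gp_min_le _ _ _ hu2
    have ha := havoid u (by omega)
    have hb := havoid (u + 1) (by omega)
    have hsp := hstep u (by omega)
    rcases le_total (dist (γ s₀) (W u)) (dist (γ s₀) (W (u+1))) with hc | hc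
    · rw [min_eq_left hc] at hmin; linarith
    · rw [min_eq_right hc] at hmin; linarith
  rcases Nat.eq_zero_or_pos k with hk0 | hk1
  · rw [hk0] at hDk; push_cast at hDk; linarith
  unfold morseD
  have hlog2 : (0:ℝ) < Real.log 2 := Real.log_pos (by norm_num)
  have hklog : ((k:ℝ) - 1) * Real.log 2 ≤ Real.log ((Δ:ℝ) + 2) := by
    have h1 : (2:ℕ) ^ (k - 1) < Δ + 2 :=
      Nat.pow_pred_clog_lt_self (b := 2) (x := Δ + 2) (by norm_num) (by omega)
    have h2 : ((2:ℝ)) ^ (k - 1) ≤ (Δ:ℝ) + 2 := by exact_mod_cast h1.le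
    have h3 := Real.log_le_log (by positivity) h2
    rw [Real.log_pow] at h3
    have h4 : ((k - 1 : ℕ):ℝ) = (k:ℝ) - 1 := by
      rw [Nat.cast_sub hk1]; norm_num
    rw [h4] at h3
    exact h3
  set Q := 6*K + (2+C₁)*K + 2 with hQdef
  have hQ1 : (1:ℝ) ≤ Q := by
    rw [hQdef]
    nlinarith [mul_nonneg (show (0:ℝ) ≤ 2 + C₁ by linarith) hKpos.le]
  have hE : (Δ:ℝ) + 2 ≤ Q * (D + 1) := by
    rw [hQdef]
    nlinarith [hΔr, mul_nonneg (mul_nonneg (show (0:ℝ) ≤ 2 + C₁ by linarith) hKpos.le) hD0,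
      mul_nonneg hKpos.le hD0]
  have hQD : (0:ℝ) < Q * (D + 1) := by nlinarith [hQ1, hD0]
  have hlogE : Real.log ((Δ:ℝ) + 2) ≤ 2 * (Real.sqrt Q * Real.sqrt (D + 1)) :=
    calc Real.log ((Δ:ℝ) + 2) ≤ Real.log (Q * (D+1)) := Real.log_le_log (by positivity) hE
    _ = 2 * Real.log (Real.sqrt (Q * (D+1))) := by
        rw [Real.log_sqrt hQD.le]; ring
    _ ≤ 2 * Real.sqrt (Q * (D+1)) := by
        have := Real.log_le_sub_one_of_pos (Real.sqrt_pos.2 hQD)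
        linarith
    _ = 2 * (Real.sqrt Q * Real.sqrt (D+1)) := by
        rw [Real.sqrt_mul (by linarith) _]
  set t := Real.sqrt (D + 1) with htdef
  have ht0 : 0 ≤ t := Real.sqrt_nonneg _
  have ht2 : t ^ 2 = D + 1 := Real.sq_sqrt (by linarith)
  set A := 4 * δ * Real.sqrt Q / Real.log 2 with hAdef
  have hsqQ0 : 0 ≤ Real.sqrt Q := Real.sqrt_nonneg _
  have hA0 : 0 ≤ A := by
    apply div_nonneg _ hlog2.le; positivity
  have hkb : (k:ℝ) - 1 ≤ 2 * (Real.sqrt Q * t) / Real.log 2 :=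
    (le_div_iff₀ hlog2).2 (by linarith)
  have hfinal : D + 1 ≤ A * t + (2*δ + 2) := by
    have h5 : 2*δ*((k:ℝ) - 1) ≤ 2*δ*(2*(Real.sqrt Q * t)/Real.log 2) :=
      mul_le_mul_of_nonneg_left hkb (by linarith)
    have h6 : 2*δ*(2*(Real.sqrt Q*t)/Real.log 2) = A * t := by
      rw [hAdef]; field_simp; ring
    rw [h6] at h5
    linarith
  have hquad : t^2 ≤ A^2 + 2*(2*δ+2) := by nlinarith [sq_nonneg (t - A), ht2]
  have hDfin : D ≤ A^2 + 4*δ + 3 := by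
    have : D + 1 = t^2 := ht2.symm
    linarith
  linarith


lemma morseD_ge (δ K C₁ : ℝ) (hδ : 0 ≤ δ) : K + C₁ + 1 ≤ morseD δ K C₁ := by
  have h1 : (0:ℝ) ≤ (4*δ*Real.sqrt (6*K + (2+C₁)*K + 2) / Real.log 2)^2 := sq_nonneg _
  unfold morseD; linarith

lemma ivt (u : ℕ → ℕ) (T J B M : ℕ) (h0 : u 0 = 0) (hT : B ≤ u T)
    (hjump : ∀ j, j < T → u (j+1) ≤ u j + J) (hM : M ≤ B) :
    ∃ j ≤ T, M ≤ u j ∧ u j ≤ M + J := by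
  classical
  have hex : ∃ j, M ≤ u j := ⟨T, hM.trans hT⟩
  obtain ⟨j₀, hPj₀, hmin⟩ : ∃ j, (M ≤ u j) ∧ ∀ m, m < j → ¬ (M ≤ u m) :=
    ⟨Nat.find hex, Nat.find_spec hex, fun m hm => Nat.find_min hex hm⟩
  have hj₀T : j₀ ≤ T := by
    by_contra hc
    push_neg at hc
    exact hmin T hc (hM.trans hT)
  rcases Nat.eq_zero_or_pos j₀ with h0' | h0'
  · subst h0'
    exact ⟨0, Nat.zero_le _, hPj₀, by omega⟩
  · have hprev := hmin (j₀-1) (by omega)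
    have hj := hjump (j₀-1) (by omega)
    rw [show j₀ - 1 + 1 = j₀ by omega] at hj
    exact ⟨j₀, hj₀T, hPj₀, by omega⟩

def gpBound (δ K C₁ : ℝ) : ℝ :=
  K*(K*(2*(morseD δ K C₁ + 1) + 1 + C₁) + 1) + C₁ + (morseD δ K C₁ + 1)

lemma part2 (δ K C₁ : ℝ) (hδ : 0 ≤ δ) (hK : 1 ≤ K) (hC : 0 ≤ C₁)
    (hyp4 : ∀ a b c w : X, min (gp a c w) (gp b c w) - δ ≤ gp a b w)
    (z : ℕ → X) (N : ℕ)
    (hzu : ∀ i j, i ≤ N → j ≤ N → dist (z i) (z j) ≤ K * |(i:ℝ) - (j:ℝ)| + C₁)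
    (hzl : ∀ i j, i ≤ N → j ≤ N → K⁻¹ * |(i:ℝ) - (j:ℝ)| - C₁ ≤ dist (z i) (z j))
    (γ : ℝ → X) (L : ℝ) (hL : L = dist (z 0) (z N))
    (hγ0 : γ 0 = z 0) (hγL : γ L = z N)
    (hiso : ∀ s ∈ Icc (0:ℝ) L, ∀ t ∈ Icc (0:ℝ) L, dist (γ s) (γ t) = |s - t|)
    (M : ℕ) (hM : M ≤ N) :
    gp (z 0) (z N) (z M) ≤ gpBound δ K C₁ := by
  have hKpos : (0:ℝ) < K := lt_of_lt_of_le one_pos hK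
  have hL0 : 0 ≤ L := hL ▸ dist_nonneg
  set D₁ := morseD δ K C₁ + 1 with hD₁def
  have hD₁1 : 1 ≤ D₁ := by have h := morseD_ge δ K C₁ hδ; rw [hD₁def]; linarith
  have hSne : (z '' Iic N).Nonempty := ⟨z 0, ⟨0, by simp, rfl⟩⟩
  have hgpzero : ∀ s ∈ Icc (0:ℝ) L, gp (z 0) (z N) (γ s) = 0 := by
    intro s hs
    unfold gp
    have e1 : dist (γ s) (z 0) = s := by
      rw [← hγ0, hiso s hs 0 (left_mem_Icc.2 hL0), sub_zero, abs_of_nonneg hs.1]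
    have e2 : dist (γ s) (z N) = L - s := by
      rw [← hγL, hiso s hs L (right_mem_Icc.2 hL0), abs_of_nonpos (by linarith [hs.2])]
      ring
    rw [e1, e2, ← hL]
    ring
  have hnear : ∀ s ∈ Icc (0:ℝ) L, ∃ i ≤ N, dist (γ s) (z i) < D₁ := by
    intro s hs
    have h1 := part1 δ K C₁ hδ hK hC hyp4 z N hzu hzl γ L hL0 hγ0 hγL hiso s hs
    have h2 : morseD δ K C₁ < D₁ := by rw [hD₁def]; linarith
    obtain ⟨y, ⟨i, hi, rfl⟩, hy⟩ := (infDist_lt_iff hSne).1 (lt_of_le_of_lt h1 h2)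
    exact ⟨i, hi, hy⟩
  set T := Nat.ceil L with hTdef
  have hTL : L ≤ (T:ℝ) := Nat.le_ceil L
  have hsj : ∀ j : ℕ, min (j:ℝ) L ∈ Icc (0:ℝ) L :=
    fun j => ⟨le_min (Nat.cast_nonneg j) hL0, min_le_right _ _⟩
  have hpick : ∀ j : ℕ, ∃ i, i ≤ N ∧ dist (γ (min (j:ℝ) L)) (z i) < D₁ := by
    intro j
    obtain ⟨i, hi, hd⟩ := hnear _ (hsj j)
    exact ⟨i, hi, hd⟩
  choose g hgN hgd using hpick
  set u : ℕ → ℕ := fun j => if j = 0 then 0 else if j ≤ T + 1 then g (j - 1) else N with hudef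
  have hu0 : u 0 = 0 := by simp [hudef]
  have huN : u (T + 2) = N := by simp only [hudef]; rw [if_neg (by omega), if_neg (by omega)]
  -- jump bound (real form) then nat form
  have hJr0 : (0:ℝ) ≤ K*(2*D₁+1+C₁) := by positivity
  set J : ℕ := Nat.ceil (K*(2*D₁+1+C₁)) with hJdef
  have hJle : ∀ (i i' : ℕ), i ≤ N → i' ≤ N → dist (z i) (z i') ≤ 2*D₁+1 → i' ≤ i + J := by
    intro i i' hi hi' hd
    have hlow := hzl i i' hi hi'
    have h1 : K⁻¹ * |(i:ℝ) - i'| ≤ 2*D₁+1+C₁ := by linarith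
    have h2 : |(i:ℝ) - i'| ≤ K*(2*D₁+1+C₁) := by
      have h3 := mul_le_mul_of_nonneg_left h1 hKpos.le
      rw [← mul_assoc, mul_inv_cancel₀ hKpos.ne', one_mul] at h3
      exact h3
    have h4 : (i':ℝ) - i ≤ (J:ℕ) := by
      have := le_trans (neg_abs_le ((i:ℝ) - i')) (le_refl _)
      have h5 := Nat.le_ceil (K*(2*D₁+1+C₁))
      have h6 : (i':ℝ) - i ≤ |(i:ℝ) - i'| := by
        rw [abs_sub_comm]; exact le_abs_self _
      linarith
    by_contra hcon
    push_neg at hcon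
    have : (i:ℝ) + J + 1 ≤ i' := by exact_mod_cast Nat.add_one_le_iff.2 hcon
    linarith
  have hjump : ∀ j, j < T + 2 → u (j+1) ≤ u j + J := by
    intro j hj
    rcases Nat.eq_zero_or_pos j with h0' | h0'
    · subst h0'
      rw [hu0]
      simp only [hudef]
      rw [if_neg (by omega), if_pos (by omega)]
      apply hJle 0 (g 0) (Nat.zero_le N) (hgN 0)
      have := hgd 0
      have e0 : γ (min ((0:ℕ):ℝ) L) = z 0 := by
        rw [show min ((0:ℕ):ℝ) L = 0 by simp [hL0], hγ0]
      rw [e0] at this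
      linarith
    rcases le_or_gt (j+1) (T+1) with h1 | h1
    · have e1 : u j = g (j-1) := by
        simp only [hudef]; rw [if_neg (by omega), if_pos (by omega)]
      have e2 : u (j+1) = g j := by
        simp only [hudef]; rw [if_neg (by omega), if_pos h1]
        simp only [Nat.add_sub_cancel]
      rw [e1, e2]
      apply hJle _ _ (hgN (j-1)) (hgN j)
      have d1 := hgd (j-1)
      have d2 := hgd j
      have hmincl : dist (γ (min ((j-1:ℕ):ℝ) L)) (γ (min ((j:ℕ):ℝ) L)) ≤ 1 := by
        rw [hiso _ (hsj (j-1)) _ (hsj j)]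
        have hc1 : ((j-1:ℕ):ℝ) = (j:ℝ) - 1 := by
          rw [Nat.cast_sub h0']; norm_num
        rw [abs_le]
        constructor
        · simp only [hc1]
          rcases le_total ((j:ℝ)) L with hc | hc
          · rw [min_eq_left (by linarith), min_eq_left hc]; linarith
          · rw [min_eq_right hc]
            have : (j:ℝ) - 1 ≤ L ∨ L ≤ (j:ℝ) - 1 := le_total _ _
            rcases this with hc2 | hc2
            · rw [min_eq_left hc2]; linarith
            · rw [min_eq_right hc2]; linarith
        · simp only [hc1]
          have : min ((j:ℝ) - 1) L ≤ min ((j:ℝ)) L := by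
            apply min_le_min _ le_rfl; linarith
          linarith
      have t1 := dist_triangle (z (g (j-1))) (γ (min ((j-1:ℕ):ℝ) L)) (z (g j))
      have t2 := dist_triangle (γ (min ((j-1:ℕ):ℝ) L)) (γ (min ((j:ℕ):ℝ) L)) (z (g j))
      have t3 := dist_comm (z (g (j-1))) (γ (min ((j-1:ℕ):ℝ) L))
      linarith [t1, t2, t3, hmincl, d1, d2]
    · have e1 : j = T + 1 := by omega
      subst e1
      have e2 : u (T+1) = g T := by
        simp only [hudef]; rw [if_neg (by omega), if_pos (by omega)]
        simp only [Nat.add_sub_cancel]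
      rw [huN, e2]
      apply hJle _ _ (hgN T) le_rfl
      have := hgd T
      have e3 : min ((T:ℕ):ℝ) L = L := min_eq_right hTL
      rw [e3, hγL] at this
      rw [dist_comm]
      linarith
  obtain ⟨j, hjT, hMj, hjM⟩ := ivt u (T+2) J N M hu0 (le_of_eq huN.symm) hjump hM
  -- z (u j) is close to a geodesic point
  have hclose : ∃ s ∈ Icc (0:ℝ) L, dist (z (u j)) (γ s) ≤ D₁ := by
    rcases Nat.eq_zero_or_pos j with h0' | h0'
    · subst h0'
      rw [hu0, ← hγ0]
      exact ⟨0, left_mem_Icc.2 hL0, by simpa using le_trans zero_le_one hD₁1⟩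
    rcases le_or_gt j (T+1) with h1 | h1
    · have e1 : u j = g (j-1) := by
        simp only [hudef]; rw [if_neg (by omega), if_pos h1]
      rw [e1]
      exact ⟨_, hsj (j-1), by rw [dist_comm]; exact (hgd (j-1)).le⟩
    · have e1 : j = T+2 := by omega
      subst e1
      rw [huN, ← hγL]
      exact ⟨L, right_mem_Icc.2 hL0, by simpa using le_trans zero_le_one hD₁1⟩
  obtain ⟨s, hsmem, hsd⟩ := hclose
  have hujN : u j ≤ N := by
    rcases Nat.eq_zero_or_pos j with h0' | h0'
    · subst h0'; rw [hu0]; omega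
    rcases le_or_gt j (T+1) with h1 | h1
    · have e1 : u j = g (j-1) := by
        simp only [hudef]; rw [if_neg (by omega), if_pos h1]
      rw [e1]; exact hgN _
    · have e1 : j = T+2 := by omega
      subst e1; rw [huN]
  -- distance from z M to z (u j)
  have hdM : dist (z M) (z (u j)) ≤ K * (K*(2*D₁+1+C₁) + 1) + C₁ := by
    have h1 := hzu M (u j) hM hujN
    have h2 : |(M:ℝ) - (u j:ℝ)| ≤ (J:ℝ) := by
      rw [abs_sub_comm, abs_of_nonneg (sub_nonneg.2 (Nat.cast_le.2 hMj))]
      have h4 : (u j : ℝ) ≤ (M:ℝ) + J := by exact_mod_cast hjM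
      linarith
    have h3 : (J:ℝ) ≤ K*(2*D₁+1+C₁) + 1 := by
      have := Nat.ceil_lt_add_one hJr0
      rw [hJdef]
      linarith
    have h5 := mul_le_mul_of_nonneg_left (h2.trans h3) hKpos.le
    linarith
  have hfin := gp_lipschitz (z 0) (z N) (z M) (γ s)
  rw [hgpzero s hsmem] at hfin
  have htri := dist_triangle (z M) (z (u j)) (γ s)
  unfold gpBound
  rw [← hD₁def]
  linarith


lemma near_geodesic (δ : ℝ)
    (hyp4 : ∀ a b c w : X, min (gp a c w) (gp b c w) - δ ≤ gp a b w)
    (o y x : X) (γ : ℝ → X) (hγ0 : γ 0 = o) (hγL : γ (dist o y) = y)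
    (hiso : ∀ s ∈ Icc (0:ℝ) (dist o y), ∀ t ∈ Icc (0:ℝ) (dist o y),
      dist (γ s) (γ t) = |s - t|) :
    dist x (γ (gp x y o)) ≤ dist o x - gp x y o + 2*δ := by
  set Λ := dist o y with hΛ
  have hΛ0 : 0 ≤ Λ := dist_nonneg
  set t := gp x y o with htdef
  have ht0 : 0 ≤ t := gp_nonneg _ _ _
  have htΛ : t ≤ Λ := gp_le_right _ _ _
  have htmem : t ∈ Icc (0:ℝ) Λ := ⟨ht0, htΛ⟩
  have hop : dist o (γ t) = t := by
    rw [← hγ0, hiso 0 (left_mem_Icc.2 hΛ0) t htmem, abs_of_nonpos (by linarith)]; ring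
  have hyp' : dist y (γ t) = Λ - t := by
    rw [← hγL, hiso Λ (right_mem_Icc.2 hΛ0) t htmem, abs_of_nonneg (by linarith)]
  have hkey := hyp4 o y (γ t) x
  have hgoyx : gp o y x = dist o x - t := by
    have := gp_add x y o
    rw [← htdef] at this
    linarith
  have hexp : t = (dist o x + Λ - dist x y)/2 := by
    rw [htdef]; unfold gp; rw [dist_comm o x, hΛ]
  rcases le_total (gp o (γ t) x) (gp y (γ t) x) with hc | hc
  · rw [min_eq_left hc, hgoyx] at hkey
    unfold gp at hkey
    rw [dist_comm x o, hop] at hkey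
    linarith
  · rw [min_eq_right hc, hgoyx] at hkey
    unfold gp at hkey
    rw [hyp'] at hkey
    linarith

lemma gpBound_nonneg (δ K C₁ : ℝ) (hδ : 0 ≤ δ) (hK : 1 ≤ K) (hC : 0 ≤ C₁) :
    0 ≤ gpBound δ K C₁ := by
  have h1 := morseD_ge δ K C₁ hδ
  have h2 : 0 ≤ K*(2*(morseD δ K C₁+1)+1+C₁) := mul_nonneg (by linarith) (by linarith)
  have h3 : 0 ≤ K*(K*(2*(morseD δ K C₁+1)+1+C₁)+1) := mul_nonneg (by linarith) (by linarith)
  unfold gpBound; linarith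

lemma extension (δ K C r : ℝ) (hδ : 0 ≤ δ) (hK : 1 ≤ K) (hC : 0 ≤ C) (hr : 0 < r)
    (hyp4 : ∀ a b c w : X, min (gp a c w) (gp b c w) - δ ≤ gp a b w)
    (hgeo : ∀ x y : X, ∃ γ : ℝ → X, γ 0 = x ∧ γ (dist x y) = y ∧
        ∀ s ∈ Set.Icc (0 : ℝ) (dist x y), ∀ t ∈ Set.Icc (0 : ℝ) (dist x y),
          dist (γ s) (γ t) = |s - t|)
    (hunb : ∀ R : ℝ, ∃ x y : X, R < dist x y)
    (hqc' : ∀ x y : X, ∃ f : X → X,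
      (∀ z w : X, K⁻¹ * dist z w - C ≤ dist (f z) (f w) ∧
        dist (f z) (f w) ≤ K * dist z w + C) ∧ dist (f x) y < r)
    (o x : X) (R : ℝ) :
    ∃ y : X, R ≤ dist o y ∧ dist o x - (gpBound δ K (C+1) + r + δ) ≤ gp x y o := by
  have hKpos : (0:ℝ) < K := lt_of_lt_of_le one_pos hK
  have hKinv1 : K⁻¹ ≤ 1 := by
    rw [inv_le_one_iff₀]; right; exact hK
  have hKinv0 : (0:ℝ) < K⁻¹ := by positivity
  set C₁ := C + 1 with hC₁def
  have hC₁0 : (0:ℝ) ≤ C₁ := by linarith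
  -- choose a far point q
  set Rb := 2*K*(|R| + dist o x + C₁ + r + 2) + 4 with hRbdef
  obtain ⟨a, b, hab⟩ := hunb (2*Rb)
  have hq : ∃ q : X, Rb < dist o q := by
    have htr := dist_triangle a o b
    rw [dist_comm a o] at htr
    rcases le_total (dist o a) (dist o b) with h2 | h2
    · exact ⟨b, by linarith⟩
    · exact ⟨a, by linarith⟩
  obtain ⟨q, hq⟩ := hq
  set L₂ := dist o q with hL₂def
  have hL₂0 : 0 ≤ L₂ := dist_nonneg
  have hRb0 : 0 < Rb := by positivity
  obtain ⟨σ, hσ0, hσL, hσiso⟩ := hgeo o q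
  set N := Nat.ceil L₂ with hNdef
  have hNL : L₂ ≤ (N:ℝ) := Nat.le_ceil L₂
  have hNL2 : (N:ℝ) < L₂ + 1 := Nat.ceil_lt_add_one hL₂0
  set M := N / 2 with hMdef
  have hMN : M ≤ N := Nat.div_le_self _ _
  -- the map f centered at the middle of the geodesic
  obtain ⟨f, hf, hfr⟩ := hqc' (σ (min ((M:ℕ):ℝ) L₂)) x
  set z : ℕ → X := fun i => f (σ (min ((i:ℕ):ℝ) L₂)) with hzdef
  -- parameter distance estimates
  have hmem : ∀ i : ℕ, min ((i:ℕ):ℝ) L₂ ∈ Icc (0:ℝ) L₂ :=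
    fun i => ⟨le_min (Nat.cast_nonneg i) hL₂0, min_le_right _ _⟩
  have hts : ∀ i j : ℕ, i ≤ j → j ≤ N →
      (j:ℝ) - (i:ℝ) - 1 ≤ dist (σ (min (i:ℝ) L₂)) (σ (min (j:ℝ) L₂)) ∧
      dist (σ (min (i:ℝ) L₂)) (σ (min (j:ℝ) L₂)) ≤ (j:ℝ) - (i:ℝ) := by
    intro i j hij hjN
    rcases Nat.eq_or_lt_of_le hij with heq | hlt
    · subst heq
      simp only [dist_self]
      constructor <;> linarith
    have hcast : (i:ℝ) + 1 ≤ (j:ℝ) := by exact_mod_cast hlt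
    have hic : (i:ℝ) ≤ L₂ := by
      have h1 : (i:ℝ) ≤ (N:ℝ) - 1 := by
        have : i + 1 ≤ N := by omega
        have := Nat.cast_le (α := ℝ).2 this
        push_cast at this
        linarith
      linarith
    have hti : min ((i:ℕ):ℝ) L₂ = (i:ℝ) := min_eq_left hic
    have htj1 : min ((j:ℕ):ℝ) L₂ ≤ (j:ℝ) := min_le_left _ _
    have htj2 : (j:ℝ) - 1 ≤ min ((j:ℕ):ℝ) L₂ := by
      apply le_min (by linarith)
      have : (j:ℝ) ≤ (N:ℝ) := Nat.cast_le.2 hjN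
      linarith
    rw [hσiso _ (hmem i) _ (hmem j), hti]
    rw [abs_of_nonpos (by linarith)]
    constructor <;> linarith
  -- quasi-geodesic bounds for z
  have hzukey : ∀ i j : ℕ, i ≤ j → j ≤ N → dist (z i) (z j) ≤ K * ((j:ℝ) - i) + C₁ := by
    intro i j hij hjN
    have hb := (hf (σ (min ((i:ℕ):ℝ) L₂)) (σ (min ((j:ℕ):ℝ) L₂))).2
    have h1 := (hts i j hij hjN).2
    have h4 := mul_le_mul_of_nonneg_left h1 hKpos.le
    simp only [hzdef]
    rw [hC₁def]
    linarith
  have hzu : ∀ i j, i ≤ N → j ≤ N → dist (z i) (z j) ≤ K * |(i:ℝ) - (j:ℝ)| + C₁ := by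
    intro i j hi hj
    rcases le_total i j with hij | hij
    · have h2 : |(i:ℝ) - (j:ℝ)| = (j:ℝ) - i := by
        rw [abs_of_nonpos (sub_nonpos.2 (Nat.cast_le.2 hij))]; ring
      rw [h2]
      exact hzukey i j hij hj
    · have h2 : |(i:ℝ) - (j:ℝ)| = (i:ℝ) - j :=
        abs_of_nonneg (sub_nonneg.2 (Nat.cast_le.2 hij))
      rw [h2, dist_comm]
      exact hzukey j i hij hi
  have hzl : ∀ i j, i ≤ N → j ≤ N → K⁻¹ * |(i:ℝ) - (j:ℝ)| - C₁ ≤ dist (z i) (z j) := by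
    intro i j hi hj
    have hb := (hf (σ (min ((i:ℕ):ℝ) L₂)) (σ (min ((j:ℕ):ℝ) L₂))).1
    have key : ∀ i' j' : ℕ, i' ≤ j' → j' ≤ N →
        K⁻¹ * ((j':ℝ) - i') - C₁ ≤ dist (z i') (z j') := by
      intro i' j' hij hjN
      have h1 := (hts i' j' hij hjN).1
      have hb' := (hf (σ (min ((i':ℕ):ℝ) L₂)) (σ (min ((j':ℕ):ℝ) L₂))).1
      have h4 := mul_le_mul_of_nonneg_left h1 hKinv0.le
      simp only [hzdef]
      rw [hC₁def]
      nlinarith [hKinv1, hKinv0.le]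
    rcases le_total i j with hij | hij
    · have h2 : |(i:ℝ) - (j:ℝ)| = (j:ℝ) - i := by
        rw [abs_of_nonpos (by linarith [Nat.cast_le (α := ℝ).2 hij])]; ring
      rw [h2]
      exact key i j hij hj
    · have h2 : |(i:ℝ) - (j:ℝ)| = (i:ℝ) - j := by
        rw [abs_of_nonneg (by linarith [Nat.cast_le (α := ℝ).2 hij])]
      rw [h2, dist_comm]
      exact key j i hij hi
  -- apply part2
  obtain ⟨γ', hγ'0, hγ'L, hγ'iso⟩ := hgeo (z 0) (z N)
  have hgpM := part2 δ K C₁ hδ hK hC₁0 hyp4 z N hzu hzl γ' (dist (z 0) (z N)) rfl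
    hγ'0 hγ'L hγ'iso M hMN
  -- transfer to x
  have hgpx : gp (z 0) (z N) x ≤ gpBound δ K C₁ + r := by
    have h1 := gp_lipschitz (z 0) (z N) x (z M)
    have h2 : dist x (z M) < r := by
      rw [dist_comm]
      exact hfr
    linarith
  -- hyperbolic inequality at x with o
  have hkey := hyp4 (z 0) (z N) o x
  have hsel : gp (z 0) o x ≤ gpBound δ K C₁ + r + δ ∨
      gp (z N) o x ≤ gpBound δ K C₁ + r + δ := by
    rcases le_total (gp (z 0) o x) (gp (z N) o x) with hc | hc
    · left; rw [min_eq_left hc] at hkey; linarith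
    · right; rw [min_eq_right hc] at hkey; linarith
  -- distances from x to the endpoints
  have hdx : ∀ i, i ≤ N → K⁻¹ * |(M:ℝ) - (i:ℝ)| - C₁ - r ≤ dist x (z i) := by
    intro i hi
    have h1 := hzl M i hMN hi
    have h2 : dist (z M) (z i) ≤ dist (z M) x + dist x (z i) := dist_triangle _ _ _
    have h3 : dist (z M) x < r := hfr
    linarith
  have hM2 : ((N:ℝ) - 1)/2 ≤ (M:ℝ) := by
    have h8 : N ≤ 2 * M + 1 := by omega
    have h9 : (N:ℝ) ≤ 2*(M:ℝ) + 1 := by exact_mod_cast h8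
    linarith
  have hNM2 : ((N:ℝ) - 1)/2 ≤ (N:ℝ) - (M:ℝ) := by
    have h8 : 2 * M ≤ N := by omega
    have h9 : 2*(M:ℝ) ≤ (N:ℝ) := by exact_mod_cast h8
    linarith
  have hfarbound : ∀ i, i ≤ N → ((N:ℝ) - 1)/2 ≤ |(M:ℝ) - (i:ℝ)| →
      R ≤ dist o (z i) := by
    intro i hi hbig
    have h1 := hdx i hi
    have h2 := dist_triangle o x (z i)
    have h3 : dist x (z i) ≤ dist o x + dist o (z i) := by
      have := dist_triangle x o (z i)
      rw [dist_comm x o] at this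
      linarith
    -- K⁻¹ * ((N-1)/2) ≥ |R| + dist o x + C₁ + r + 2 - stuff
    have h4 : K⁻¹ * (((N:ℝ) - 1)/2) ≤ K⁻¹ * |(M:ℝ) - (i:ℝ)| :=
      mul_le_mul_of_nonneg_left hbig hKinv0.le
    have h5 : Rb < (N:ℝ) + 1 := by linarith
    have h6 : K⁻¹ * Rb ≤ K⁻¹ * ((N:ℝ) + 1) := mul_le_mul_of_nonneg_left (by linarith) hKinv0.le
    -- K⁻¹ * Rb = 2*(|R| + dist o x + C₁ + r + 2) + 4 K⁻¹
    have h7 : K⁻¹ * Rb ≥ 2*(|R| + dist o x + C₁ + r + 2) := by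
      rw [hRbdef]
      have : K⁻¹ * (2*K*(|R| + dist o x + C₁ + r + 2) + 4) =
          2*(|R| + dist o x + C₁ + r + 2) * (K⁻¹ * K) + 4 * K⁻¹ := by ring
      rw [this, inv_mul_cancel₀ hKpos.ne']
      have h8 : 0 ≤ 4 * K⁻¹ := by positivity
      linarith
    -- N ≥ L₂ > Rb  ⇒ (N-1)/2 ≥ (Rb - 1)/2
    have h9 : K⁻¹ * (((N:ℝ) - 1)/2) ≥ K⁻¹ * ((Rb - 1)/2) := by
      apply mul_le_mul_of_nonneg_left _ hKinv0.le
      linarith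
    have h10 : K⁻¹ * ((Rb - 1)/2) = (K⁻¹ * Rb - K⁻¹)/2 := by ring
    have h11 : K⁻¹ * |(M:ℝ) - (i:ℝ)| ≥ (2*(|R| + dist o x + C₁ + r + 2) - 1)/2 := by
      rw [h10] at h9
      have : K⁻¹ ≤ 1 := hKinv1
      linarith
    have h12 : |R| ≤ dist o (z i) → R ≤ dist o (z i) := fun h => (le_abs_self R).trans h
    apply h12
    linarith [abs_nonneg R, le_abs_self R]
  rcases hsel with hc | hc
  · refine ⟨z 0, ?_, ?_⟩
    · apply hfarbound 0 (Nat.zero_le _)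
      rw [Nat.cast_zero, sub_zero, abs_of_nonneg (Nat.cast_nonneg M)]
      linarith
    · have hid := gp_add x (z 0) o
      have : gp o (z 0) x = gp (z 0) o x := gp_comm _ _ _
      linarith
  · refine ⟨z N, ?_, ?_⟩
    · apply hfarbound N le_rfl
      rw [abs_of_nonpos (by linarith [Nat.cast_le (α := ℝ).2 hMN])]
      linarith
    · have hid := gp_add x (z N) o
      have : gp o (z N) x = gp (z N) o x := gp_comm _ _ _
      linarith

theorem main {X : Type*} [MetricSpace X] [ProperSpace X]
    (hgeo : ∀ x y : X, ∃ γ : ℝ → X, γ 0 = x ∧ γ (dist x y) = y ∧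
        ∀ s ∈ Set.Icc (0 : ℝ) (dist x y), ∀ t ∈ Set.Icc (0 : ℝ) (dist x y),
          dist (γ s) (γ t) = |s - t|)
    (hunb : ∀ R : ℝ, ∃ x y : X, R < dist x y)
    (hhyp : ∃ δ : ℝ, 0 ≤ δ ∧ ∀ x y z w : X,
        min ((dist w x + dist w z - dist x z) / 2) ((dist w y + dist w z - dist y z) / 2) - δ ≤
          (dist w x + dist w y - dist x y) / 2)
    (hqc : ∃ K C r : ℝ, 1 ≤ K ∧ 0 ≤ C ∧ 0 < r ∧ ∀ x y : X, ∃ f : X → X,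
        (∀ z w : X, K⁻¹ * dist z w - C ≤ dist (f z) (f w) ∧
            dist (f z) (f w) ≤ K * dist z w + C) ∧
        (∀ w : X, ∃ z : X, dist w (f z) ≤ C) ∧
        dist (f x) y < r)
    (o : X) :
    ∃ D : ℝ, 0 < D ∧ ∀ x : X, ∃ γ : ℝ → X, γ 0 = o ∧
      (∀ s t : ℝ, 0 ≤ s → 0 ≤ t → dist (γ s) (γ t) = |s - t|) ∧
      ∃ t : ℝ, 0 ≤ t ∧ dist x (γ t) ≤ D := by
  classical
  obtain ⟨δ, hδ, hhyp4⟩ := hhyp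
  obtain ⟨K, C, r, hK, hC, hr, hqcf⟩ := hqc
  have hyp4 : ∀ a b c w : X, min (gp a c w) (gp b c w) - δ ≤ gp a b w := by
    intro a b c w
    exact hhyp4 a b c w
  have hqc' : ∀ x y : X, ∃ f : X → X,
      (∀ z w : X, K⁻¹ * dist z w - C ≤ dist (f z) (f w) ∧
        dist (f z) (f w) ≤ K * dist z w + C) ∧ dist (f x) y < r := by
    intro x y
    obtain ⟨f, h1, _, h3⟩ := hqcf x y
    exact ⟨f, h1, h3⟩
  set c := gpBound δ K (C+1) + r + δ with hcdef
  have hc0 : 0 ≤ c := by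
    have := gpBound_nonneg δ K (C+1) hδ hK (by linarith)
    rw [hcdef]; linarith
  have hext : ∀ x : X, ∀ R : ℝ, ∃ y, R ≤ dist o y ∧ dist o x - c ≤ gp x y o :=
    fun x R => extension δ K C r hδ hK hC hr hyp4 hgeo hunb hqc' o x R
  refine ⟨c + 3*δ + 1, by linarith, ?_⟩
  intro x
  -- build the chain
  set Y : ℕ → X := fun n =>
    Nat.rec x (fun n yn => Classical.choose (hext yn (max (dist o yn + δ + 1) ((n:ℝ)+1)))) n
    with hYdef
  have hY0 : Y 0 = x := rfl
  have hYfar : ∀ n : ℕ, max (dist o (Y n) + δ + 1) ((n:ℝ)+1) ≤ dist o (Y (n+1)) ∧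
      dist o (Y n) - c ≤ gp (Y n) (Y (n+1)) o := by
    intro n
    have hspec := Classical.choose_spec (hext (Y n) (max (dist o (Y n) + δ + 1) ((n:ℝ)+1)))
    exact hspec
  have hYmono : ∀ n, dist o (Y n) + δ + 1 ≤ dist o (Y (n+1)) :=
    fun n => le_trans (le_max_left _ _) (hYfar n).1
  have hYgrow : ∀ n : ℕ, (n:ℝ) + 1 ≤ dist o (Y (n+1)) :=
    fun n => le_trans (le_max_right _ _) (hYfar n).1
  have hYle : ∀ i j : ℕ, i ≤ j → dist o (Y i) ≤ dist o (Y j) := by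
    intro i j hij
    induction j with
    | zero => have h0 : i = 0 := by omega
              subst h0; exact le_rfl
    | succ j IH =>
      rcases Nat.lt_succ_iff_lt_or_eq.1 (Nat.lt_succ_of_le hij) with h1 | h1
      · exact (IH (by omega)).trans (by linarith [hYmono j])
      · subst h1; exact le_rfl
  have hchain : ∀ m i : ℕ, 1 ≤ m → dist o (Y i) - c - δ ≤ gp (Y i) (Y (i+m)) o := by
    intro m
    induction m with
    | zero => intro i h; omega
    | succ m IH =>
      intro i _
      rcases Nat.eq_zero_or_pos m with h0 | h0
      · subst h0
        have := (hYfar i).2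
        linarith
      · have h2 := IH (i+1) h0
        have h3 := (hYfar i).2
        have h4 := hYmono i
        have hkey := hyp4 (Y i) (Y ((i+1)+m)) (Y (i+1)) o
        have hcomm : gp (Y ((i+1)+m)) (Y (i+1)) o = gp (Y (i+1)) (Y ((i+1)+m)) o :=
          gp_comm _ _ _
        rw [hcomm] at hkey
        rw [show i + (m+1) = (i+1)+m by omega]
        rcases le_total (gp (Y i) (Y (i+1)) o) (gp (Y (i+1)) (Y ((i+1)+m)) o) with hm | hm
        · rw [min_eq_left hm] at hkey; linarith
        · rw [min_eq_right hm] at hkey; linarith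
  have hgpx : ∀ n : ℕ, dist o x - c - δ ≤ gp x (Y (n+1)) o := by
    intro n
    have := hchain (n+1) 0 (by omega)
    rw [show 0 + (n+1) = n + 1 by omega] at this
    rw [← hY0]
    exact this
  -- geodesics from o to Y (n+1)
  have hgeo' : ∀ n : ℕ, ∃ γ : ℝ → X, γ 0 = o ∧ γ (dist o (Y (n+1))) = Y (n+1) ∧
      ∀ s ∈ Icc (0:ℝ) (dist o (Y (n+1))), ∀ t ∈ Icc (0:ℝ) (dist o (Y (n+1))),
        dist (γ s) (γ t) = |s - t| := fun n => hgeo o (Y (n+1))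
  choose Γ hΓ0 hΓL hΓiso using hgeo'
  set U : Ultrafilter ℕ := Ultrafilter.of atTop with hUdef
  have hUatTop : (U : Filter ℕ) ≤ atTop := Ultrafilter.of_le _
  set Ln : ℕ → ℝ := fun n => dist o (Y (n+1)) with hLndef
  have hLn0 : ∀ n, 0 ≤ Ln n := fun n => dist_nonneg
  set g : ℝ → ℕ → X := fun t n => Γ n (max 0 (min t (Ln n))) with hgdef
  have hclmem : ∀ t n, max 0 (min t (Ln n)) ∈ Icc 0 (Ln n) :=
    fun t n => ⟨le_max_left _ _, max_le (hLn0 n) (min_le_right _ _)⟩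
  have hgmem : ∀ t n, dist o (g t n) ≤ |t| := by
    intro t n
    have h1 : dist o (g t n) = max 0 (min t (Ln n)) := by
      rw [hgdef]
      simp only
      rw [← hΓ0 n]
      rw [hΓiso n 0 (left_mem_Icc.2 (hLn0 n)) _ (hclmem t n), zero_sub, abs_neg,
        abs_of_nonneg (le_max_left _ _)]
    rw [h1]
    exact max_le (abs_nonneg t) (le_trans (min_le_left _ _) (le_abs_self t))
  have hlim : ∀ t : ℝ, ∃ p : X, Tendsto (fun n => g t n) U (nhds p) := by
    intro t
    have hcpt : IsCompact (closedBall o |t|) := isCompact_closedBall o |t|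
    have hle : (↑(U.map (fun n => g t n)) : Filter X) ≤ 𝓟 (closedBall o |t|) := by
      rw [Ultrafilter.coe_map, le_principal_iff, mem_map]
      apply univ_mem'
      intro n
      simp only [mem_preimage, mem_closedBall]
      rw [dist_comm]
      exact hgmem t n
    obtain ⟨p, _, hp2⟩ := hcpt.ultrafilter_le_nhds (U.map (fun n => g t n)) hle
    refine ⟨p, ?_⟩
    rwa [Ultrafilter.coe_map] at hp2
  choose ray hraytend using hlim
  have hray0 : ray 0 = o := by
    have h1 : Tendsto (fun n => g 0 n) U (nhds (ray 0)) := hraytend 0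
    have h2 : (fun n : ℕ => g 0 n) = fun _ => o := by
      funext n
      rw [hgdef]
      simp only
      rw [min_eq_left (hLn0 n), max_self, hΓ0 n]
    rw [h2] at h1
    exact tendsto_nhds_unique h1 tendsto_const_nhds
  have hrayiso : ∀ s t : ℝ, 0 ≤ s → 0 ≤ t → dist (ray s) (ray t) = |s - t| := by
    intro s t hs ht
    have h1 : Tendsto (fun n => dist (g s n) (g t n)) U (nhds (dist (ray s) (ray t))) :=
      (hraytend s).dist (hraytend t)
    have h2 : ∀ᶠ n in (U : Filter ℕ), dist (g s n) (g t n) = |s - t| := by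
      apply hUatTop
      filter_upwards [eventually_ge_atTop (Nat.ceil (max s t))] with n hn
      have hcl : (Nat.ceil (max s t) : ℝ) ≤ (n:ℝ) := Nat.cast_le.2 hn
      have hLn : max s t ≤ Ln n := by
        have hg := hYgrow n
        have hcc := Nat.le_ceil (max s t)
        rw [hLndef]
        simp only
        linarith
      have hs' : g s n = Γ n s := by
        rw [hgdef]; simp only
        rw [min_eq_left (le_trans (le_max_left s t) hLn), max_eq_right hs]
      have ht' : g t n = Γ n t := by
        rw [hgdef]; simp only
        rw [min_eq_left (le_trans (le_max_right s t) hLn), max_eq_right ht]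
      rw [hs', ht']
      exact hΓiso n s ⟨hs, le_trans (le_max_left s t) hLn⟩ t ⟨ht, le_trans (le_max_right s t) hLn⟩
    have h3 : Tendsto (fun n => dist (g s n) (g t n)) U (nhds |s - t|) :=
      Tendsto.congr' (EventuallyEq.symm h2) tendsto_const_nhds
    exact tendsto_nhds_unique h1 h3
  -- the Gromov products along the chain
  set tn : ℕ → ℝ := fun n => gp x (Y (n+1)) o with htndef
  have htn0 : ∀ n, 0 ≤ tn n := fun n => gp_nonneg _ _ _
  have htnle : ∀ n, tn n ≤ dist o x := fun n => gp_le_left _ _ _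
  have hlimt : ∃ T, T ∈ Icc (0:ℝ) (dist o x) ∧ Tendsto tn U (nhds T) := by
    have hcpt : IsCompact (Icc (0:ℝ) (dist o x)) := isCompact_Icc
    have hle : (↑(U.map tn) : Filter ℝ) ≤ 𝓟 (Icc 0 (dist o x)) := by
      rw [Ultrafilter.coe_map, le_principal_iff, mem_map]
      exact univ_mem' fun n => ⟨htn0 n, htnle n⟩
    obtain ⟨T, hT1, hT2⟩ := hcpt.ultrafilter_le_nhds (U.map tn) hle
    refine ⟨T, hT1, ?_⟩
    rwa [Ultrafilter.coe_map] at hT2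
  obtain ⟨T, hTmem, hTtend⟩ := hlimt
  refine ⟨ray, hray0, hrayiso, T, hTmem.1, ?_⟩
  have hnb : ∀ n : ℕ, dist x (Γ n (tn n)) ≤ c + 3*δ := by
    intro n
    have h1 := near_geodesic δ hyp4 o (Y (n+1)) x (Γ n) (hΓ0 n) (hΓL n) (hΓiso n)
    have h2 := hgpx n
    rw [htndef]
    simp only
    linarith
  have hev : ∀ᶠ n in (U : Filter ℕ), dist x (g T n) ≤ c + 3*δ + |tn n - T| := by
    apply hUatTop
    filter_upwards [eventually_ge_atTop (Nat.ceil (dist o x))] with n hn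
    have hcl : (Nat.ceil (dist o x) : ℝ) ≤ (n:ℝ) := Nat.cast_le.2 hn
    have hLn : dist o x ≤ Ln n := by
      have hg := hYgrow n
      have hcc := Nat.le_ceil (dist o x)
      rw [hLndef]; simp only
      linarith
    have hgT : g T n = Γ n T := by
      rw [hgdef]; simp only
      rw [min_eq_left (hTmem.2.trans hLn), max_eq_right hTmem.1]
    have hiso' : dist (Γ n (tn n)) (Γ n T) = |tn n - T| :=
      hΓiso n (tn n) ⟨htn0 n, (htnle n).trans hLn⟩ T ⟨hTmem.1, hTmem.2.trans hLn⟩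
    have htr := dist_triangle x (Γ n (tn n)) (Γ n T)
    rw [hgT]
    rw [hiso'] at htr
    linarith [hnb n]
  have h1 : Tendsto (fun n => dist x (g T n)) U (nhds (dist x (ray T))) :=
    tendsto_const_nhds.dist (hraytend T)
  have h2 : Tendsto (fun n => c + 3*δ + |tn n - T|) U (nhds (c + 3*δ + 0)) := by
    have h3 : Tendsto (fun n => |tn n - T|) U (nhds 0) := by
      have h4 := hTtend.sub (tendsto_const_nhds (x := T))
      have h5 := h4.abs
      simpa using h5
    exact (tendsto_const_nhds (x := c + 3*δ)).add h3
  have hfin := le_of_tendsto_of_tendsto h1 h2 hev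
  linarith


end QCVis
end

/-- Every unbounded, proper, geodesic, Gromov hyperbolic, quasi-cobounded metric space is
visual: for every basepoint `o` there is `D > 0` such that every point is within distance `D`
of some geodesic ray emanating from `o`. -/
theorem quasi_cobounded_hyperbolic_is_visual {X : Type*} [MetricSpace X] [ProperSpace X]
    -- X is geodesic
    (hgeo : ∀ x y : X, ∃ γ : ℝ → X, γ 0 = x ∧ γ (dist x y) = y ∧
        ∀ s ∈ Set.Icc (0 : ℝ) (dist x y), ∀ t ∈ Set.Icc (0 : ℝ) (dist x y),
          dist (γ s) (γ t) = |s - t|)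
    -- X is unbounded
    (hunb : ∀ R : ℝ, ∃ x y : X, R < dist x y)
    -- X is Gromov hyperbolic
    (hhyp : ∃ δ : ℝ, 0 ≤ δ ∧ ∀ x y z w : X,
        min ((dist w x + dist w z - dist x z) / 2) ((dist w y + dist w z - dist y z) / 2) - δ ≤
          (dist w x + dist w y - dist x y) / 2)
    -- X is quasi-cobounded
    (hqc : ∃ K C r : ℝ, 1 ≤ K ∧ 0 ≤ C ∧ 0 < r ∧ ∀ x y : X, ∃ f : X → X,
        (∀ z w : X, K⁻¹ * dist z w - C ≤ dist (f z) (f w) ∧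
            dist (f z) (f w) ≤ K * dist z w + C) ∧
        (∀ w : X, ∃ z : X, dist w (f z) ≤ C) ∧
        dist (f x) y < r)
    (o : X) :
    ∃ D : ℝ, 0 < D ∧ ∀ x : X, ∃ γ : ℝ → X, γ 0 = o ∧
      (∀ s t : ℝ, 0 ≤ s → 0 ≤ t → dist (γ s) (γ t) = |s - t|) ∧
      ∃ t : ℝ, 0 ≤ t ∧ dist x (γ t) ≤ D :=
  QCVis.main hgeo hunb hhyp hqc o
end

section
/- Let (X, d_X) be a metric space and (Y, d_Y) a nonempty compact metric space, and suppose X is locally quasi-similar to Y: there exist constants λ ≥ 1, K ≥ 1, R₀ > 1 such that for every R > R₀ and every subset C ⊆ X of diameter at most 1/R there is a map f : C → Y with (1/λ)·R^K·(d_X(x₁,x₂))^K ≤ d_Y(f(x₁), f(x₂)) ≤ λ·R^{1/K}·(d_X(x₁,x₂))^{1/K} for all x₁, x₂ ∈ C. If ℓ-dim X ≤ N for some natural number N, and dim Y ≤ n, then ℓ-dim X ≤ n. -/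
/-- The multiplicity of a family of sets is at most `m`: every point lies in at most `m`
members of the family. -/
def MultiplicityLE {Z : Type*} (U : Set (Set Z)) (m : ℕ) : Prop :=
  ∀ z : Z, {V | V ∈ U ∧ z ∈ V}.encard ≤ (m : ℕ∞)

/-- `ℓ-dim X ≤ n`: there is `δ ∈ (0,1)` such that for all sufficiently small `r > 0` there is
an open cover of `X` of multiplicity at most `n + 1`, mesh at most `r` and Lebesgue number at
least `δ·r` (every `δ·r`-ball lies in some member). -/
def LDimLE (X : Type*) [MetricSpace X] (n : ℕ) : Prop :=
  ∃ δ : ℝ, 0 < δ ∧ δ < 1 ∧ ∃ r₀ : ℝ, 0 < r₀ ∧ ∀ r : ℝ, 0 < r → r < r₀ →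
    ∃ U : Set (Set X), (∀ V ∈ U, IsOpen V) ∧ (∀ z : X, ∃ V ∈ U, z ∈ V) ∧
      MultiplicityLE U (n + 1) ∧
      (∀ V ∈ U, ∀ x ∈ V, ∀ y ∈ V, dist x y ≤ r) ∧
      ∀ z : X, ∃ V ∈ U, Metric.ball z (δ * r) ⊆ V

/-- `dim Y ≤ n` for a compact metric space: for every `ε > 0` there is an open cover of
multiplicity at most `n + 1` and mesh at most `ε`. -/
def DimLE (Y : Type*) [MetricSpace Y] (n : ℕ) : Prop :=
  ∀ ε : ℝ, 0 < ε → ∃ U : Set (Set Y), (∀ V ∈ U, IsOpen V) ∧ (∀ y : Y, ∃ V ∈ U, y ∈ V) ∧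
    MultiplicityLE U (n + 1) ∧ ∀ V ∈ U, ∀ x ∈ V, ∀ y ∈ V, dist x y ≤ ε

open Metric Set

def ColFam {Z : Type*} [MetricSpace Z] {m : ℕ} (A : Fin m → Set (Set Z))
    (M sep leb : ℝ) : Prop :=
  (∀ i, ∀ V ∈ A i, IsOpen V) ∧
  (∀ i, ∀ V ∈ A i, ∀ x ∈ V, ∀ y ∈ V, dist x y ≤ M) ∧
  (∀ i, ∀ V ∈ A i, ∀ W ∈ A i, V ≠ W → ∀ x ∈ V, ∀ y ∈ W, sep ≤ dist x y) ∧
  (∀ z : Z, ∃ i, ∃ V ∈ A i, Metric.ball z leb ⊆ V)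

theorem colored_of_cover {Z : Type*} [MetricSpace Z] (U : Set (Set Z)) (p : ℕ) (L M : ℝ)
    (hL : 0 < L) (hopen : ∀ V ∈ U, IsOpen V) (hmult : MultiplicityLE U (p + 1))
    (hmesh : ∀ V ∈ U, ∀ x ∈ V, ∀ y ∈ V, dist x y ≤ M)
    (hleb : ∀ z : Z, ∃ V ∈ U, Metric.ball z L ⊆ V) :
    ∃ A : Fin (p + 1) → Set (Set Z),
      ColFam A M (L / (2 * (p + 2)) / 2) (L / (2 * (p + 2)) / 4) := by
  classical
  by_cases huniv : (univ : Set Z) ∈ U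
  · refine ⟨fun i => if i = 0 then {univ} else ∅, ?_, ?_, ?_, ?_⟩
    · intro i V hV
      by_cases h : i = 0 <;> simp [h] at hV
      · simp [hV]
    · intro i V hV x hx y hy
      by_cases h : i = 0 <;> simp [h] at hV
      subst hV; exact hmesh _ huniv x hx y hy
    · intro i V hV W hW hne
      by_cases h : i = 0 <;> simp [h] at hV hW
      exact absurd (hV.trans hW.symm) hne
    · intro z
      exact ⟨0, univ, by simp, subset_univ _⟩
  -- main case
  set c : ℝ := L / (2 * (p + 2)) with hc_def
  have hp2 : (0:ℝ) < 2 * (p + 2) := by positivity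
  have hc : 0 < c := by positivity
  have hLc : L = 2 * (p + 2) * c := by rw [hc_def]; field_simp
  -- the bump functions
  set φ : Set Z → Z → ℝ := fun V x => min L (infDist x Vᶜ) with hφ_def
  have hφ_nonneg : ∀ V x, 0 ≤ φ V x := fun V x => le_min hL.le infDist_nonneg
  have hφ_le : ∀ V x, φ V x ≤ L := fun V x => min_le_left _ _
  have hφ_lip : ∀ V (x y : Z), φ V x ≤ φ V y + dist x y := by
    intro V x y
    have h1 : infDist x Vᶜ ≤ infDist y Vᶜ + dist x y := Metric.infDist_le_infDist_add_dist
    have h3 := min_le_left L (infDist x Vᶜ)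
    have h4 := min_le_right L (infDist x Vᶜ)
    have hd : (0:ℝ) ≤ dist x y := dist_nonneg
    simp only [hφ_def]
    rcases min_cases L (infDist y Vᶜ) with ⟨he, h2⟩ | ⟨he, h2⟩ <;> rw [he] <;>
      linarith
  have hφ_cont : ∀ V, Continuous (φ V) :=
    fun V => continuous_const.min (Metric.continuous_infDist_pt _)
  have hφ_mem : ∀ V (x : Z), 0 < φ V x → x ∈ V := by
    intro V x h
    by_contra hx
    have : infDist x Vᶜ = 0 := infDist_zero_of_mem hx
    rw [hφ_def] at h; simp only [this] at h
    exact absurd (min_le_right L 0) (by linarith)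
  have hφ_ball : ∀ V (x : Z), V ∈ U → Metric.ball x L ⊆ V → φ V x = L := by
    intro V x hVU hball
    have hVne : Vᶜ.Nonempty := by
      rcases Set.eq_empty_or_nonempty Vᶜ with h | h
      · exact absurd ((compl_empty_iff.1 h) ▸ hVU) huniv
      · exact h
    have : L ≤ infDist x Vᶜ := by
      have : Nonempty ↥(Vᶜ) := hVne.to_subtype
      rw [Metric.infDist_eq_iInf]
      refine le_ciInf fun y => ?_
      by_contra h
      push_neg at h
      exact y.2 (hball (by rwa [Metric.mem_ball, dist_comm]))
    simp [hφ_def, min_eq_left this]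
  -- sup of the other bumps
  set g : Set (Set Z) → Z → ℝ := fun S x => sSup (insert 0 ((fun V => φ V x) '' (U \ S)))
    with hg_def
  have hg_bdd : ∀ S x, BddAbove (insert 0 ((fun V => φ V x) '' (U \ S))) := by
    intro S x
    refine ⟨L, fun t ht => ?_⟩
    rcases ht with rfl | ⟨V, _, rfl⟩
    · exact hL.le
    · exact hφ_le _ _
  have hg_nonneg : ∀ S x, 0 ≤ g S x := fun S x => le_csSup (hg_bdd S x) (mem_insert _ _)
  have hg_ge : ∀ S (x : Z) V, V ∈ U \ S → φ V x ≤ g S x :=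
    fun S x V hV => le_csSup (hg_bdd S x) (mem_insert_of_mem _ ⟨V, hV, rfl⟩)
  have hg_le : ∀ S (x : Z) b, 0 ≤ b → (∀ V ∈ U \ S, φ V x ≤ b) → g S x ≤ b := by
    intro S x b hb h
    refine csSup_le ⟨0, mem_insert _ _⟩ fun t ht => ?_
    rcases ht with rfl | ⟨V, hV, rfl⟩
    · exact hb
    · exact h V hV
  have hg_lip : ∀ S (x y : Z), g S x ≤ g S y + dist x y := by
    intro S x y
    refine csSup_le ⟨0, mem_insert _ _⟩ fun t ht => ?_
    rcases ht with rfl | ⟨V, hV, rfl⟩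
    · have := hg_nonneg S y; have := dist_nonneg (x := x) (y := y); linarith
    · exact (hφ_lip V x y).trans (by have := hg_ge S y V hV; linarith)
  have hg_cont : ∀ S, Continuous (g S) := by
    intro S
    refine (LipschitzWith.of_dist_le_mul (K := 1) fun x y => ?_).continuous
    rw [Real.dist_eq, NNReal.coe_one, one_mul, abs_le]
    constructor
    · have := hg_lip S y x; rw [dist_comm] at this; linarith
    · have := hg_lip S x y; linarith
  -- colored pieces
  set W : Set (Set Z) → Set Z :=
    fun S => {x | ∀ V ∈ S, c / 2 < φ V x ∧ g S x + c / 2 < φ V x} with hW_def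
  have hW_open : ∀ S : Set (Set Z), S.Finite → IsOpen (W S) := by
    intro S hS
    have : W S = ⋂ V ∈ S, ({x | c / 2 < φ V x} ∩ {x | g S x + c / 2 < φ V x}) := by
      ext x; simp only [hW_def, mem_setOf_eq, mem_iInter, mem_inter_iff]
    rw [this]
    refine hS.isOpen_biInter fun V _ => IsOpen.inter ?_ ?_
    · exact isOpen_lt continuous_const (hφ_cont V)
    · exact isOpen_lt ((hg_cont S).add continuous_const) (hφ_cont V)
  refine ⟨fun i => {A | ∃ S : Set (Set Z), S ⊆ U ∧ S.Finite ∧ S.ncard = i.1 + 1 ∧ A = W S},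
    ?_, ?_, ?_, ?_⟩
  · rintro i A ⟨S, _, hSfin, _, rfl⟩
    exact hW_open S hSfin
  · rintro i A ⟨S, hSU, hSfin, hScard, rfl⟩ x hx y hy
    obtain ⟨V, hV⟩ := Set.nonempty_of_ncard_ne_zero (by omega : S.ncard ≠ 0)
    exact hmesh V (hSU hV) x (hφ_mem V x (by linarith [(hx V hV).1])) y
      (hφ_mem V y (by linarith [(hy V hV).1]))
  · rintro i A ⟨S, hSU, hSfin, hScard, rfl⟩ B ⟨T, hTU, hTfin, hTcard, rfl⟩ hne x hx y hy
    have hST : S ≠ T := fun h => hne (by rw [h])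
    have hSdT : (S \ T).Nonempty := by
      rw [Set.diff_nonempty]
      intro hsub
      exact hST (Set.eq_of_subset_of_ncard_le hsub (by omega) hTfin)
    have hTdS : (T \ S).Nonempty := by
      rw [Set.diff_nonempty]
      intro hsub
      exact hST (Set.eq_of_subset_of_ncard_le hsub (by omega) hSfin).symm
    obtain ⟨V, hVS, hVnT⟩ := hSdT
    obtain ⟨E, hET, hEnS⟩ := hTdS
    have h1 : φ E x ≤ g S x := hg_ge S x E ⟨hTU hET, hEnS⟩
    have h2 : g S x + c / 2 < φ V x := (hx V hVS).2
    have h3 : φ V y ≤ g T y := hg_ge T y V ⟨hSU hVS, hVnT⟩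
    have h4 : g T y + c / 2 < φ E y := (hy E hET).2
    have h5 := hφ_lip V x y
    have h6 := hφ_lip E y x
    rw [dist_comm y x] at h6
    linarith
  · intro z
    -- the nested sets Sk
    set Sk : ℕ → Set (Set Z) := fun k => {V | V ∈ U ∧ L - k * c < φ V z} with hSk_def
    have hSk_sub : ∀ k, k ≤ p + 2 → Sk k ⊆ {V | V ∈ U ∧ z ∈ V} := by
      rintro k hk V ⟨hVU, hVφ⟩
      refine ⟨hVU, hφ_mem V z ?_⟩
      have : (k:ℝ) * c ≤ (p + 2 : ℝ) * c := by
        apply mul_le_mul_of_nonneg_right _ hc.le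
        exact_mod_cast hk
      nlinarith
    have hCz_fin : {V | V ∈ U ∧ z ∈ V}.Finite :=
      Set.encard_lt_top_iff.1 (lt_of_le_of_lt (hmult z) (WithTop.coe_lt_top _))
    have hCz_card : {V | V ∈ U ∧ z ∈ V}.ncard ≤ p + 1 := by
      obtain ⟨hfin, n₀, hn₀, hle⟩ := Set.encard_le_coe_iff.1 (hmult z)
      have : {V | V ∈ U ∧ z ∈ V}.ncard = n₀ := by
        rw [Set.ncard_def, hn₀]; rfl
      omega
    have hSk_mono : ∀ k : ℕ, Sk k ⊆ Sk (k + 1) := by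
      rintro k V ⟨hVU, hVφ⟩
      refine ⟨hVU, lt_of_le_of_lt ?_ hVφ⟩
      push_cast; nlinarith
    have hSk_fin : ∀ k : ℕ, k ≤ p + 2 → (Sk k).Finite :=
      fun k hk => hCz_fin.subset (hSk_sub k hk)
    have hSk1 : 1 ≤ (Sk 1).ncard := by
      obtain ⟨V, hVU, hVb⟩ := hleb z
      have hmem : V ∈ Sk 1 := ⟨hVU, by rw [hφ_ball V z hVU hVb]; push_cast; nlinarith⟩
      have := (Set.ncard_pos (hSk_fin 1 (by omega))).2 ⟨V, hmem⟩
      omega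
    have hkey : ∃ k : ℕ, 1 ≤ k ∧ k ≤ p + 1 ∧ Sk (k + 1) ⊆ Sk k := by
      by_contra hcon
      push_neg at hcon
      have grow : ∀ j : ℕ, j + 1 ≤ p + 2 → j + 1 ≤ (Sk (j + 1)).ncard := by
        intro j
        induction j with
        | zero => intro _; exact hSk1
        | succ j ih =>
          intro hj
          have h1 : ¬Sk (j + 2) ⊆ Sk (j + 1) := hcon (j + 1) (by omega) (by omega)
          have hne : Sk (j + 1) ≠ Sk (j + 2) := fun he => h1 (he ▸ Set.Subset.rfl)
          have hlt := Set.ncard_lt_ncard ((hSk_mono (j + 1)).ssubset_of_ne hne)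
            (hSk_fin (j + 2) (by omega))
          have := ih (by omega)
          omega
      have h1 : p + 2 ≤ (Sk (p + 2)).ncard := grow (p + 1) le_rfl
      have h2 : (Sk (p + 2)).ncard ≤ {V | V ∈ U ∧ z ∈ V}.ncard :=
        Set.ncard_le_ncard (hSk_sub (p + 2) le_rfl) hCz_fin
      omega
    obtain ⟨k, hk1, hk2, hkss⟩ := hkey
    have hSU : Sk k ⊆ U := fun V hV => hV.1
    have hSfin : (Sk k).Finite := hSk_fin k (by omega)
    have hScard_le : (Sk k).ncard ≤ p + 1 :=
      le_trans (Set.ncard_le_ncard (hSk_sub k (by omega)) hCz_fin) hCz_card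
    have hSne : 1 ≤ (Sk k).ncard := by
      obtain ⟨V, hVU, hVb⟩ := hleb z
      have hkc : (k:ℝ) * c ≤ (p + 1 : ℝ) * c := by
        apply mul_le_mul_of_nonneg_right _ hc.le; exact_mod_cast hk2
      have hk1' : (1:ℝ) ≤ (k:ℝ) := by exact_mod_cast hk1
      have hmem : V ∈ Sk k := ⟨hVU, by rw [hφ_ball V z hVU hVb]; nlinarith⟩
      have := (Set.ncard_pos hSfin).2 ⟨V, hmem⟩
      omega
    refine ⟨⟨(Sk k).ncard - 1, by omega⟩, W (Sk k),
      ⟨Sk k, hSU, hSfin, by simp only; omega, rfl⟩, ?_⟩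
    intro x hx
    rw [Metric.mem_ball] at hx
    intro V hV
    have hkc : (k:ℝ) * c ≤ (p + 1 : ℝ) * c := by
      apply mul_le_mul_of_nonneg_right _ hc.le; exact_mod_cast hk2
    have hφVz : L - k * c < φ V z := hV.2
    have hlip : φ V z ≤ φ V x + dist z x := hφ_lip V z x
    rw [dist_comm z x] at hlip
    have hgz : g (Sk k) z ≤ L - (k + 1) * c := by
      refine hg_le _ _ _ (by push_cast; nlinarith) ?_
      rintro V' ⟨hV'U, hV'nS⟩
      have : V' ∉ Sk (k + 1) := fun h => hV'nS (hkss h)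
      have : ¬(L - (k + 1 : ℕ) * c < φ V' z) := fun h => this ⟨hV'U, h⟩
      push_neg at this
      calc φ V' z ≤ L - ((k:ℝ) + 1) * c := by push_cast at this; linarith
        _ = L - (k + 1) * c := by ring
    have hgx : g (Sk k) x ≤ g (Sk k) z + dist x z := hg_lip _ x z
    constructor
    · push_cast at hφVz ⊢; nlinarith
    · push_cast at hφVz hgz ⊢; nlinarith

/-- `m`-colored covers of `X` at all small scales. -/
def ColCov (X : Type*) [MetricSpace X] (m : ℕ) : Prop :=
  ∃ η s₀ : ℝ, 0 < η ∧ η < 1 ∧ 0 < s₀ ∧ ∀ s : ℝ, 0 < s → s < s₀ →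
    ∃ A : Fin m → Set (Set X), ColFam A s (η * s) (η * s)

theorem ColFam.mono {Z : Type*} [MetricSpace Z] {m : ℕ} {A : Fin m → Set (Set Z)}
    {M sep leb M' sep' leb' : ℝ} (h : ColFam A M sep leb) (hM : M ≤ M') (hsep : sep' ≤ sep)
    (hleb : leb' ≤ leb) : ColFam A M' sep' leb' := by
  obtain ⟨h1, h2, h3, h4⟩ := h
  refine ⟨h1, fun i V hV x hx y hy => (h2 i V hV x hx y hy).trans hM,
    fun i V hV W hW hne x hx y hy => hsep.trans (h3 i V hV W hW hne x hx y hy),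
    fun z => ?_⟩
  obtain ⟨i, V, hV, hb⟩ := h4 z
  exact ⟨i, V, hV, (Metric.ball_subset_ball hleb).trans hb⟩

theorem ldimle_colcov {X : Type*} [MetricSpace X] {N : ℕ} (h : LDimLE X N) :
    ColCov X (N + 1) := by
  obtain ⟨δ, hδ0, hδ1, r₀, hr₀, h⟩ := h
  refine ⟨δ / (8 * (N + 2)), r₀, by positivity, ?_, hr₀, ?_⟩
  · have : (1:ℝ) ≤ 8 * (N + 2) := by push_cast; nlinarith [Nat.cast_nonneg (α := ℝ) N]
    rw [div_lt_one (by positivity)]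
    nlinarith
  · intro s hs0 hs1
    obtain ⟨U, hopen, _, hmult, hmesh, hleb⟩ := h s hs0 hs1
    obtain ⟨A, hA⟩ := colored_of_cover U N (δ * s) s (by positivity) hopen hmult hmesh hleb
    refine ⟨A, hA.mono le_rfl ?_ ?_⟩
    · have hN : (0:ℝ) ≤ (N:ℝ) := Nat.cast_nonneg N
      calc δ / (8 * (N + 2)) * s = δ * s / (8 * ((N:ℝ) + 2)) := by ring
        _ ≤ δ * s / (2 * ((N:ℝ) + 2) * 2) := by
            apply div_le_div_of_nonneg_left (by positivity) (by positivity)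
            nlinarith
        _ = δ * s / (2 * (N + 2)) / 2 := by rw [div_div]
    · exact le_of_eq (by rw [div_div]; ring)

theorem dimle_colored {Y : Type*} [MetricSpace Y] [CompactSpace Y] {n : ℕ} (hY : DimLE Y n) :
    ∀ ε : ℝ, 0 < ε → ∃ ηY : ℝ, 0 < ηY ∧ ∃ C : Fin (n + 1) → Set (Set Y), ColFam C ε ηY ηY := by
  intro ε hε
  obtain ⟨U, hopen, hcov, hmult, hmesh⟩ := hY ε hε
  obtain ⟨δ, hδ0, hleb⟩ := lebesgue_number_lemma_of_metric_sUnion isCompact_univ hopen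
    (fun y _ => by obtain ⟨V, hV, hyV⟩ := hcov y; exact ⟨V, hV, hyV⟩)
  obtain ⟨C, hC⟩ := colored_of_cover U n δ ε hδ0 hopen hmult hmesh
    (fun z => hleb z (mem_univ z))
  refine ⟨δ / (2 * (n + 2)) / 4, by positivity, C, hC.mono le_rfl ?_ le_rfl⟩
  have hn : (0:ℝ) ≤ (n:ℝ) := Nat.cast_nonneg n
  rw [div_div, div_div]
  apply div_le_div_of_nonneg_left hδ0.le (by positivity)
  nlinarith

theorem colcov_ldimle {X : Type*} [MetricSpace X] {n : ℕ} (h : ColCov X (n + 1)) :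
    LDimLE X n := by
  classical
  obtain ⟨η, s₀, hη0, hη1, hs₀, h⟩ := h
  refine ⟨η, hη0, hη1, s₀, hs₀, fun r hr0 hr1 => ?_⟩
  obtain ⟨A, hopen, hmesh, hsep, hleb⟩ := h r hr0 hr1
  refine ⟨{V | ∃ i, V ∈ A i}, ?_, ?_, ?_, ?_, ?_⟩
  · rintro V ⟨i, hV⟩; exact hopen i V hV
  · intro z
    obtain ⟨i, V, hV, hb⟩ := hleb z
    exact ⟨V, ⟨i, hV⟩, hb (Metric.mem_ball_self (by positivity))⟩
  · intro z
    set S := {V | V ∈ {V | ∃ i, V ∈ A i} ∧ z ∈ V} with hS_def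
    set f : Set X → Fin (n + 1) := fun V => if h : ∃ i, V ∈ A i then h.choose else 0 with hf
    have hinj : Set.InjOn f S := by
      rintro V ⟨⟨i, hVi⟩, hzV⟩ V' ⟨⟨i', hV'i⟩, hzV'⟩ hff
      by_contra hne
      have h1 : ∃ j, V ∈ A j := ⟨i, hVi⟩
      have h2 : ∃ j, V' ∈ A j := ⟨i', hV'i⟩
      rw [hf] at hff; simp only [dif_pos h1, dif_pos h2] at hff
      have hsame : V' ∈ A h1.choose := hff ▸ h2.choose_spec
      have := hsep h1.choose V h1.choose_spec V' hsame hne z hzV z hzV'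
      simp only [dist_self] at this
      nlinarith
    calc S.encard = (f '' S).encard := (hinj.encard_image).symm
      _ ≤ (Set.univ : Set (Fin (n + 1))).encard := Set.encard_mono (Set.subset_univ _)
      _ ≤ ((n : ℕ) + 1 : ℕ∞) := by
          rw [Set.encard_univ]
          simp
  · rintro V ⟨i, hV⟩ x hx y hy
    exact hmesh i V hV x hx y hy
  · intro z
    obtain ⟨i, V, hV, hb⟩ := hleb z
    exact ⟨V, ⟨i, hV⟩, hb⟩

theorem rpow_aux1 {K : ℝ} (hK : 1 ≤ K) {a R d : ℝ} (ha : 0 ≤ a) (hR : 0 ≤ R) (hd : 0 ≤ d)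
    (h : R ^ K * d ^ K ≤ a ^ K) : R * d ≤ a := by
  have hK0 : K ≠ 0 := by linarith
  have h1 : (R * d) ^ K ≤ a ^ K := by rw [Real.mul_rpow hR hd]; exact h
  have h2 : ((R * d) ^ K) ^ (1 / K) ≤ (a ^ K) ^ (1 / K) :=
    Real.rpow_le_rpow (Real.rpow_nonneg (by positivity) _) h1 (by positivity)
  rwa [← Real.rpow_mul (by positivity), ← Real.rpow_mul ha, mul_one_div, div_self hK0,
    Real.rpow_one, Real.rpow_one] at h2

theorem rpow_aux2 {K : ℝ} (hK : 1 ≤ K) {R d : ℝ} (hR : 0 ≤ R) (hd : 0 ≤ d) :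
    (R ^ (1 / K) * d ^ (1 / K)) ^ K = R * d := by
  have hK0 : K ≠ 0 := by linarith
  rw [← Real.mul_rpow hR hd, ← Real.rpow_mul (by positivity), one_div, inv_mul_cancel₀ hK0,
    Real.rpow_one]

theorem rpow_aux3 {K : ℝ} (hK : 1 ≤ K) {β d s : ℝ} (hs : 0 < s) (hd : 0 ≤ d) (hβ : 0 ≤ β)
    (h : d ≤ β ^ K * s) : (1 / s) ^ (1 / K) * d ^ (1 / K) ≤ β := by
  have hK0 : K ≠ 0 := by linarith
  have h1 : d ^ (1 / K) ≤ (β ^ K * s) ^ (1 / K) :=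
    Real.rpow_le_rpow hd h (by positivity)
  have h2 : (β ^ K * s) ^ (1 / K) = β * s ^ (1 / K) := by
    rw [Real.mul_rpow (by positivity) hs.le, ← Real.rpow_mul hβ, mul_one_div, div_self hK0,
      Real.rpow_one]
  have h3 : (1 / s) ^ (1 / K) * s ^ (1 / K) = 1 := by
    rw [← Real.mul_rpow (by positivity) hs.le, one_div_mul_cancel hs.ne', Real.one_rpow]
  calc (1 / s) ^ (1 / K) * d ^ (1 / K) ≤ (1 / s) ^ (1 / K) * (β * s ^ (1 / K)) := by
        rw [← h2]; exact mul_le_mul_of_nonneg_left h1 (by positivity)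
    _ = β * ((1 / s) ^ (1 / K) * s ^ (1 / K)) := by ring
    _ = β := by rw [h3, mul_one]

set_option maxHeartbeats 2000000 in
theorem colcov_reduce {X Y : Type*} [MetricSpace X] [MetricSpace Y] [Nonempty Y]
    {lam K R₀ : ℝ} (hlam : 1 ≤ lam) (hK : 1 ≤ K) (hR₀ : 1 < R₀)
    (hqs : ∀ R : ℝ, R₀ < R → ∀ C : Set X, (∀ x ∈ C, ∀ y ∈ C, dist x y ≤ 1 / R) →
          ∃ f : X → Y, ∀ x₁ ∈ C, ∀ x₂ ∈ C,
            (1 / lam) * R ^ K * dist x₁ x₂ ^ K ≤ dist (f x₁) (f x₂) ∧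
              dist (f x₁) (f x₂) ≤ lam * R ^ (1 / K) * dist x₁ x₂ ^ (1 / K))
    {n : ℕ}
    (hYcol : ∀ ε : ℝ, 0 < ε →
      ∃ ηY : ℝ, 0 < ηY ∧ ∃ C : Fin (n + 1) → Set (Set Y), ColFam C ε ηY ηY)
    {m : ℕ} (hnm : n + 1 ≤ m) (h : ColCov X (m + 1)) : ColCov X m := by
  classical
  obtain ⟨η, s₀, hη0, hη1, hs₀, hX⟩ := h
  have hlam0 : (0:ℝ) < lam := by linarith
  set ε : ℝ := (η / 8) ^ K / lam with hε_def
  have hε : 0 < ε := by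
    have := Real.rpow_pos_of_pos (show (0:ℝ) < η / 8 by linarith) K
    positivity
  obtain ⟨ηY, hηY0, C, hCopen, hCmesh, hCsep, hCleb⟩ := hYcol ε hε
  set τ : ℝ := min (η / 8) ((ηY / (2 * lam)) ^ K) with hτ_def
  have hτ0 : 0 < τ := lt_min (by linarith) (Real.rpow_pos_of_pos (by positivity) K)
  have hτη8 : τ ≤ η / 8 := min_le_left _ _
  refine ⟨τ / 2, min (2 * s₀) (2 / (R₀ + 1)), by positivity, ?_, by positivity, ?_⟩
  · have : τ ≤ η / 8 := hτη8
    linarith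
  intro s' hs'0 hs'1
  set s : ℝ := s' / 2 with hs_def
  have hs0 : 0 < s := by positivity
  have hss₀ : s < s₀ := by
    have h1 := lt_of_lt_of_le hs'1 (min_le_left _ _)
    linarith [hs_def]
  set R : ℝ := 1 / s with hR_def
  have hRs : R * s = 1 := by rw [hR_def]; field_simp
  have hR1 : 1 / R = s := by rw [hR_def, one_div_one_div]
  have hR : R₀ < R := by
    have h1 : s' < 2 / (R₀ + 1) := lt_of_lt_of_le hs'1 (min_le_right _ _)
    have h2 : s < 1 / (R₀ + 1) := by
      have h4 : 2 / (R₀ + 1) = 2 * (1 / (R₀ + 1)) := by ring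
      linarith [hs_def]
    have h3 : (0:ℝ) < R₀ + 1 := by linarith
    rw [hR_def, lt_div_iff₀ hs0]
    nlinarith [(lt_div_iff₀ h3).1 h2]
  obtain ⟨A, hAopen, hAmesh, hAsep, hAleb⟩ := hX s hs0 hss₀
  set mlast : Fin (m + 1) := Fin.last m with hmlast_def
  -- the quasi-similar maps on the members of the last color
  have hchoose : ∀ B : Set X, B ∈ A mlast → ∃ f : X → Y, ∀ x₁ ∈ B, ∀ x₂ ∈ B,
      (1 / lam) * R ^ K * dist x₁ x₂ ^ K ≤ dist (f x₁) (f x₂) ∧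
        dist (f x₁) (f x₂) ≤ lam * R ^ (1 / K) * dist x₁ x₂ ^ (1 / K) := by
    intro B hB
    exact hqs R hR B (fun x hx y hy => by rw [hR1]; exact hAmesh mlast B hB x hx y hy)
  set fA : Set X → X → Y := fun B =>
    if hB : B ∈ A mlast then (hchoose B hB).choose else fun _ => Classical.arbitrary Y
    with hfA_def
  have hfA : ∀ B (hB : B ∈ A mlast), ∀ x₁ ∈ B, ∀ x₂ ∈ B,
      (1 / lam) * R ^ K * dist x₁ x₂ ^ K ≤ dist (fA B x₁) (fA B x₂) ∧
        dist (fA B x₁) (fA B x₂) ≤ lam * R ^ (1 / K) * dist x₁ x₂ ^ (1 / K) := by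
    intro B hB
    simp only [hfA_def, dif_pos hB]
    exact (hchoose B hB).choose_spec
  -- upper bound estimate
  have hup : ∀ B (hB : B ∈ A mlast) (β : ℝ), 0 ≤ β → ∀ x₁ ∈ B, ∀ x₂ ∈ B,
      dist x₁ x₂ ≤ β ^ K * s → dist (fA B x₁) (fA B x₂) ≤ lam * β := by
    intro B hB β hβ x₁ hx₁ x₂ hx₂ hd
    have h1 := (hfA B hB x₁ hx₁ x₂ hx₂).2
    have h2 := rpow_aux3 hK hs0 dist_nonneg hβ hd
    calc dist (fA B x₁) (fA B x₂) ≤ lam * R ^ (1 / K) * dist x₁ x₂ ^ (1 / K) := h1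
      _ = lam * ((1 / s) ^ (1 / K) * dist x₁ x₂ ^ (1 / K)) := by rw [hR_def]; ring
      _ ≤ lam * β := mul_le_mul_of_nonneg_left h2 hlam0.le
  -- the pulled-back sets
  set Wb : Fin (n + 1) → Set (Set X) := fun b =>
    {W | ∃ B, B ∈ A mlast ∧ ∃ Ω, Ω ∈ C b ∧ W = {x | x ∈ B ∧ fA B x ∈ Ω}} with hWb_def
  -- mesh of pullbacks
  have hWmesh : ∀ b, ∀ W ∈ Wb b, ∀ x ∈ W, ∀ y ∈ W, dist x y ≤ η / 8 * s := by
    rintro b W ⟨B, hB, Ω, hΩ, rfl⟩ x hx y hy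
    have hdY : dist (fA B x) (fA B y) ≤ ε := hCmesh b Ω hΩ _ hx.2 _ hy.2
    have h1 := (hfA B hB x hx.1 y hy.1).1
    have h2 : R ^ K * dist x y ^ K ≤ (η / 8) ^ K := by
      have : (1 / lam) * R ^ K * dist x y ^ K ≤ (η / 8) ^ K / lam := le_trans h1 hdY
      have h3 : 0 < (1:ℝ) / lam := by positivity
      calc R ^ K * dist x y ^ K = lam * ((1 / lam) * R ^ K * dist x y ^ K) := by
            field_simp
        _ ≤ lam * ((η / 8) ^ K / lam) := mul_le_mul_of_nonneg_left this hlam0.le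
        _ = (η / 8) ^ K := by field_simp
    have h4 : R * dist x y ≤ η / 8 :=
      rpow_aux1 hK (by linarith) (by positivity) dist_nonneg h2
    calc dist x y = (R * dist x y) * s := by rw [hR_def]; field_simp
      _ ≤ η / 8 * s := mul_le_mul_of_nonneg_right h4 hs0.le
  -- pullbacks sit inside their host
  have hWsub : ∀ b, ∀ W ∈ Wb b, ∃ B, B ∈ A mlast ∧ W ⊆ B := by
    rintro b W ⟨B, hB, Ω, hΩ, rfl⟩
    exact ⟨B, hB, fun x hx => hx.1⟩
  set σ : ℝ := min ((ηY / lam) ^ K) η with hσ_def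
  have hσ0 : 0 < σ := lt_min (Real.rpow_pos_of_pos (by positivity) K) hη0
  have hτσ : τ ≤ σ := by
    refine le_min (le_trans (min_le_right _ _) ?_) (by linarith [hτη8])
    apply Real.rpow_le_rpow (by positivity) _ (by linarith)
    apply div_le_div_of_nonneg_left hηY0.le hlam0
    linarith
  -- separation of pullbacks within one color
  have hWsep : ∀ b, ∀ W ∈ Wb b, ∀ W' ∈ Wb b, W ≠ W' → ∀ x ∈ W, ∀ y ∈ W',
      σ * s ≤ dist x y := by
    rintro b W ⟨B, hB, Ω, hΩ, rfl⟩ W' ⟨B', hB', Ω', hΩ', rfl⟩ hne x hx y hy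
    by_cases hBB : B = B'
    · subst hBB
      have hΩne : Ω ≠ Ω' := by
        rintro rfl; exact hne rfl
      have h1 : ηY ≤ dist (fA B x) (fA B y) :=
        hCsep b Ω hΩ Ω' hΩ' hΩne _ hx.2 _ hy.2
      have h2 := (hfA B hB x hx.1 y hy.1).2
      have h3 : ηY / lam ≤ R ^ (1 / K) * dist x y ^ (1 / K) := by
        rw [div_le_iff₀ hlam0]
        calc ηY ≤ dist (fA B x) (fA B y) := h1
          _ ≤ lam * R ^ (1 / K) * dist x y ^ (1 / K) := h2
          _ = R ^ (1 / K) * dist x y ^ (1 / K) * lam := by ring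
      have h4 : (ηY / lam) ^ K ≤ R * dist x y := by
        calc (ηY / lam) ^ K ≤ (R ^ (1 / K) * dist x y ^ (1 / K)) ^ K :=
              Real.rpow_le_rpow (by positivity) h3 (by linarith)
          _ = R * dist x y := rpow_aux2 hK (by positivity) dist_nonneg
      have h5 : (ηY / lam) ^ K * s ≤ dist x y := by
        calc (ηY / lam) ^ K * s ≤ (R * dist x y) * s :=
              mul_le_mul_of_nonneg_right h4 hs0.le
          _ = dist x y * (R * s) := by ring
          _ = dist x y := by rw [hRs, mul_one]
      calc σ * s ≤ (ηY / lam) ^ K * s :=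
            mul_le_mul_of_nonneg_right (min_le_left _ _) hs0.le
        _ ≤ dist x y := h5
    · calc σ * s ≤ η * s := mul_le_mul_of_nonneg_right (min_le_right _ _) hs0.le
        _ ≤ dist x y := hAsep mlast B hB B' hB' hBB x hx.1 y hy.1
  -- openness of pullbacks
  have hWopen : ∀ b, ∀ W ∈ Wb b, IsOpen W := by
    rintro b W ⟨B, hB, Ω, hΩ, rfl⟩
    rw [Metric.isOpen_iff]
    rintro x ⟨hxB, hxΩ⟩
    obtain ⟨β, hβ0, hβΩ⟩ := Metric.isOpen_iff.1 (hCopen b Ω hΩ) _ hxΩ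
    obtain ⟨ρ₂, hρ₂0, hρ₂⟩ := Metric.isOpen_iff.1 (hAopen mlast B hB) x hxB
    set γ : ℝ := min 1 (β / (2 * lam)) with hγ_def
    have hγ0 : 0 < γ := lt_min one_pos (by positivity)
    have hγK : 0 < γ ^ K := Real.rpow_pos_of_pos hγ0 K
    refine ⟨min (γ ^ K * s) ρ₂, lt_min (by positivity) hρ₂0, ?_⟩
    intro x' hx'
    rw [Metric.mem_ball] at hx'
    have hx'B : x' ∈ B := hρ₂ (Metric.mem_ball.2 (lt_of_lt_of_le hx' (min_le_right _ _)))
    refine ⟨hx'B, hβΩ ?_⟩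
    rw [Metric.mem_ball]
    have hd : dist x' x ≤ γ ^ K * s := le_of_lt (lt_of_lt_of_le hx' (min_le_left _ _))
    have := hup B hB γ hγ0.le x' hx'B x hxB hd
    have hγβ : γ ≤ β / (2 * lam) := min_le_right _ _
    calc dist (fA B x') (fA B x) ≤ lam * γ := this
      _ ≤ lam * (β / (2 * lam)) := mul_le_mul_of_nonneg_left hγβ hlam0.le
      _ = β / 2 := by field_simp
      _ < β := by linarith
  -- Lebesgue property inside a host
  have hWleb : ∀ (z : X) (B : Set X), B ∈ A mlast → Metric.ball z (η * s) ⊆ B →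
      ∃ b, ∃ W ∈ Wb b, Metric.ball z (τ * s) ⊆ W := by
    intro z B hB hball
    have hzB : z ∈ B := hball (Metric.mem_ball_self (by positivity))
    obtain ⟨b, Ω, hΩ, hbY⟩ := hCleb (fA B z)
    refine ⟨b, {x | x ∈ B ∧ fA B x ∈ Ω}, ⟨B, hB, Ω, hΩ, rfl⟩, ?_⟩
    intro x hx
    rw [Metric.mem_ball] at hx
    have hxB : x ∈ B := hball (Metric.mem_ball.2 (by
      calc dist x z < τ * s := hx
        _ ≤ η / 8 * s := mul_le_mul_of_nonneg_right hτη8 hs0.le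
        _ < η * s := by nlinarith))
    refine ⟨hxB, hbY ?_⟩
    rw [Metric.mem_ball]
    have hd : dist x z ≤ (ηY / (2 * lam)) ^ K * s := by
      have := min_le_right (η / 8) ((ηY / (2 * lam)) ^ K)
      calc dist x z ≤ τ * s := hx.le
        _ ≤ (ηY / (2 * lam)) ^ K * s := mul_le_mul_of_nonneg_right this hs0.le
    have := hup B hB (ηY / (2 * lam)) (by positivity) x hxB z hzB hd
    calc dist (fA B x) (fA B z) ≤ lam * (ηY / (2 * lam)) := this
      _ = ηY / 2 := by field_simp
      _ < ηY := by linarith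
  -- attachment of small pulled-back sets to old members
  set att : Set X → Set X → Prop :=
    fun W B => ∃ x ∈ W, ∃ y ∈ B, dist x y < η / 4 * s with hatt_def
  set A' : Fin m → Set (Set X) := fun i =>
    if hi : (i : ℕ) < n + 1 then
      {V | ∃ B, B ∈ A i.castSucc ∧
        V = B ∪ ⋃₀ {W | W ∈ Wb ⟨i.1, hi⟩ ∧ att W B}}
      ∪ {W | W ∈ Wb ⟨i.1, hi⟩ ∧ ∀ B ∈ A i.castSucc, ¬att W B}
    else A i.castSucc with hA'_def
  have hclose : ∀ (b : Fin (n + 1)) (B : Set X),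
      ∀ x ∈ B ∪ ⋃₀ {W | W ∈ Wb b ∧ att W B}, ∃ x₀ ∈ B, dist x x₀ ≤ η / 8 * s + η / 4 * s := by
    intro b B x hx
    rcases hx with hx | ⟨W, ⟨hWmem, hattW⟩, hxW⟩
    · exact ⟨x, hx, by rw [dist_self]; positivity⟩
    · obtain ⟨w, hwW, u, huB, hwu⟩ := hattW
      have h1 := hWmesh b W hWmem x hxW w hwW
      have h2 := dist_triangle x w u
      exact ⟨u, huB, by linarith⟩
  have hτs : τ / 2 * s' = τ * s := by rw [hs_def]; ring
  have h2s : s' = 2 * s := by rw [hs_def]; ring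
  refine ⟨A', ?_⟩
  rw [hτs, h2s]
  refine ⟨?_, ?_, ?_, ?_⟩
  -- openness
  · intro i V hV
    by_cases hi : (i : ℕ) < n + 1
    · rw [hA'_def] at hV
      simp only [dif_pos hi] at hV
      rcases hV with ⟨B, hB, rfl⟩ | ⟨hWmem, _⟩
      · exact (hAopen _ B hB).union (isOpen_sUnion fun W hW => hWopen _ W hW.1)
      · exact hWopen _ V hWmem
    · rw [hA'_def] at hV
      simp only [dif_neg hi] at hV
      exact hAopen _ V hV
  -- mesh
  · intro i V hV x hx y hy
    by_cases hi : (i : ℕ) < n + 1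
    · rw [hA'_def] at hV
      simp only [dif_pos hi] at hV
      rcases hV with ⟨B, hB, rfl⟩ | ⟨hWmem, _⟩
      · obtain ⟨x₀, hx₀, hdx⟩ := hclose _ B x hx
        obtain ⟨y₀, hy₀, hdy⟩ := hclose _ B y hy
        have h1 := hAmesh i.castSucc B hB x₀ hx₀ y₀ hy₀
        have h2 := dist_triangle4 x x₀ y₀ y
        have h3 : dist y₀ y = dist y y₀ := dist_comm _ _
        nlinarith
      · have := hWmesh _ V hWmem x hx y hy
        nlinarith
    · rw [hA'_def] at hV
      simp only [dif_neg hi] at hV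
      have := hAmesh i.castSucc V hV x hx y hy
      nlinarith
  -- separation
  · intro i V hV V' hV' hne x hx y hy
    by_cases hi : (i : ℕ) < n + 1
    · rw [hA'_def] at hV hV'
      simp only [dif_pos hi] at hV hV'
      have hub : ∀ W, W ∈ Wb ⟨i.1, hi⟩ → (∀ B ∈ A i.castSucc, ¬att W B) →
          ∀ B, B ∈ A i.castSucc →
          ∀ u ∈ W, ∀ v ∈ B ∪ ⋃₀ {W' | W' ∈ Wb ⟨i.1, hi⟩ ∧ att W' B}, τ * s ≤ dist u v := by
        intro W hWmem hWun B hB u hu v hv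
        rcases hv with hv | ⟨W', ⟨hW'mem, hattW'⟩, hvW'⟩
        · have h1 : ¬att W B := hWun B hB
          have h2 : ¬dist u v < η / 4 * s := fun hlt => h1 ⟨u, hu, v, hv, hlt⟩
          calc τ * s ≤ η / 8 * s := mul_le_mul_of_nonneg_right hτη8 hs0.le
            _ ≤ η / 4 * s := by nlinarith
            _ ≤ dist u v := not_lt.1 h2
        · have hWne : W ≠ W' := by
            rintro rfl; exact hWun B hB hattW'
          calc τ * s ≤ σ * s := mul_le_mul_of_nonneg_right hτσ hs0.le
            _ ≤ dist u v := hWsep _ W hWmem W' hW'mem hWne u hu v hvW'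
      rcases hV with ⟨B, hB, rfl⟩ | ⟨hWmem, hWun⟩ <;>
        rcases hV' with ⟨B', hB', rfl⟩ | ⟨hW'mem, hW'un⟩
      · -- two enlarged members
        have hBB : B ≠ B' := by rintro rfl; exact hne rfl
        obtain ⟨x₀, hx₀, hdx⟩ := hclose _ B x hx
        obtain ⟨y₀, hy₀, hdy⟩ := hclose _ B' y hy
        have h1 := hAsep i.castSucc B hB B' hB' hBB x₀ hx₀ y₀ hy₀
        have h2 := dist_triangle4 x₀ x y y₀
        have h3 : dist x₀ x = dist x x₀ := dist_comm _ _
        have h4 : dist y y₀ = dist y y₀ := rfl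
        have hτη : τ * s ≤ η / 8 * s := mul_le_mul_of_nonneg_right hτη8 hs0.le
        nlinarith
      · -- enlarged member vs unattached pullback
        have := hub V' hW'mem hW'un B hB y hy x hx
        rw [dist_comm] at this
        exact this
      · exact hub V hWmem hWun B' hB' x hx y hy
      · have hWne : V ≠ V' := hne
        calc τ * s ≤ σ * s := mul_le_mul_of_nonneg_right hτσ hs0.le
          _ ≤ dist x y := hWsep _ V hWmem V' hW'mem hWne x hx y hy
    · rw [hA'_def] at hV hV'
      simp only [dif_neg hi] at hV hV'
      calc τ * s ≤ η * s := by
            have : τ ≤ η := by linarith [hτη8]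
            exact mul_le_mul_of_nonneg_right this hs0.le
        _ ≤ dist x y := hAsep i.castSucc V hV V' hV' hne x hx y hy
  -- Lebesgue
  · intro z
    obtain ⟨j, M, hM, hball⟩ := hAleb z
    by_cases hj : j = mlast
    · subst hj
      obtain ⟨b, W, hWmem, hWball⟩ := hWleb z M hM hball
      have hbm : (b : ℕ) < m := lt_of_lt_of_le b.2 hnm
      set i : Fin m := ⟨b.1, hbm⟩ with hi_def
      have hi : (i : ℕ) < n + 1 := b.2
      have hbi : (⟨i.1, hi⟩ : Fin (n + 1)) = b := by
        apply Fin.ext; rfl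
      by_cases hatt2 : ∃ B ∈ A i.castSucc, att W B
      · obtain ⟨B, hB, hWB⟩ := hatt2
        refine ⟨i, B ∪ ⋃₀ {W' | W' ∈ Wb ⟨i.1, hi⟩ ∧ att W' B}, ?_, ?_⟩
        · rw [hA'_def]
          simp only [dif_pos hi]
          exact Or.inl ⟨B, hB, rfl⟩
        · intro x hx
          exact Or.inr ⟨W, ⟨hWmem, hWB⟩, hWball hx⟩
      · push_neg at hatt2
        refine ⟨i, W, ?_, hWball⟩
        rw [hA'_def]
        simp only [dif_pos hi]
        exact Or.inr ⟨hWmem, hatt2⟩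
    · set i : Fin m := j.castPred hj with hi_def
      have hic : i.castSucc = j := Fin.castSucc_castPred j hj
      by_cases hi2 : (i : ℕ) < n + 1
      · refine ⟨i, M ∪ ⋃₀ {W | W ∈ Wb ⟨i.1, hi2⟩ ∧ att W M}, ?_, ?_⟩
        · rw [hA'_def]
          simp only [dif_pos hi2]
          exact Or.inl ⟨M, by rw [hic]; exact hM, rfl⟩
        · intro x hx
          refine Or.inl (hball ?_)
          rw [Metric.mem_ball] at hx ⊢
          calc dist x z < τ * s := hx
            _ ≤ η * s := by
                have : τ ≤ η := by linarith [hτη8]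
                exact mul_le_mul_of_nonneg_right this hs0.le
      · refine ⟨i, M, ?_, ?_⟩
        · rw [hA'_def]
          simp only [dif_neg hi2]
          rw [hic]; exact hM
        · intro x hx
          refine hball ?_
          rw [Metric.mem_ball] at hx ⊢
          calc dist x z < τ * s := hx
            _ ≤ η * s := by
                have : τ ≤ η := by linarith [hτη8]
                exact mul_le_mul_of_nonneg_right this hs0.le

theorem ldimle_mono {X : Type*} [MetricSpace X] {N n : ℕ} (h : LDimLE X N) (hNn : N ≤ n) :
    LDimLE X n := by
  obtain ⟨δ, h1, h2, r₀, h3, h4⟩ := h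
  refine ⟨δ, h1, h2, r₀, h3, fun r hr0 hr1 => ?_⟩
  obtain ⟨U, hopen, hcov, hmult, hmesh, hleb⟩ := h4 r hr0 hr1
  exact ⟨U, hopen, hcov, fun z => le_trans (hmult z) (by exact_mod_cast Nat.succ_le_succ hNn),
    hmesh, hleb⟩

/-- If `X` is locally quasi-similar to a compact metric space `Y` and `ℓ-dim X` is finite,
then `ℓ-dim X ≤ dim Y`. -/
theorem ldim_le_dim_of_locally_quasi_similar {X Y : Type*} [MetricSpace X] [MetricSpace Y]
    [Nonempty Y] [CompactSpace Y]
    -- X is locally quasi-similar to Y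
    (hlqs : ∃ lam K R₀ : ℝ, 1 ≤ lam ∧ 1 ≤ K ∧ 1 < R₀ ∧
        ∀ R : ℝ, R₀ < R → ∀ C : Set X, (∀ x ∈ C, ∀ y ∈ C, dist x y ≤ 1 / R) →
          ∃ f : X → Y, ∀ x₁ ∈ C, ∀ x₂ ∈ C,
            (1 / lam) * R ^ K * dist x₁ x₂ ^ K ≤ dist (f x₁) (f x₂) ∧
              dist (f x₁) (f x₂) ≤ lam * R ^ (1 / K) * dist x₁ x₂ ^ (1 / K))
    (hfin : ∃ N : ℕ, LDimLE X N) (n : ℕ) (hY : DimLE Y n) :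
    LDimLE X n := by
  obtain ⟨lam, K, R₀, hlam, hK, hR₀, hqs⟩ := hlqs
  obtain ⟨N, hN⟩ := hfin
  by_cases hNn : N ≤ n
  · exact ldimle_mono hN hNn
  · have hYc := dimle_colored hY
    have hstep : ∀ m : ℕ, n + 1 ≤ m → ColCov X (m + 1) → ColCov X m :=
      fun m hm h => colcov_reduce hlam hK hR₀ hqs hYc hm h
    have hdown : ∀ d : ℕ, ColCov X (n + 1 + d) → ColCov X (n + 1) := by
      intro d
      induction d with
      | zero => exact id
      | succ d ih => exact fun h => ih (hstep (n + 1 + d) (by omega) h)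
    have hcc : ColCov X (N + 1) := ldimle_colcov hN
    have hNd : N + 1 = n + 1 + (N - n) := by omega
    exact colcov_ldimle (hdown (N - n) (hNd ▸ hcc))
end
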